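/- arXiv:2312.17406 — 9 statements merged into one kernel-verified Lean document; each statement's English description precedes it below -/
import Mathlib

section
/- For every σ > 0, every z = (z_2,…,z_d) ∈ ℝ^{d−1}, and every function f : ℝ^{d−1} → ℝ that is twice differentiable at z, the following exact operator identity holds: σ^{-1} [ (1/2) ∑_{i,j=2}^d d_{ij}(x(σ,z)) σ² ∂²f/∂z_i∂z_j(z) + ∑_{i=2}^d (μ_i(x(σ,z)) + s_i^{(σ)}(x(σ,z))) σ ∂f/∂z_i(z) ] = L̃_0 f(z) + σ^{-1} L̃_1 f(z) + σ^{-2} L̃_2 f(z), where x(σ,z) ∈ ℝ^d has first coordinate x_1 = 1 − σ^{-1}∑_{i=2}^d z_i and coordinates x_i = σ^{-1} z_i for i = 2,…,d, and where L̃_0 f(z) = (1/2)∑_{i=2}^d z_i ∂²f/∂z_i²(z) + ∑_{i=2}^d (1/2)(θ P_{1i} − z_i) ∂f/∂z_i(z); L̃_1 f(z) = −(1/2)∑_{i,j=2}^d z_i z_j ∂²f/∂z_i∂z_j(z) + ∑_{i=2}^d [ (θ/2)∑_{j=2}^d (P_{ji} − P_{1i}) z_j + (z_i/2)(−θ + σ_i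 + ∑_{j=2}^d z_j) ] ∂f/∂z_i(z); L̃_2 f(z) = −∑_{i=2}^d (1/2)(∑_{j=2}^d σ_j z_j) z_i ∂f/∂z_i(z). (This is the exact decomposition of the space–time rescaled Wright–Fisher generator whose leading term L̃_0 is the generator of the limiting CBI process.) -/
open Finset

noncomputable section

/-- Partial derivative `∂f/∂z_i(z)` of `f : ℝ^d → ℝ`. -/
def pd {d : ℕ} (f : (Fin d → ℝ) → ℝ) (z : Fin d → ℝ) (i : Fin d) : ℝ :=
  fderiv ℝ f z (Pi.single i 1)

/-- Second partial derivative `∂²f/∂z_i∂z_j(z)` of `f : ℝ^d → ℝ`. -/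
def pd2 {d : ℕ} (f : (Fin d → ℝ) → ℝ) (z : Fin d → ℝ) (i j : Fin d) : ℝ :=
  fderiv ℝ (fun y => fderiv ℝ f y (Pi.single j 1)) z (Pi.single i 1)

/-- **Exact decomposition of the space–time rescaled Wright–Fisher generator**
(proof of Proposition 2.1(c)): for every `σ > 0`, every `z` and every `f` twice
differentiable at `z`,
`σ^{-1}[ (1/2)∑_{i,j=2}^d d_{ij}(x(σ,z)) σ² ∂²f/∂z_i∂z_j(z)
+ ∑_{i=2}^d (μ_i(x(σ,z)) + s_i^{(σ)}(x(σ,z))) σ ∂f/∂z_i(z) ]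
= L̃₀f(z) + σ^{-1} L̃₁f(z) + σ^{-2} L̃₂f(z)`,
where `x(σ,z)` has first coordinate `1 - σ^{-1}∑_{i=2}^d z_i` and coordinates
`σ^{-1}z_i` for `i = 2,…,d`, and `L̃₀, L̃₁, L̃₂` are as displayed.
(Allele `1` is represented by the index `0 : Fin (d+2)`; the variables `z_2,…,z_d`
are the coordinates `z i`, `i ≠ 0`, of `z : Fin (d+2) → ℝ`; `σ_1 = σ` and the
selection parameters of the unfit alleles are `σs i`, `i ≠ 0`.) -/
theorem generator_CBI_decomposition {d : ℕ} (θ : ℝ) (hθ : 0 < θ)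
    (P : Fin (d + 2) → Fin (d + 2) → ℝ)
    (hPnonneg : ∀ i j, 0 ≤ P i j) (hProw : ∀ i, ∑ j, P i j = 1)
    (σs : Fin (d + 2) → ℝ) (σ : ℝ) (hσ : 0 < σ)
    (z : Fin (d + 2) → ℝ)
    (f : (Fin (d + 2) → ℝ) → ℝ) (hf : ContDiffAt ℝ 2 f z)
    (x : Fin (d + 2) → ℝ)
    (hx0 : x 0 = 1 - σ⁻¹ * ∑ i ∈ univ.erase 0, z i)
    (hxi : ∀ i : Fin (d + 2), i ≠ 0 → x i = σ⁻¹ * z i) :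
    σ⁻¹ *
      ((1 / 2) * (∑ i ∈ univ.erase 0, ∑ j ∈ univ.erase 0,
          (x i * ((if i = j then (1 : ℝ) else 0) - x j)) * σ ^ 2 * pd2 f z i j)
        + ∑ i ∈ univ.erase 0,
            (θ / 2 * ((∑ j, P j i * x j) - x i)
              + x i / 2
                  * ((if i = 0 then σ else σs i)
                      - ∑ j, (if j = 0 then σ else σs j) * x j)) * σ * pd f z i)
    =
    -- L̃₀ f (z)
    ((1 / 2) * (∑ i ∈ univ.erase 0, z i * pd2 f z i i)
      + ∑ i ∈ univ.erase 0, (1 / 2) * (θ * P 0 i - z i) * pd f z i)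
    + σ⁻¹ *
      -- L̃₁ f (z)
      (- (1 / 2) * (∑ i ∈ univ.erase 0, ∑ j ∈ univ.erase 0,
            z i * z j * pd2 f z i j)
        + ∑ i ∈ univ.erase 0,
            (θ / 2 * (∑ j ∈ univ.erase 0, (P j i - P 0 i) * z j)
              + z i / 2 * (- θ + σs i + ∑ j ∈ univ.erase 0, z j)) * pd f z i)
    + (σ ^ 2)⁻¹ *
      -- L̃₂ f (z)
      (- ∑ i ∈ univ.erase 0,
          (1 / 2) * (∑ j ∈ univ.erase 0, σs j * z j) * z i * pd f z i) := by

  have hσ' : σ ≠ 0 := ne_of_gt hσ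
  set e := (univ : Finset (Fin (d+2))).erase 0 with he
  -- termwise identity
  have key : ∀ i ∈ e,
      σ⁻¹ * ((1/2) * ∑ j ∈ e, (x i * ((if i = j then (1:ℝ) else 0) - x j)) * σ^2 * pd2 f z i j
        + (θ / 2 * ((∑ j, P j i * x j) - x i)
            + x i / 2 * ((if i = 0 then σ else σs i)
                - ∑ j, (if j = 0 then σ else σs j) * x j)) * σ * pd f z i)
      = ((1/2) * (z i * pd2 f z i i) + (1/2) * (θ * P 0 i - z i) * pd f z i)
        + σ⁻¹ * (-(1/2) * ∑ j ∈ e, z i * z j * pd2 f z i j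
            + (θ/2 * (∑ j ∈ e, (P j i - P 0 i) * z j)
                + z i / 2 * (-θ + σs i + ∑ j ∈ e, z j)) * pd f z i)
        + (σ^2)⁻¹ * (-((1/2) * (∑ j ∈ e, σs j * z j) * z i * pd f z i)) := by
    intro i hi
    have hi0 : i ≠ 0 := Finset.ne_of_mem_erase hi
    -- diffusion sum
    have hdiag : ∑ j ∈ e, (x i * ((if i = j then (1:ℝ) else 0) - x j)) * σ^2 * pd2 f z i j
        = σ * (z i * pd2 f z i i) - ∑ j ∈ e, z i * z j * pd2 f z i j := by
      have h1 : ∀ j ∈ e, (x i * ((if i = j then (1:ℝ) else 0) - x j)) * σ^2 * pd2 f z i j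
          = (if i = j then σ * (z i * pd2 f z i j) else 0) - z i * z j * pd2 f z i j := by
        intro j hj
        rw [hxi i hi0, hxi j (Finset.ne_of_mem_erase hj)]
        by_cases h : i = j
        · subst h; simp only [if_pos rfl]; field_simp; rw [if_pos trivial, if_pos trivial]; ring
        · simp only [if_neg h]; field_simp; ring
      rw [Finset.sum_congr rfl h1, Finset.sum_sub_distrib, Finset.sum_ite_eq, if_pos hi]
    -- mutation sum
    have hP : ∑ j, P j i * x j
        = P 0 i * (1 - σ⁻¹ * ∑ j ∈ e, z j) + σ⁻¹ * ∑ j ∈ e, P j i * z j := by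
      rw [← Finset.add_sum_erase univ (fun j => P j i * x j) (Finset.mem_univ 0), hx0]
      congr 1
      rw [Finset.mul_sum]
      refine Finset.sum_congr rfl fun j hj => ?_
      rw [hxi j (Finset.ne_of_mem_erase hj)]; ring
    -- selection sum
    have hσs : ∑ j, (if j = 0 then σ else σs j) * x j
        = σ * (1 - σ⁻¹ * ∑ j ∈ e, z j) + σ⁻¹ * ∑ j ∈ e, σs j * z j := by
      rw [← Finset.add_sum_erase univ (fun j => (if j = 0 then σ else σs j) * x j)
        (Finset.mem_univ 0), hx0]
      simp only [if_pos rfl]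
      congr 1
      rw [Finset.mul_sum]
      refine Finset.sum_congr rfl fun j hj => ?_
      rw [hxi j (Finset.ne_of_mem_erase hj), if_neg (Finset.ne_of_mem_erase hj)]; ring
    have hPsub : ∑ j ∈ e, (P j i - P 0 i) * z j
        = (∑ j ∈ e, P j i * z j) - P 0 i * ∑ j ∈ e, z j := by
      rw [Finset.mul_sum, ← Finset.sum_sub_distrib]
      exact Finset.sum_congr rfl fun j _ => by ring
    rw [hdiag, hP, hσs, hPsub, hxi i hi0, if_neg hi0]
    field_simp
    ring
  -- rearrange both sides as a single sum over i and conclude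
  have hL : σ⁻¹ *
      ((1 / 2) * (∑ i ∈ e, ∑ j ∈ e,
          (x i * ((if i = j then (1 : ℝ) else 0) - x j)) * σ ^ 2 * pd2 f z i j)
        + ∑ i ∈ e,
            (θ / 2 * ((∑ j, P j i * x j) - x i)
              + x i / 2
                  * ((if i = 0 then σ else σs i)
                      - ∑ j, (if j = 0 then σ else σs j) * x j)) * σ * pd f z i)
      = ∑ i ∈ e,
          σ⁻¹ * ((1/2) * ∑ j ∈ e, (x i * ((if i = j then (1:ℝ) else 0) - x j)) * σ^2 * pd2 f z i j
            + (θ / 2 * ((∑ j, P j i * x j) - x i)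
                + x i / 2 * ((if i = 0 then σ else σs i)
                    - ∑ j, (if j = 0 then σ else σs j) * x j)) * σ * pd f z i) := by
    rw [Finset.mul_sum (f := fun i => ∑ j ∈ e,
        (x i * ((if i = j then (1 : ℝ) else 0) - x j)) * σ ^ 2 * pd2 f z i j),
      ← Finset.sum_add_distrib, Finset.mul_sum]
  rw [hL, Finset.sum_congr rfl key]
  simp only [Finset.sum_add_distrib, ← Finset.mul_sum, Finset.sum_neg_distrib]
end
end

section
/- Fix an integer d ≥ 2, θ > 0, and reals P_{12},…,P_{1d} > 0. Let Z_2,…,Z_d be independent random variables where Z_i has the Gamma distribution with shape θP_{1i} and rate 1 (density x^{θP_{1i}−1}e^{−x}/Γ(θP_{1i}) on (0,∞)). Then for every n ∈ ℕ^d and every σ > 0, E[ (1 − σ^{-1}∑_{i=2}^d Z_i)^{n_1} ∏_{i=2}^d (σ^{-1} Z_i)^{n_i} ] = σ^{−(‖n‖−n_1)} ∑_{k=0}^{n_1} σ^{−k} γ_k(n), where ‖n‖ = n_1+⋯+n_d and γ_k(n) = (−1)^k ∑_{k_2+⋯+k_d = k, k_i ∈ ℕ} ( n_1! / ((n_1−k)!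 k_2! ⋯ k_d!) ) ∏_{i=2}^d Γ(θP_{1i} + n_i + k_i)/Γ(θP_{1i}). -/
open Finset MeasureTheory ProbabilityTheory
open scoped ENNReal NNReal

noncomputable section

namespace GASaux

open Real Set

lemma aux_pdf_eq (a : ℝ) (ha : 0 < a) (m : ℕ) :
    Set.EqOn (fun x : ℝ => x ^ m * gammaPDFReal a 1 x)
      (fun x : ℝ => (Real.Gamma a)⁻¹ * (Real.exp (-x) * x ^ (a + m - 1))) (Set.Ioi 0) := by
  intro x hx
  have hx0 : (0:ℝ) < x := hx
  simp only [gammaPDFReal, if_pos hx0.le, Real.one_rpow, one_mul]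
  rw [← Real.rpow_natCast x m]
  rw [show a - 1 = (a + m - 1) - m by ring, Real.rpow_sub hx0, Real.rpow_natCast]
  field_simp [Real.Gamma_pos_of_pos ha |>.ne', pow_ne_zero, hx0.ne']

lemma gamma_pow_integrable (a : ℝ) (ha : 0 < a) (m : ℕ) :
    Integrable (fun x : ℝ => x ^ m) (gammaMeasure a 1) := by
  have hmeas : Measurable (gammaPDF a 1) := (measurable_gammaPDFReal a 1).ennreal_ofReal
  rw [gammaMeasure, integrable_withDensity_iff hmeas (ae_of_all _ fun x => ENNReal.ofReal_lt_top)]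
  have heq : (fun x : ℝ => x ^ m * (gammaPDF a 1 x).toReal)
      = fun x => x ^ m * gammaPDFReal a 1 x := by
    funext x
    rw [gammaPDF, ENNReal.toReal_ofReal (gammaPDFReal_nonneg ha one_pos x)]
  rw [heq, ← integrableOn_univ, ← Set.Iio_union_Ici (a := (0:ℝ)), integrableOn_union]
  constructor
  · refine (integrableOn_congr_fun (g := fun _ => 0) ?_ measurableSet_Iio).mpr
      (integrableOn_zero)
    intro x hx
    simp only [gammaPDFReal, if_neg (not_le.mpr (Set.mem_Iio.mp hx)), mul_zero]
  · rw [integrableOn_Ici_iff_integrableOn_Ioi]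
    refine (integrableOn_congr_fun (aux_pdf_eq a ha m) measurableSet_Ioi).mpr ?_
    exact (Real.GammaIntegral_convergent (by positivity : (0:ℝ) < a + m)).const_mul _

lemma gamma_pow_integral (a : ℝ) (ha : 0 < a) (m : ℕ) :
    ∫ x, x ^ m ∂gammaMeasure a 1 = Real.Gamma (a + m) / Real.Gamma a := by
  have hmeas : Measurable (fun x => (gammaPDFReal a 1 x).toNNReal) :=
    (measurable_gammaPDFReal a 1).real_toNNReal
  have h1 : gammaMeasure a 1
      = volume.withDensity (fun x => ((gammaPDFReal a 1 x).toNNReal : ℝ≥0∞)) := rfl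
  rw [h1, integral_withDensity_eq_integral_smul hmeas]
  have heq : (fun x : ℝ => (gammaPDFReal a 1 x).toNNReal • x ^ m)
      = fun x => x ^ m * gammaPDFReal a 1 x := by
    funext x
    rw [NNReal.smul_def, smul_eq_mul, Real.coe_toNNReal _ (gammaPDFReal_nonneg ha one_pos x),
      mul_comm]
  rw [heq]
  have hint : Integrable (fun x : ℝ => x ^ m * gammaPDFReal a 1 x) := by
    have := gamma_pow_integrable a ha m
    have hmeas2 : Measurable (gammaPDF a 1) := (measurable_gammaPDFReal a 1).ennreal_ofReal
    rw [gammaMeasure, integrable_withDensity_iff hmeas2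
      (ae_of_all _ fun x => ENNReal.ofReal_lt_top)] at this
    convert this using 2 with x
    · rfl
    rw [gammaPDF, ENNReal.toReal_ofReal (gammaPDFReal_nonneg ha one_pos x)]
  rw [← setIntegral_univ, ← Set.Iio_union_Ici (a := (0:ℝ)),
    setIntegral_union (Set.Iio_disjoint_Ici le_rfl) measurableSet_Ici
      hint.integrableOn hint.integrableOn]
  have hz : ∫ x in Set.Iio (0:ℝ), x ^ m * gammaPDFReal a 1 x = 0 := by
    rw [setIntegral_congr_fun measurableSet_Iio (g := fun _ => 0), integral_zero]
    intro x hx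
    simp only [gammaPDFReal, if_neg (not_le.mpr (Set.mem_Iio.mp hx)), mul_zero]
  rw [hz, zero_add, integral_Ici_eq_integral_Ioi,
    setIntegral_congr_fun measurableSet_Ioi (aux_pdf_eq a ha m), integral_const_mul,
    ← Real.Gamma_eq_integral (by positivity : (0:ℝ) < a + m), inv_mul_eq_div]

/-- Type alias carrying a custom measure, to apply Fubini lemmas stated for `volume`. -/
def T {ι : Type*} (μ : ι → Measure ℝ) (i : ι) : Type := ℝ

noncomputable instance {ι : Type*} (μ : ι → Measure ℝ) (i : ι) : MeasureSpace (T μ i) :=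
  { toMeasurableSpace := (inferInstance : MeasurableSpace ℝ), volume := μ i }

instance {ι : Type*} (μ : ι → Measure ℝ) (i : ι) [hs : SigmaFinite (μ i)] :
    SigmaFinite (volume : Measure (T μ i)) := hs

lemma pi_integral_prod {ι : Type*} [Fintype ι] (μ : ι → Measure ℝ)
    [∀ i, SigmaFinite (μ i)] (f : ι → ℝ → ℝ) :
    ∫ Z : ι → ℝ, ∏ i, f i (Z i) ∂Measure.pi μ = ∏ i, ∫ x, f i x ∂(μ i) :=
  MeasureTheory.integral_fintype_prod_eq_prod f

lemma pi_integrable_prod {ι : Type*} [Fintype ι] (μ : ι → Measure ℝ)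
    [∀ i, SigmaFinite (μ i)] (f : ι → ℝ → ℝ) (hf : ∀ i, Integrable (f i) (μ i)) :
    Integrable (fun Z : ι → ℝ => ∏ i, f i (Z i)) (Measure.pi μ) :=
  MeasureTheory.Integrable.fintype_prod_dep hf


lemma coeff_eq {ι : Type*} [Fintype ι] (m k : ℕ) (hkm : k ≤ m) (κ : ι → ℕ)
    (hκ : ∑ i, κ i = k) :
    (m.choose k : ℝ) * (Nat.multinomial univ κ : ℝ)
      = (m.factorial : ℝ) / ((m - k).factorial * ∏ i, ((κ i).factorial : ℝ)) := by
  have h1 : Nat.multinomial univ κ * ∏ i, (κ i).factorial = k.factorial := by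
    rw [mul_comm, Nat.multinomial_spec, hκ]
  have h2 : (Nat.multinomial univ κ : ℝ) * ∏ i, ((κ i).factorial : ℝ) = (k.factorial : ℝ) := by
    exact_mod_cast h1
  have hk0 : ((k.factorial : ℝ)) ≠ 0 := Nat.cast_ne_zero.mpr k.factorial_ne_zero
  have hmk0 : (((m - k).factorial : ℝ)) ≠ 0 := Nat.cast_ne_zero.mpr (m - k).factorial_ne_zero
  have hp0 : (∏ i, ((κ i).factorial : ℝ)) ≠ 0 := by
    refine Finset.prod_ne_zero_iff.mpr fun i _ => Nat.cast_ne_zero.mpr (κ i).factorial_ne_zero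
  rw [Nat.cast_choose ℝ hkm, div_mul_eq_mul_div,
    div_eq_div_iff (mul_ne_zero hk0 hmk0) (mul_ne_zero hmk0 hp0)]
  linear_combination ((m.factorial : ℝ) * ((m - k).factorial : ℝ)) * h2

end GASaux

/-- **Proposition 4.1 (Gamma approximation of the sampling probability)**: if
`Z_2,…,Z_d` are independent with `Z_i ∼ Gamma(θP_{1i},1)` (realised as the product
measure of the Gamma distributions), then for every `n ∈ ℕ^d` and `σ > 0`,
`E[(1-σ^{-1}∑_{i=2}^d Z_i)^{n_1} ∏_{i=2}^d (σ^{-1}Z_i)^{n_i}]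
= σ^{-(‖n‖-n_1)} ∑_{k=0}^{n_1} σ^{-k} γ_k(n)` with
`γ_k(n) = (-1)^k ∑_{k_2+⋯+k_d=k} (n_1!/((n_1-k)! k_2!⋯k_d!))
∏_{i=2}^d Γ(θP_{1i}+n_i+k_i)/Γ(θP_{1i})`.
(Allele `1` is represented by the index `0 : Fin (d+2)`; the unfit alleles are indexed
by `{i : Fin (d+2) // i ≠ 0}`.) -/
theorem gamma_approximation_sampling {d : ℕ} (θ : ℝ) (hθ : 0 < θ)
    (P1 : Fin (d + 2) → ℝ) (hP1 : ∀ i : Fin (d + 2), i ≠ 0 → 0 < P1 i)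
    (n : Fin (d + 2) → ℕ) (σ : ℝ) (hσ : 0 < σ) :
    (∫ Z : {i : Fin (d + 2) // i ≠ 0} → ℝ,
        (1 - σ⁻¹ * ∑ i, Z i) ^ (n 0) * ∏ i, (σ⁻¹ * Z i) ^ (n i.1)
      ∂(Measure.pi fun i => gammaMeasure (θ * P1 i.1) 1))
    = (σ ^ (∑ i : {i : Fin (d + 2) // i ≠ 0}, n i.1))⁻¹ *
        ∑ k ∈ range (n 0 + 1), (σ ^ k)⁻¹ *
          ((-1 : ℝ) ^ k *
            ∑ κ ∈ (Fintype.piFinset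
                fun _ : {i : Fin (d + 2) // i ≠ 0} => range (k + 1)).filter
                  (fun κ => ∑ i, κ i = k),
              ((Nat.factorial (n 0) : ℝ)
                  / ((Nat.factorial (n 0 - k) : ℝ) * ∏ i, (Nat.factorial (κ i) : ℝ)))
                * ∏ i, Real.Gamma (θ * P1 i.1 + n i.1 + κ i)
                    / Real.Gamma (θ * P1 i.1)) := by
  set ι := {i : Fin (d + 2) // i ≠ 0}
  set a : ι → ℝ := fun i => θ * P1 i.1 with ha_def
  have ha : ∀ i : ι, 0 < a i := fun i => mul_pos hθ (hP1 i.1 i.2)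
  set gm : ι → Measure ℝ := fun i => gammaMeasure (a i) 1 with hgm_def
  haveI : ∀ i, IsProbabilityMeasure (gm i) := fun i => isProbabilityMeasure_gammaMeasure (ha i) one_pos
  haveI hsf : ∀ i, SigmaFinite (gm i) := fun i => inferInstance
  set m := n 0 with hm_def
  set S := ∑ i : ι, n i.1 with hS_def
  -- coefficient
  set c : ℕ → (ι → ℕ) → ℝ := fun k κ =>
    (σ ^ S)⁻¹ * (σ ^ k)⁻¹ * (-1) ^ k * (m.choose k : ℝ) * (Nat.multinomial univ κ : ℝ)
    with hc_def
  -- index sets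
  have hidx : ∀ k : ℕ, (Fintype.piFinset fun _ : ι => range (k + 1)).filter
      (fun κ => ∑ i, κ i = k) = piAntidiag (univ : Finset ι) k := by
    intro k
    ext κ
    simp only [mem_filter, Fintype.mem_piFinset, mem_range, mem_piAntidiag, mem_univ,
      implies_true, and_true, ne_eq]
    constructor
    · rintro ⟨_, h2⟩; exact h2
    · intro h1
      refine ⟨fun i => Nat.lt_succ_of_le ?_, h1⟩
      exact h1 ▸ Finset.single_le_sum (fun j _ => Nat.zero_le _) (mem_univ i)
  -- pointwise expansion
  have hpt : ∀ Z : ι → ℝ,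
      (1 - σ⁻¹ * ∑ i, Z i) ^ m * ∏ i, (σ⁻¹ * Z i) ^ (n i.1)
      = ∑ k ∈ range (m + 1), ∑ κ ∈ piAntidiag (univ : Finset ι) k,
          c k κ * ∏ i, Z i ^ (n i.1 + κ i) := by
    intro Z
    have e1 : (1 - σ⁻¹ * ∑ i, Z i) = (-(σ⁻¹ * ∑ i, Z i)) + 1 := by ring
    have eP : ∏ i, (σ⁻¹ * Z i) ^ (n i.1) = (σ ^ S)⁻¹ * ∏ i, Z i ^ (n i.1) := by
      simp_rw [mul_pow]
      rw [Finset.prod_mul_distrib, Finset.prod_pow_eq_pow_sum, ← hS_def, inv_pow]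
    rw [e1, add_pow, Finset.sum_mul]
    refine Finset.sum_congr rfl fun k hk => ?_
    rw [show (-(σ⁻¹ * ∑ i, Z i)) ^ k = (-1)^k * (σ⁻¹)^k * (∑ i, Z i)^k by
      rw [neg_pow, mul_pow]; ring]
    rw [Finset.sum_pow_eq_sum_piAntidiag (univ : Finset ι) Z k, eP]
    rw [Finset.mul_sum, Finset.sum_mul, Finset.sum_mul, Finset.sum_mul]
    refine Finset.sum_congr rfl fun κ hκ => ?_
    have hprod : (∏ i, Z i ^ κ i) * ∏ i, Z i ^ (n i.1)
        = ∏ i, Z i ^ (n i.1 + κ i) := by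
      rw [← Finset.prod_mul_distrib]
      exact Finset.prod_congr rfl fun i _ => by rw [← pow_add, add_comm]
    rw [hc_def, ← hprod]
    ring
  have hI : ∀ (k : ℕ) (κ : ι → ℕ),
      Integrable (fun Z : ι → ℝ => c k κ * ∏ i, Z i ^ (n i.1 + κ i)) (Measure.pi gm) :=
    fun k κ => (GASaux.pi_integrable_prod gm (fun i x => x ^ (n i.1 + κ i))
      (fun i => GASaux.gamma_pow_integrable _ (ha i) _)).const_mul _
  have hmom : ∀ e : ι → ℕ,
      (∫ Z : ι → ℝ, ∏ i, Z i ^ e i ∂Measure.pi gm)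
        = ∏ i, Real.Gamma (a i + e i) / Real.Gamma (a i) := by
    intro e
    rw [GASaux.pi_integral_prod gm (fun i x => x ^ e i)]
    exact Finset.prod_congr rfl fun i _ => GASaux.gamma_pow_integral _ (ha i) _
  have hgme : (Measure.pi fun i : ι => gammaMeasure (θ * P1 i.1) 1) = Measure.pi gm := rfl
  rw [hgme]
  have key : (∫ Z : ι → ℝ,
        (1 - σ⁻¹ * ∑ i, Z i) ^ m * ∏ i, (σ⁻¹ * Z i) ^ (n i.1) ∂Measure.pi gm)
      = ∑ k ∈ range (m + 1), ∑ κ ∈ piAntidiag (univ : Finset ι) k,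
          c k κ * ∏ i, Real.Gamma (a i + (n i.1 + κ i)) / Real.Gamma (a i) := by
    simp only [hpt]
    rw [integral_finset_sum _ (fun k _ => integrable_finset_sum _ (fun κ _ => hI k κ))]
    refine Finset.sum_congr rfl fun k hk => ?_
    rw [integral_finset_sum _ (fun κ _ => hI k κ)]
    refine Finset.sum_congr rfl fun κ hκ => ?_
    rw [integral_const_mul, hmom (fun i => n i.1 + κ i)]
    simp only [Nat.cast_add]
  rw [key, Finset.mul_sum]
  refine Finset.sum_congr rfl fun k hk => ?_
  rw [hidx k, Finset.mul_sum, Finset.mul_sum, Finset.mul_sum]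
  refine Finset.sum_congr rfl fun κ hκ => ?_
  have hkm : k ≤ m := Nat.lt_succ_iff.mp (mem_range.mp hk)
  have hsumκ : ∑ i, κ i = k := (mem_piAntidiag.mp hκ).1
  have hGam : (∏ i, Real.Gamma (a i + ((n i.1 : ℝ) + (κ i : ℝ))) / Real.Gamma (a i))
      = ∏ i : ι, Real.Gamma (θ * P1 i.1 + n i.1 + κ i) / Real.Gamma (θ * P1 i.1) := by
    refine Finset.prod_congr rfl fun i _ => ?_
    rw [show a i + ((n i.1 : ℝ) + (κ i : ℝ)) = θ * P1 i.1 + n i.1 + κ i by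
      simp only [ha_def]; ring]
  have hco := GASaux.coeff_eq (ι := ι) m k hkm κ hsumκ
  rw [hGam, hc_def]
  linear_combination ((σ ^ S)⁻¹ * (σ ^ k)⁻¹ * (-1 : ℝ) ^ k *
    ∏ i : ι, Real.Gamma (θ * P1 i.1 + n i.1 + κ i) / Real.Gamma (θ * P1 i.1)) * hco
end
end

section
/- Let q^{(σ)} be a family of sampling probabilities and let q̃_k (k ∈ ℕ) be a family of asymptotic-expansion coefficients for q^{(σ)}. Then for every k ∈ ℕ: q̃_k(e_1) = 1_{k=0} − 1_{k≥1} ∑_{i=2}^d q̃_{k−1}(e_i). -/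
open Finset Filter Asymptotics

noncomputable section

/-- The `i`-th standard unit vector of `ℤ^d`. -/
def stdE {d : ℕ} (i : Fin d) : Fin d → ℤ := fun j => if j = i then 1 else 0

/-- The total size `‖n‖ = n_1 + ⋯ + n_d` of a configuration. -/
def tot {d : ℕ} (n : Fin d → ℤ) : ℤ := ∑ i, n i

/-- `n ∈ ℕ^d`, i.e. all components of `n : ℤ^d` are nonnegative. -/
def IsNatVec {d : ℕ} (n : Fin d → ℤ) : Prop := ∀ i, 0 ≤ n i

/-- A family of sampling probabilities `q^{(σ)} : ℤ^d → ℝ`, indexed by `σ > 0`: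
`q^{(σ)}(0) = 1`; `q^{(σ)}(n) = 0` if `n` has a negative component; the consistency
condition `∑_i q^{(σ)}(n+e_i) = q^{(σ)}(n)` holds on `ℕ^d`; and the sampling recursion
holds on `ℕ^d ∖ {0}`.  (Allele `1` is represented by the index `0 : Fin d`.) -/
def IsSamplingFamily {d : ℕ} [NeZero d] (θ : ℝ) (P : Fin d → Fin d → ℝ)
    (q : ℝ → (Fin d → ℤ) → ℝ) : Prop :=
  (∀ σ : ℝ, 0 < σ → q σ 0 = 1) ∧
  (∀ σ : ℝ, 0 < σ → ∀ n : Fin d → ℤ, (∃ i, n i < 0) → q σ n = 0) ∧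
  (∀ σ : ℝ, 0 < σ → ∀ n : Fin d → ℤ, IsNatVec n →
    ∑ i, q σ (n + stdE i) = q σ n) ∧
  (∀ σ : ℝ, 0 < σ → ∀ n : Fin d → ℤ, IsNatVec n → n ≠ 0 →
    ((tot n : ℝ) * ((tot n : ℝ) - 1 + θ) + ((tot n : ℝ) - (n 0 : ℝ)) * σ) * q σ n =
      (∑ i, (n i : ℝ) * ((n i : ℝ) - 1) * q σ (n - stdE i))
      + (∑ i, ∑ j, (n i : ℝ) * θ * P j i * q σ (n - stdE i + stdE j))
      + σ * (tot n : ℝ) * ∑ i ∈ univ.erase 0, q σ (n + stdE i))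

/-- A family of asymptotic-expansion coefficients `q̃_k : ℤ^d → ℝ` for a family of
sampling probabilities `q^{(σ)}`:  `q̃_0(0) = 1`, `q̃_k(0) = 0` for `k ≥ 1`,
`q̃_k(n) = 0` if `n` has a negative component, and for every `n ∈ ℕ^d` and `K ∈ ℕ`,
`σ^{‖n‖-n_1} q^{(σ)}(n) - ∑_{k=0}^K q̃_k(n) σ^{-k} = O(σ^{-(K+1)})` as `σ → ∞`. -/
def IsExpansionCoeffs {d : ℕ} [NeZero d] (q : ℝ → (Fin d → ℤ) → ℝ)
    (qt : ℕ → (Fin d → ℤ) → ℝ) : Prop :=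
  qt 0 0 = 1 ∧
  (∀ k : ℕ, 1 ≤ k → qt k 0 = 0) ∧
  (∀ k : ℕ, ∀ n : Fin d → ℤ, (∃ i, n i < 0) → qt k n = 0) ∧
  (∀ n : Fin d → ℤ, IsNatVec n → ∀ K : ℕ,
    (fun σ : ℝ => σ ^ (tot n - n 0) * q σ n
        - ∑ k ∈ range (K + 1), qt k n * σ ^ (-(k : ℤ)))
      =O[atTop] fun σ : ℝ => σ ^ (-(K + 1 : ℤ)))

lemma zpowO {a b : ℤ} (h : a ≤ b) : (fun σ : ℝ => σ ^ a) =O[atTop] fun σ : ℝ => σ ^ b := by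
  refine IsBigO.of_bound 1 ?_
  filter_upwards [eventually_ge_atTop (1:ℝ)] with σ hσ
  have hσ0 : (0:ℝ) < σ := lt_of_lt_of_le one_pos hσ
  rw [Real.norm_eq_abs, Real.norm_eq_abs, abs_of_pos (zpow_pos hσ0 a),
    abs_of_pos (zpow_pos hσ0 b), one_mul]
  gcongr

lemma constz (c : ℝ) (k : ℕ)
    (h : (fun σ : ℝ => c * σ ^ (-(k:ℤ))) =O[atTop] fun σ : ℝ => σ ^ (-(k+1:ℤ))) : c = 0 := by
  have h2 := h.mul (isBigO_refl (fun σ : ℝ => σ ^ (k:ℤ)) atTop)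
  have h3 : (fun _ : ℝ => c) =O[atTop] fun σ : ℝ => σ ^ (-1:ℤ) := by
    refine h2.congr' ?_ ?_
    · filter_upwards [eventually_gt_atTop (0:ℝ)] with σ hσ
      rw [mul_assoc, ← zpow_add₀ hσ.ne', neg_add_cancel, zpow_zero, mul_one]
    · filter_upwards [eventually_gt_atTop (0:ℝ)] with σ hσ
      rw [← zpow_add₀ hσ.ne']
      norm_num
  have h4 : Tendsto (fun σ : ℝ => σ ^ (-1:ℤ)) atTop (nhds 0) := tendsto_zpow_atTop_zero (by norm_num)
  exact tendsto_nhds_unique tendsto_const_nhds (h3.trans_tendsto h4)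

lemma coeffs_unique (f : ℝ → ℝ) (a b : ℕ → ℝ)
    (ha : ∀ K : ℕ, (fun σ : ℝ => f σ - ∑ k ∈ range (K+1), a k * σ ^ (-(k:ℤ)))
      =O[atTop] fun σ : ℝ => σ ^ (-(K+1:ℤ)))
    (hb : ∀ K : ℕ, (fun σ : ℝ => f σ - ∑ k ∈ range (K+1), b k * σ ^ (-(k:ℤ)))
      =O[atTop] fun σ : ℝ => σ ^ (-(K+1:ℤ))) : ∀ k, a k = b k := by
  intro k
  induction k using Nat.strong_induction_on with
  | _ k IH =>
    have hD : (fun σ : ℝ => ∑ m ∈ range (k+1), (a m - b m) * σ ^ (-(m:ℤ)))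
        =O[atTop] fun σ : ℝ => σ ^ (-(k+1:ℤ)) := by
      have h := (hb k).sub (ha k)
      refine h.congr_left fun σ => ?_
      have hs : ∑ m ∈ range (k+1), (a m - b m) * σ ^ (-(m:ℤ))
          = (∑ m ∈ range (k+1), a m * σ ^ (-(m:ℤ)))
            - ∑ m ∈ range (k+1), b m * σ ^ (-(m:ℤ)) := by
        rw [← Finset.sum_sub_distrib]
        exact Finset.sum_congr rfl fun m _ => by ring
      rw [hs]
      ring
    have hsingle : (fun σ : ℝ => (a k - b k) * σ ^ (-(k:ℤ)))
        =O[atTop] fun σ : ℝ => σ ^ (-(k+1:ℤ)) := by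
      refine hD.congr_left fun σ => ?_
      rw [Finset.sum_range_succ, Finset.sum_eq_zero, zero_add]
      intro m hm
      rw [sub_eq_zero.2 (IH m (mem_range.1 hm)), zero_mul]
    have := constz (a k - b k) k hsingle
    linarith


/-- **Theorem 4.3(I)** (boundary, fit allele): `q̃_k(e_1) = 1_{k=0} - 1_{k≥1} ∑_{i=2}^d q̃_{k-1}(e_i)`. -/
theorem boundary_fit {d : ℕ} (θ : ℝ) (hθ : 0 < θ)
    (P : Fin (d + 2) → Fin (d + 2) → ℝ)
    (hPnonneg : ∀ i j, 0 ≤ P i j) (hProw : ∀ i, ∑ j, P i j = 1)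
    (q : ℝ → (Fin (d + 2) → ℤ) → ℝ) (qt : ℕ → (Fin (d + 2) → ℤ) → ℝ)
    (hq : IsSamplingFamily θ P q) (hqt : IsExpansionCoeffs q qt) (k : ℕ) :
    qt k (stdE 0)
      = (if k = 0 then 1 else 0)
        - (if 1 ≤ k then ∑ i ∈ univ.erase 0, qt (k - 1) (stdE i) else 0) := by
  -- basic facts
  have hstdnat : ∀ i : Fin (d+2), IsNatVec (stdE i) := by
    intro i j
    simp only [stdE]
    split <;> norm_num
  have htot : ∀ i : Fin (d+2), tot (stdE i) = 1 := by
    intro i; simp [tot, stdE]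
  -- expansion of q σ (stdE 0)
  have ha : ∀ K : ℕ, (fun σ : ℝ => q σ (stdE 0)
      - ∑ m ∈ range (K+1), qt m (stdE 0) * σ ^ (-(m:ℤ)))
      =O[atTop] fun σ : ℝ => σ ^ (-(K+1:ℤ)) := by
    intro K
    have h := hqt.2.2.2 (stdE 0) (hstdnat 0) K
    have he : tot (stdE (0 : Fin (d+2))) - stdE (0 : Fin (d+2)) 0 = 0 := by
      rw [htot 0]; simp [stdE]
    rw [he] at h
    simpa using h
  -- expansion of σ * q σ (stdE i), i ≠ 0
  have hB : ∀ i : Fin (d+2), i ≠ 0 → ∀ K : ℕ,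
      (fun σ : ℝ => σ * q σ (stdE i)
        - ∑ m ∈ range (K+1), qt m (stdE i) * σ ^ (-(m:ℤ)))
      =O[atTop] fun σ : ℝ => σ ^ (-(K+1:ℤ)) := by
    intro i hi K
    have h := hqt.2.2.2 (stdE i) (hstdnat i) K
    have he : tot (stdE i) - stdE i 0 = 1 := by
      rw [htot i]
      have : stdE i 0 = 0 := by simp [stdE]; omega
      rw [this]; ring
    rw [he] at h
    simpa using h
  -- uniform version
  have hg : ∀ i : Fin (d+2), i ≠ 0 → ∀ K : ℕ,
      (fun σ : ℝ => σ * q σ (stdE i)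
        - ∑ m ∈ range K, qt m (stdE i) * σ ^ (-(m:ℤ)))
      =O[atTop] fun σ : ℝ => σ ^ (-(K:ℤ)) := by
    intro i hi K
    match K with
    | 0 =>
      have h0 := hB i hi 0
      have hc : (fun _ : ℝ => qt 0 (stdE i) * (1:ℝ)) =O[atTop] fun σ : ℝ => σ ^ (-(0:ℕ):ℤ) := by
        simpa using (isBigO_refl (fun _ : ℝ => (1:ℝ)) atTop).const_mul_left (qt 0 (stdE i))
      have := (h0.trans (zpowO (by norm_num))).add hc
      refine this.congr_left fun σ => ?_
      simp
    | (m+1) =>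
      have h := hB i hi m
      refine h.trans (zpowO (by push_cast; omega))
  -- the target coefficient sequence
  set b : ℕ → ℝ := fun k => (if k = 0 then 1 else 0)
      - (if 1 ≤ k then ∑ i ∈ univ.erase 0, qt (k - 1) (stdE i) else 0) with hbdef
  have hb : ∀ K : ℕ, (fun σ : ℝ => q σ (stdE 0)
      - ∑ m ∈ range (K+1), b m * σ ^ (-(m:ℤ)))
      =O[atTop] fun σ : ℝ => σ ^ (-(K+1:ℤ)) := by
    intro K
    have hbig : (fun σ : ℝ => ∑ i ∈ univ.erase (0 : Fin (d+2)),
        (-(σ ^ (-1:ℤ)) * (σ * q σ (stdE i) - ∑ m ∈ range K, qt m (stdE i) * σ ^ (-(m:ℤ)))))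
        =O[atTop] fun σ : ℝ => σ ^ (-(K+1:ℤ)) := by
      refine IsBigO.fun_sum ?_
      intro i hi
      have h1 : (fun σ : ℝ => -(σ ^ (-1:ℤ))) =O[atTop] fun σ : ℝ => σ ^ (-1:ℤ) :=
        (isBigO_refl _ _).neg_left
      have h2 := hg i (Finset.ne_of_mem_erase hi) K
      have h3 := h1.mul h2
      refine h3.congr' EventuallyEq.rfl ?_
      filter_upwards [eventually_gt_atTop (0:ℝ)] with σ hσ
      rw [← zpow_add₀ hσ.ne']
      congr 1
      push_cast
      ring
    refine EventuallyEq.trans_isBigO ?_ hbig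
    filter_upwards [eventually_gt_atTop (0:ℝ)] with σ hσ
    have hσ0 : σ ≠ 0 := hσ.ne'
    -- consistency at 0
    have hcons := hq.2.2.1 σ hσ 0 (fun i => le_refl 0)
    rw [hq.1 σ hσ] at hcons
    simp only [zero_add] at hcons
    have hq0 : q σ (stdE (0 : Fin (d+2))) = 1 - ∑ i ∈ univ.erase 0, q σ (stdE i) := by
      have := Finset.add_sum_erase univ (fun i => q σ (stdE i)) (mem_univ (0 : Fin (d+2)))
      rw [hcons] at this
      linarith
    -- rewrite each summand on the RHS
    have hterm : ∀ i : Fin (d+2),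
        -(σ ^ (-1:ℤ)) * (σ * q σ (stdE i) - ∑ m ∈ range K, qt m (stdE i) * σ ^ (-(m:ℤ)))
        = -q σ (stdE i) + ∑ m ∈ range K, qt m (stdE i) * σ ^ (-((m:ℤ)+1)) := by
      intro i
      have hinv : σ ^ (-1:ℤ) * σ = 1 := by
        rw [zpow_neg_one]
        exact inv_mul_cancel₀ hσ0
      have hsum : σ ^ (-1:ℤ) * ∑ m ∈ range K, qt m (stdE i) * σ ^ (-(m:ℤ))
          = ∑ m ∈ range K, qt m (stdE i) * σ ^ (-((m:ℤ)+1)) := by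
        rw [Finset.mul_sum]
        refine Finset.sum_congr rfl fun m _ => ?_
        rw [show (-((m:ℤ)+1)) = (-1) + (-(m:ℤ)) by ring, zpow_add₀ hσ0]
        ring
      calc -(σ ^ (-1:ℤ)) * (σ * q σ (stdE i) - ∑ m ∈ range K, qt m (stdE i) * σ ^ (-(m:ℤ)))
          = -((σ ^ (-1:ℤ) * σ) * q σ (stdE i))
            + σ ^ (-1:ℤ) * ∑ m ∈ range K, qt m (stdE i) * σ ^ (-(m:ℤ)) := by ring
        _ = -q σ (stdE i) + ∑ m ∈ range K, qt m (stdE i) * σ ^ (-((m:ℤ)+1)) := by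
            rw [hinv, hsum]; ring
    have hb0 : b 0 = 1 := by simp [hbdef]
    have hbs : ∀ m : ℕ, b (m+1) = -∑ i ∈ univ.erase (0 : Fin (d+2)), qt m (stdE i) := by
      intro m
      simp [hbdef]
    have hR : ∑ i ∈ univ.erase (0 : Fin (d+2)),
        (-(σ ^ (-1:ℤ)) * (σ * q σ (stdE i) - ∑ m ∈ range K, qt m (stdE i) * σ ^ (-(m:ℤ))))
        = -(∑ i ∈ univ.erase (0 : Fin (d+2)), q σ (stdE i))
          + ∑ m ∈ range K, ∑ i ∈ univ.erase (0 : Fin (d+2)),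
              qt m (stdE i) * σ ^ (-((m:ℤ)+1)) := by
      calc ∑ i ∈ univ.erase (0 : Fin (d+2)),
            (-(σ ^ (-1:ℤ)) * (σ * q σ (stdE i) - ∑ m ∈ range K, qt m (stdE i) * σ ^ (-(m:ℤ))))
          = ∑ i ∈ univ.erase (0 : Fin (d+2)),
            (-q σ (stdE i) + ∑ m ∈ range K, qt m (stdE i) * σ ^ (-((m:ℤ)+1))) :=
            Finset.sum_congr rfl fun i _ => hterm i
        _ = (∑ i ∈ univ.erase (0 : Fin (d+2)), -q σ (stdE i))
            + ∑ i ∈ univ.erase (0 : Fin (d+2)), ∑ m ∈ range K,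
                qt m (stdE i) * σ ^ (-((m:ℤ)+1)) := Finset.sum_add_distrib
        _ = -(∑ i ∈ univ.erase (0 : Fin (d+2)), q σ (stdE i))
            + ∑ m ∈ range K, ∑ i ∈ univ.erase (0 : Fin (d+2)),
                qt m (stdE i) * σ ^ (-((m:ℤ)+1)) := by
            rw [Finset.sum_neg_distrib, Finset.sum_comm]
    have hL : ∑ m ∈ range (K+1), b m * σ ^ (-(m:ℤ))
        = 1 - ∑ m ∈ range K, ∑ i ∈ univ.erase (0 : Fin (d+2)),
            qt m (stdE i) * σ ^ (-((m:ℤ)+1)) := by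
      rw [Finset.sum_range_succ']
      have hterm2 : ∀ m ∈ range K, b (m+1) * σ ^ (-((m+1:ℕ):ℤ))
          = -(∑ i ∈ univ.erase (0 : Fin (d+2)), qt m (stdE i) * σ ^ (-((m:ℤ)+1))) := by
        intro m _
        rw [hbs m, neg_mul, Finset.sum_mul]
        norm_cast
      have h0 : b 0 * σ ^ (-(0:ℕ):ℤ) = 1 := by rw [hb0]; norm_num
      rw [Finset.sum_congr rfl hterm2, Finset.sum_neg_distrib, h0]
      ring
    rw [hq0, hL, hR]
    ring
  exact coeffs_unique (fun σ => q σ (stdE 0)) (fun m => qt m (stdE 0)) b ha hb k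
end
end

section
/- Let q^{(σ)} be a family of sampling probabilities and let q̃_k (k ∈ ℕ) be a family of asymptotic-expansion coefficients for q^{(σ)}. Then for every k ∈ ℕ and every i = 2,…,d: q̃_k(e_i) = 1_{k=0} θ P_{1i} + 1_{k≥1} [ −θ ∑_{j=2}^d (δ_{ij} + P_{1i} − P_{ji}) q̃_{k−1}(e_j) + ∑_{j=2}^d q̃_{k−1}(e_i + e_j) ], where δ_{ij} is the Kronecker delta. -/
open Finset Filter Asymptotics

noncomputable section

-- ===== auxiliary lemmas =====

lemma tot_stdE' {d : ℕ} [NeZero d] (i : Fin d) : tot (stdE i) = 1 := by simp [tot, stdE]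

lemma natVec_stdE' {d : ℕ} (i : Fin d) : IsNatVec (stdE i) := by
  intro j; unfold stdE; split <;> norm_num

lemma tot_add' {d : ℕ} (n m : Fin d → ℤ) : tot (n + m) = tot n + tot m := by
  simp [tot, Finset.sum_add_distrib]

lemma stdE_ne_zero' {d : ℕ} (i : Fin d) : stdE i ≠ 0 := by
  intro h
  have := congrFun h i
  simp [stdE] at this

/-- uniqueness of asymptotic-expansion coefficients -/
lemma coeff_unique' : ∀ m : ℕ, ∀ c : ℕ → ℝ,
    ((fun σ : ℝ => ∑ k ∈ Finset.range m, c k * σ ^ (-(k:ℤ))) =O[atTop]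
      fun σ : ℝ => σ ^ (-(m:ℤ))) → ∀ k < m, c k = 0 := by
  intro m
  induction m with
  | zero => intro _ _ k hk; omega
  | succ m ih =>
    intro c h
    have hc0 : c 0 = 0 := by
      have hlim0 : Tendsto (fun σ : ℝ => ∑ k ∈ Finset.range (m+1), c k * σ ^ (-(k:ℤ)))
          atTop (nhds 0) := h.trans_tendsto (tendsto_zpow_atTop_zero (by omega))
      have hlimc : Tendsto (fun σ : ℝ => ∑ k ∈ Finset.range (m+1), c k * σ ^ (-(k:ℤ)))
          atTop (nhds (∑ k ∈ Finset.range (m+1), if k = 0 then c 0 else 0)) := by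
        apply tendsto_finset_sum
        intro k _
        rcases Nat.eq_zero_or_pos k with hk0 | hk0
        · subst hk0; simpa using tendsto_const_nhds
        · have h1 : Tendsto (fun σ : ℝ => σ ^ (-(k:ℤ))) atTop (nhds 0) :=
            tendsto_zpow_atTop_zero (by omega)
          have h2 := h1.const_mul (c k)
          rw [if_neg hk0.ne']
          simpa using h2
      have := tendsto_nhds_unique hlimc hlim0
      simpa using this
    have hshift : (fun σ : ℝ => ∑ k ∈ Finset.range m, c (k+1) * σ ^ (-(k:ℤ))) =O[atTop]
        fun σ : ℝ => σ ^ (-(m:ℤ)) := by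
      have hmul := h.mul (isBigO_refl (fun σ : ℝ => σ) atTop)
      apply hmul.congr' ?_ ?_
      · filter_upwards [eventually_gt_atTop (0:ℝ)] with σ hσ
        have hz : ∀ t : ℤ, σ ^ t * σ = σ ^ (t+1) := fun t => by
          rw [zpow_add₀ hσ.ne', zpow_one]
        rw [Finset.sum_range_succ' (fun k => c k * σ ^ (-(k:ℤ))), hc0]
        simp only [zero_mul, add_zero, Finset.sum_mul]
        apply Finset.sum_congr rfl
        intro k _
        rw [mul_assoc, hz]
        congr 2
        push_cast; ring
      · filter_upwards [eventually_gt_atTop (0:ℝ)] with σ hσ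
        have hz : ∀ t : ℤ, σ ^ t * σ = σ ^ (t+1) := fun t => by
          rw [zpow_add₀ hσ.ne', zpow_one]
        rw [hz]
        congr 1
        push_cast; ring
    intro k hk
    rcases Nat.eq_zero_or_pos k with hk0 | hkpos
    · subst hk0; exact hc0
    · obtain ⟨k', rfl⟩ : ∃ k', k = k' + 1 := ⟨k - 1, by omega⟩
      exact ih (fun k => c (k+1)) hshift k' (by omega)

/-- the exact functional identity at `n = e_i`, `i ≠ 0`. -/
lemma exact_identity' {d : ℕ} (θ : ℝ) (P : Fin (d + 2) → Fin (d + 2) → ℝ)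
    (q : ℝ → (Fin (d + 2) → ℤ) → ℝ)
    (hq1 : ∀ σ : ℝ, 0 < σ → q σ 0 = 1)
    (hqcons : ∀ σ : ℝ, 0 < σ → ∀ n : Fin (d+2) → ℤ, IsNatVec n →
      ∑ j, q σ (n + stdE j) = q σ n)
    (hqrec : ∀ σ : ℝ, 0 < σ → ∀ n : Fin (d+2) → ℤ, IsNatVec n → n ≠ 0 →
      ((tot n : ℝ) * ((tot n : ℝ) - 1 + θ) + ((tot n : ℝ) - (n 0 : ℝ)) * σ) * q σ n =
        (∑ i, (n i : ℝ) * ((n i : ℝ) - 1) * q σ (n - stdE i))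
        + (∑ i, ∑ j, (n i : ℝ) * θ * P j i * q σ (n - stdE i + stdE j))
        + σ * (tot n : ℝ) * ∑ i ∈ univ.erase 0, q σ (n + stdE i))
    (i : Fin (d + 2)) (hi : i ≠ 0) (σ : ℝ) (hσ : 0 < σ) :
    σ * (σ * q σ (stdE i) - θ * P 0 i)
      = -θ * (σ * q σ (stdE i))
        - θ * ∑ j ∈ univ.erase 0, (P 0 i - P j i) * (σ * q σ (stdE j))
        + ∑ j ∈ univ.erase 0, σ^2 * q σ (stdE i + stdE j) := by
  have hrec := hqrec σ hσ (stdE i) (natVec_stdE' i) (stdE_ne_zero' i)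
  rw [tot_stdE'] at hrec
  have hi0 : stdE i 0 = 0 := by simp [stdE, (Ne.symm hi)]
  rw [hi0] at hrec
  have hs1 : (∑ i' : Fin (d+2), ((stdE i i' : ℤ) : ℝ) * (((stdE i i' : ℤ) : ℝ) - 1)
      * q σ (stdE i - stdE i')) = 0 := by
    apply Finset.sum_eq_zero
    intro i' _
    by_cases h : i' = i <;> simp [stdE, h]
  have hs2 : (∑ i' : Fin (d+2), ∑ j, ((stdE i i' : ℤ) : ℝ) * θ * P j i'
      * q σ (stdE i - stdE i' + stdE j)) = ∑ j, θ * P j i * q σ (stdE j) := by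
    rw [Finset.sum_eq_single i]
    · apply Finset.sum_congr rfl
      intro j _
      simp [stdE]
    · intro i' _ h
      apply Finset.sum_eq_zero
      intro j _
      simp [stdE, h]
    · simp
  rw [hs1, hs2] at hrec
  have hc0 := hqcons σ hσ 0 (fun j => le_refl 0)
  rw [hq1 σ hσ] at hc0
  simp only [zero_add] at hc0
  have hsplit : q σ (stdE 0) + ∑ j ∈ univ.erase 0, q σ (stdE j) = 1 := by
    rw [Finset.add_sum_erase univ (fun j => q σ (stdE j)) (mem_univ (0 : Fin (d+2)))]
    exact hc0
  have hPsplit : (∑ j, θ * P j i * q σ (stdE j))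
      = θ * P 0 i * q σ (stdE 0) + ∑ j ∈ univ.erase 0, θ * P j i * q σ (stdE j) := by
    rw [Finset.add_sum_erase univ (fun j => θ * P j i * q σ (stdE j)) (mem_univ (0 : Fin (d+2)))]
  rw [hPsplit] at hrec
  have hq0 : q σ (stdE 0) = 1 - ∑ j ∈ univ.erase 0, q σ (stdE j) := by linarith
  rw [hq0] at hrec
  have e1 : ∑ j ∈ univ.erase 0, (P 0 i - P j i) * (σ * q σ (stdE j))
      = σ * ((P 0 i) * ∑ j ∈ univ.erase 0, q σ (stdE j))
        - σ * ∑ j ∈ univ.erase 0, P j i * q σ (stdE j) := by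
    simp only [Finset.mul_sum, ← Finset.sum_sub_distrib]
    exact Finset.sum_congr rfl fun j _ => by ring
  have e2 : ∑ j ∈ univ.erase 0, σ^2 * q σ (stdE i + stdE j)
      = σ^2 * ∑ j ∈ univ.erase 0, q σ (stdE i + stdE j) := by
    rw [Finset.mul_sum]
  have e3 : ∑ j ∈ univ.erase 0, θ * P j i * q σ (stdE j)
      = θ * ∑ j ∈ univ.erase 0, P j i * q σ (stdE j) := by
    rw [Finset.mul_sum]; apply Finset.sum_congr rfl; intro j _; ring
  rw [e3] at hrec
  rw [e1, e2]
  push_cast at hrec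
  nlinarith [hrec, sq_nonneg σ]

/-- big-O extraction for `e_i`, `i ≠ 0`. -/
lemma bigA' {d : ℕ} (q : ℝ → (Fin (d+2) → ℤ) → ℝ) (qt : ℕ → (Fin (d+2) → ℤ) → ℝ)
    (hqtO : ∀ n : Fin (d+2) → ℤ, IsNatVec n → ∀ K : ℕ,
      (fun σ : ℝ => σ ^ (tot n - n 0) * q σ n
          - ∑ k ∈ range (K + 1), qt k n * σ ^ (-(k : ℤ)))
        =O[atTop] fun σ : ℝ => σ ^ (-(K + 1 : ℤ)))
    (i : Fin (d+2)) (hi : i ≠ 0) (K : ℕ) :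
    (fun σ : ℝ => σ * q σ (stdE i)
        - ∑ m ∈ range (K + 1), qt m (stdE i) * σ ^ (-(m : ℤ)))
      =O[atTop] fun σ : ℝ => σ ^ (-((K:ℤ) + 1)) := by
  have h := hqtO (stdE i) (natVec_stdE' i) K
  have hi0 : stdE i 0 = 0 := by simp [stdE, (Ne.symm hi)]
  rw [tot_stdE', hi0] at h
  simpa using h

/-- big-O extraction for `e_i + e_j`, `i, j ≠ 0`. -/
lemma bigC' {d : ℕ} (q : ℝ → (Fin (d+2) → ℤ) → ℝ) (qt : ℕ → (Fin (d+2) → ℤ) → ℝ)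
    (hqtO : ∀ n : Fin (d+2) → ℤ, IsNatVec n → ∀ K : ℕ,
      (fun σ : ℝ => σ ^ (tot n - n 0) * q σ n
          - ∑ k ∈ range (K + 1), qt k n * σ ^ (-(k : ℤ)))
        =O[atTop] fun σ : ℝ => σ ^ (-(K + 1 : ℤ)))
    (i j : Fin (d+2)) (hi : i ≠ 0) (hj : j ≠ 0) (K : ℕ) :
    (fun σ : ℝ => σ^2 * q σ (stdE i + stdE j)
        - ∑ m ∈ range (K + 1), qt m (stdE i + stdE j) * σ ^ (-(m : ℤ)))
      =O[atTop] fun σ : ℝ => σ ^ (-((K:ℤ) + 1)) := by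
  have h := hqtO (stdE i + stdE j)
    (fun l => add_nonneg (natVec_stdE' i l) (natVec_stdE' j l)) K
  have h0 : (stdE i + stdE j) 0 = 0 := by
    simp [stdE, (Ne.symm hi), (Ne.symm hj)]
  rw [tot_add', tot_stdE', tot_stdE', h0] at h
  have h2 : ∀ σ : ℝ, σ ^ ((1:ℤ) + 1 - 0) = σ ^ 2 := by
    intro σ; rw [show ((1:ℤ)+1-0)=(2:ℤ) from by ring, zpow_two, pow_two]
  simp only [h2] at h
  simpa using h

/-- the coefficient appearing on the right-hand side of the recursion. -/
def gcoef {d : ℕ} (θ : ℝ) (P : Fin (d+2) → Fin (d+2) → ℝ)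
    (qt : ℕ → (Fin (d+2) → ℤ) → ℝ) (i : Fin (d+2)) (m : ℕ) : ℝ :=
  -θ * qt m (stdE i)
    - θ * ∑ j ∈ univ.erase 0, (P 0 i - P j i) * qt m (stdE j)
    + ∑ j ∈ univ.erase 0, qt m (stdE i + stdE j)


/-- the difference-coefficient sequence. -/
def ccoef {d : ℕ} (θ : ℝ) (P : Fin (d+2) → Fin (d+2) → ℝ)
    (qt : ℕ → (Fin (d+2) → ℤ) → ℝ) (i : Fin (d+2)) : ℕ → ℝ
  | 0 => qt 0 (stdE i) - θ * P 0 i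
  | (m+1) => qt (m+1) (stdE i) - gcoef θ P qt i m

/-- **Theorem 4.3(II)** (boundary, unfit alleles): for `i = 2,…,d`,
`q̃_k(e_i) = 1_{k=0} θP_{1i} + 1_{k≥1}[ -θ ∑_{j=2}^d (δ_{ij} + P_{1i} - P_{ji}) q̃_{k-1}(e_j)
+ ∑_{j=2}^d q̃_{k-1}(e_i+e_j) ]`. -/
theorem boundary_unfit {d : ℕ} (θ : ℝ) (hθ : 0 < θ)
    (P : Fin (d + 2) → Fin (d + 2) → ℝ)
    (hPnonneg : ∀ i j, 0 ≤ P i j) (hProw : ∀ i, ∑ j, P i j = 1)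
    (q : ℝ → (Fin (d + 2) → ℤ) → ℝ) (qt : ℕ → (Fin (d + 2) → ℤ) → ℝ)
    (hq : IsSamplingFamily θ P q) (hqt : IsExpansionCoeffs q qt)
    (k : ℕ) (i : Fin (d + 2)) (hi : i ≠ 0) :
    qt k (stdE i)
      = (if k = 0 then θ * P 0 i else 0)
        + (if 1 ≤ k then
            - θ * ∑ j ∈ univ.erase 0,
                ((if i = j then (1 : ℝ) else 0) + P 0 i - P j i) * qt (k - 1) (stdE j)
            + ∑ j ∈ univ.erase 0, qt (k - 1) (stdE i + stdE j)
          else 0) := by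
  obtain ⟨hq1, hqneg, hqcons, hqrec⟩ := hq
  obtain ⟨hqt0, hqt00, hqtneg, hqtO⟩ := hqt
  have hA2 := bigA' q qt hqtO i hi (k+1)
  simp only [Nat.cast_add, Nat.cast_one] at hA2
  have hA1 := bigA' q qt hqtO i hi k
  -- difference of the G-part
  have hG : (fun σ : ℝ =>
      (-θ * (σ * q σ (stdE i))
        - θ * ∑ j ∈ univ.erase 0, (P 0 i - P j i) * (σ * q σ (stdE j))
        + ∑ j ∈ univ.erase 0, σ^2 * q σ (stdE i + stdE j))
      - ∑ m ∈ range (k+1), gcoef θ P qt i m * σ ^ (-(m:ℤ)))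
      =O[atTop] fun σ : ℝ => σ ^ (-((k:ℤ) + 1)) := by
    have heq : ∀ σ : ℝ,
        (-θ * (σ * q σ (stdE i))
          - θ * ∑ j ∈ univ.erase 0, (P 0 i - P j i) * (σ * q σ (stdE j))
          + ∑ j ∈ univ.erase 0, σ^2 * q σ (stdE i + stdE j))
        - ∑ m ∈ range (k+1), gcoef θ P qt i m * σ ^ (-(m:ℤ))
        = (-θ) * (σ * q σ (stdE i) - ∑ m ∈ range (k+1), qt m (stdE i) * σ ^ (-(m:ℤ)))
          + (-θ) * (∑ j ∈ univ.erase 0, (P 0 i - P j i)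
              * (σ * q σ (stdE j) - ∑ m ∈ range (k+1), qt m (stdE j) * σ ^ (-(m:ℤ))))
          + ∑ j ∈ univ.erase 0,
              (σ^2 * q σ (stdE i + stdE j)
                - ∑ m ∈ range (k+1), qt m (stdE i + stdE j) * σ ^ (-(m:ℤ))) := by
      intro σ
      have hterm : ∀ m ∈ range (k+1), gcoef θ P qt i m * σ ^ (-(m:ℤ))
          = (-θ) * (qt m (stdE i) * σ ^ (-(m:ℤ)))
            + (-θ) * ∑ j ∈ univ.erase 0, (P 0 i - P j i) * (qt m (stdE j) * σ ^ (-(m:ℤ)))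
            + ∑ j ∈ univ.erase 0, qt m (stdE i + stdE j) * σ ^ (-(m:ℤ)) := by
        intro m _
        unfold gcoef
        rw [add_mul, sub_mul, mul_assoc θ, Finset.sum_mul, Finset.sum_mul]
        rw [show (∑ j ∈ univ.erase 0, (P 0 i - P j i) * qt m (stdE j) * σ ^ (-(m:ℤ)))
            = ∑ j ∈ univ.erase 0, (P 0 i - P j i) * (qt m (stdE j) * σ ^ (-(m:ℤ))) from
          Finset.sum_congr rfl fun j _ => by ring]
        ring
      have hgsum : ∑ m ∈ range (k+1), gcoef θ P qt i m * σ ^ (-(m:ℤ))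
          = (-θ) * (∑ m ∈ range (k+1), qt m (stdE i) * σ ^ (-(m:ℤ)))
            + (-θ) * (∑ j ∈ univ.erase 0, (P 0 i - P j i)
                * ∑ m ∈ range (k+1), qt m (stdE j) * σ ^ (-(m:ℤ)))
            + ∑ j ∈ univ.erase 0,
                ∑ m ∈ range (k+1), qt m (stdE i + stdE j) * σ ^ (-(m:ℤ)) := by
        rw [Finset.sum_congr rfl hterm, Finset.sum_add_distrib, Finset.sum_add_distrib]
        congr 1
        congr 1
        · exact (Finset.mul_sum _ _ _).symm
        · calc ∑ m ∈ range (k+1), (-θ) * ∑ j ∈ univ.erase 0,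
                (P 0 i - P j i) * (qt m (stdE j) * σ ^ (-(m:ℤ)))
              = (-θ) * ∑ m ∈ range (k+1), ∑ j ∈ univ.erase 0,
                (P 0 i - P j i) * (qt m (stdE j) * σ ^ (-(m:ℤ))) :=
                (Finset.mul_sum _ _ _).symm
            _ = (-θ) * ∑ j ∈ univ.erase 0, ∑ m ∈ range (k+1),
                (P 0 i - P j i) * (qt m (stdE j) * σ ^ (-(m:ℤ))) := by
                rw [Finset.sum_comm]
            _ = (-θ) * (∑ j ∈ univ.erase 0, (P 0 i - P j i)
                * ∑ m ∈ range (k+1), qt m (stdE j) * σ ^ (-(m:ℤ))) := by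
                congr 1
                exact Finset.sum_congr rfl fun j _ => (Finset.mul_sum _ _ _).symm
        · exact Finset.sum_comm ..
      have e2 : ∑ j ∈ univ.erase 0, (P 0 i - P j i)
            * (σ * q σ (stdE j) - ∑ m ∈ range (k+1), qt m (stdE j) * σ ^ (-(m:ℤ)))
          = (∑ j ∈ univ.erase 0, (P 0 i - P j i) * (σ * q σ (stdE j)))
            - ∑ j ∈ univ.erase 0, (P 0 i - P j i)
                * ∑ m ∈ range (k+1), qt m (stdE j) * σ ^ (-(m:ℤ)) := by
        rw [← Finset.sum_sub_distrib]
        exact Finset.sum_congr rfl fun j _ => by ring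
      have e3 : ∑ j ∈ univ.erase 0,
            (σ^2 * q σ (stdE i + stdE j)
              - ∑ m ∈ range (k+1), qt m (stdE i + stdE j) * σ ^ (-(m:ℤ)))
          = (∑ j ∈ univ.erase 0, σ^2 * q σ (stdE i + stdE j))
            - ∑ j ∈ univ.erase 0,
                ∑ m ∈ range (k+1), qt m (stdE i + stdE j) * σ ^ (-(m:ℤ)) := by
        rw [← Finset.sum_sub_distrib]
      rw [hgsum, e2, e3]
      ring
    have hO : (fun σ : ℝ =>
        (-θ) * (σ * q σ (stdE i) - ∑ m ∈ range (k+1), qt m (stdE i) * σ ^ (-(m:ℤ)))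
          + (-θ) * (∑ j ∈ univ.erase 0, (P 0 i - P j i)
              * (σ * q σ (stdE j) - ∑ m ∈ range (k+1), qt m (stdE j) * σ ^ (-(m:ℤ))))
          + ∑ j ∈ univ.erase 0,
              (σ^2 * q σ (stdE i + stdE j)
                - ∑ m ∈ range (k+1), qt m (stdE i + stdE j) * σ ^ (-(m:ℤ))))
        =O[atTop] fun σ : ℝ => σ ^ (-((k:ℤ) + 1)) := by
      apply IsBigO.add
      apply IsBigO.add
      · exact hA1.const_mul_left (-θ)
      · refine (IsBigO.fun_sum fun j hj => ?_).const_mul_left (-θ)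
        have hj0 : j ≠ 0 := Finset.ne_of_mem_erase hj
        exact (bigA' q qt hqtO j hj0 k).const_mul_left (P 0 i - P j i)
      · exact IsBigO.fun_sum fun j hj =>
          bigC' q qt hqtO i j hi (Finset.ne_of_mem_erase hj) k
    exact hO.congr' (Filter.Eventually.of_forall fun σ => (heq σ).symm)
      (EventuallyEq.refl _ _)
  -- the combined function Φ
  have hΦO : (fun σ : ℝ =>
      (qt 0 (stdE i) - θ * P 0 i) * σ
        + ∑ m ∈ range (k+1), (qt (m+1) (stdE i) - gcoef θ P qt i m) * σ ^ (-(m:ℤ)))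
      =O[atTop] fun σ : ℝ => σ ^ (-((k:ℤ) + 1)) := by
    have h1 : (fun σ : ℝ => -(σ * (σ * q σ (stdE i)
        - ∑ m ∈ range (k+2), qt m (stdE i) * σ ^ (-(m:ℤ)))))
        =O[atTop] fun σ : ℝ => σ ^ (-((k:ℤ) + 1)) := by
      have hm := ((isBigO_refl (fun σ : ℝ => σ) atTop).mul hA2).neg_left
      apply hm.trans
      apply IsBigO.of_bound 1
      filter_upwards [eventually_ge_atTop (1:ℝ)] with σ hσ
      have hσ0 : (0:ℝ) < σ := lt_of_lt_of_le one_pos hσ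
      rw [Real.norm_eq_abs, Real.norm_eq_abs, abs_mul]
      rw [abs_of_pos hσ0, abs_of_pos (zpow_pos hσ0 _), abs_of_pos (zpow_pos hσ0 _)]
      rw [one_mul]
      rw [show (-((k:ℤ)+1+1)) = (-((k:ℤ)+1)) + (-1) from by ring, zpow_add₀ hσ0.ne']
      rw [mul_comm σ _, mul_assoc]
      have hz : σ ^ (-1:ℤ) * σ = 1 := by
        rw [zpow_neg_one]; field_simp
      rw [hz, mul_one]
    have hsum := h1.add hG
    apply IsBigO.congr' hsum ?_ (EventuallyEq.refl _ _)
    filter_upwards [eventually_gt_atTop (0:ℝ)] with σ hσ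
    have hex := exact_identity' θ P q hq1 hqcons hqrec i hi σ hσ
    have hkey : σ * (∑ m ∈ range (k+2), qt m (stdE i) * σ ^ (-(m:ℤ)))
        = qt 0 (stdE i) * σ
          + ∑ m ∈ range (k+1), qt (m+1) (stdE i) * σ ^ (-(m:ℤ)) := by
      rw [Finset.sum_range_succ' (fun m => qt m (stdE i) * σ ^ (-(m:ℤ))) (k+1)]
      rw [mul_add, Finset.mul_sum]
      have hterm : ∀ m ∈ range (k+1),
          σ * (qt (m+1) (stdE i) * σ ^ (-((m+1:ℕ):ℤ)))
          = qt (m+1) (stdE i) * σ ^ (-(m:ℤ)) := by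
        intro m _
        rw [show (-((m+1:ℕ):ℤ)) = (-(m:ℤ)) + (-1) from by push_cast; ring,
          zpow_add₀ hσ.ne', zpow_neg_one]
        field_simp
      rw [Finset.sum_congr rfl hterm]
      push_cast
      simp only [neg_zero, zpow_zero, mul_one]
      ring
    have hsplitΦ : ∑ m ∈ range (k+1),
          (qt (m+1) (stdE i) - gcoef θ P qt i m) * σ ^ (-(m:ℤ))
        = (∑ m ∈ range (k+1), qt (m+1) (stdE i) * σ ^ (-(m:ℤ)))
          - ∑ m ∈ range (k+1), gcoef θ P qt i m * σ ^ (-(m:ℤ)) := by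
      rw [← Finset.sum_sub_distrib]
      exact Finset.sum_congr rfl fun m _ => by ring
    show -(σ * (σ * q σ (stdE i) - ∑ m ∈ range (k+2), qt m (stdE i) * σ ^ (-(m:ℤ))))
        + ((-θ * (σ * q σ (stdE i))
          - θ * ∑ j ∈ univ.erase 0, (P 0 i - P j i) * (σ * q σ (stdE j))
          + ∑ j ∈ univ.erase 0, σ^2 * q σ (stdE i + stdE j))
        - ∑ m ∈ range (k+1), gcoef θ P qt i m * σ ^ (-(m:ℤ)))
        = (qt 0 (stdE i) - θ * P 0 i) * σ
          + ∑ m ∈ range (k+1), (qt (m+1) (stdE i) - gcoef θ P qt i m) * σ ^ (-(m:ℤ))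
    rw [hsplitΦ]
    linear_combination hkey - hex
  -- divide by σ
  have hΨO : (fun σ : ℝ => ∑ m ∈ range (k+2), ccoef θ P qt i m * σ ^ (-(m:ℤ)))
      =O[atTop] fun σ : ℝ => σ ^ (-((k+2:ℕ):ℤ)) := by
    have hmul := hΦO.mul (isBigO_refl (fun σ : ℝ => σ ^ (-1:ℤ)) atTop)
    apply hmul.congr' ?_ ?_
    · filter_upwards [eventually_gt_atTop (0:ℝ)] with σ hσ
      rw [Finset.sum_range_succ' (fun m => ccoef θ P qt i m * σ ^ (-(m:ℤ))) (k+1)]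
      rw [add_mul, Finset.sum_mul]
      have hterm : ∀ m ∈ range (k+1),
          (qt (m+1) (stdE i) - gcoef θ P qt i m) * σ ^ (-(m:ℤ)) * σ ^ (-1:ℤ)
          = ccoef θ P qt i (m+1) * σ ^ (-((m+1:ℕ):ℤ)) := by
        intro m _
        rw [show ccoef θ P qt i (m+1) = qt (m+1) (stdE i) - gcoef θ P qt i m from rfl]
        rw [mul_assoc, ← zpow_add₀ hσ.ne']
        congr 2
        push_cast; ring
      rw [Finset.sum_congr rfl hterm]
      rw [show ccoef θ P qt i 0 = qt 0 (stdE i) - θ * P 0 i from rfl]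
      have hz : (qt 0 (stdE i) - θ * P 0 i) * σ * σ ^ (-1:ℤ)
          = qt 0 (stdE i) - θ * P 0 i := by
        rw [zpow_neg_one, mul_assoc]
        field_simp
      rw [hz]
      push_cast
      simp only [neg_zero, zpow_zero, mul_one]
      try ring
    · filter_upwards [eventually_gt_atTop (0:ℝ)] with σ hσ
      rw [← zpow_add₀ hσ.ne']
      congr 1
      try (push_cast; ring)
  have hzero := coeff_unique' (k+2) _ hΨO
  -- conclude
  rcases Nat.eq_zero_or_pos k with hk0 | hkpos
  · subst hk0
    have h0 := hzero 0 (by omega)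
    rw [show ccoef θ P qt i 0 = qt 0 (stdE i) - θ * P 0 i from rfl] at h0
    have hval : qt 0 (stdE i) = θ * P 0 i := by linarith
    simpa using hval
  · obtain ⟨m, rfl⟩ : ∃ m, k = m + 1 := ⟨k - 1, by omega⟩
    have h1 := hzero (m+1) (by omega)
    rw [show ccoef θ P qt i (m+1)
        = qt (m+1) (stdE i) - gcoef θ P qt i m from rfl] at h1
    have hmain : qt (m+1) (stdE i) = gcoef θ P qt i m := by linarith
    rw [if_neg (by omega : ¬ (m + 1 = 0)), if_pos (by omega : 1 ≤ m + 1)]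
    rw [hmain]
    simp only [show m + 1 - 1 = m from rfl]
    have hδ : ∑ j ∈ univ.erase 0,
        ((if i = j then (1:ℝ) else 0) + P 0 i - P j i) * qt m (stdE j)
        = qt m (stdE i)
          + ∑ j ∈ univ.erase 0, (P 0 i - P j i) * qt m (stdE j) := by
      have hterm : ∀ j ∈ univ.erase 0,
          ((if i = j then (1:ℝ) else 0) + P 0 i - P j i) * qt m (stdE j)
          = (if i = j then qt m (stdE j) else 0)
            + (P 0 i - P j i) * qt m (stdE j) := by
        intro j _
        by_cases h : i = j <;> simp [h] <;> ring
      rw [Finset.sum_congr rfl hterm, Finset.sum_add_distrib]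
      congr 1
      rw [Finset.sum_ite_eq (univ.erase 0) i (fun j => qt m (stdE j))]
      rw [if_pos (Finset.mem_erase.mpr ⟨hi, mem_univ i⟩)]
    rw [hδ]
    unfold gcoef
    ring
end
end

section
/- Let q^{(σ)} be a family of sampling probabilities and let q̃_k (k ∈ ℕ) be a family of asymptotic-expansion coefficients for q^{(σ)}. Then for every k ∈ ℕ and every integer n_1 > 1: q̃_k(n_1 e_1) = q̃_k((n_1−1) e_1) − 1_{k≥1} θ(1 − P_{11}) q̃_{k−1}((n_1−1) e_1) + 1_{k≥2} ∑_{j=2}^d (n_1 − 2 + θ P_{j1}) q̃_{k−2}((n_1−2) e_1 + e_j). -/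
open Finset Filter Asymptotics

noncomputable section

/-! ### Auxiliary definitions and lemmas -/

/-- `m` copies of the fit allele. -/
def Ev {d : ℕ} (m : ℤ) : Fin (d + 2) → ℤ := m • stdE 0

/-- `m` copies of the fit allele plus one copy of allele `j`. -/
def Bv {d : ℕ} (m : ℤ) (j : Fin (d + 2)) : Fin (d + 2) → ℤ := Ev m + stdE j

lemma Ev_apply {d : ℕ} (m : ℤ) (i : Fin (d + 2)) :
    Ev m i = if i = 0 then m else 0 := by
  simp [Ev, stdE, mul_ite]

lemma tot_Ev {d : ℕ} (m : ℤ) : tot (Ev (d := d) m) = m := by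
  simp [tot, Ev_apply]

lemma Ev_natvec {d : ℕ} (m : ℤ) (hm : 0 ≤ m) : IsNatVec (Ev (d := d) m) := by
  intro i; rw [Ev_apply]; split <;> simp [hm]

lemma Ev_add_std0 {d : ℕ} (m : ℤ) : Ev (d := d) m + stdE 0 = Ev (m + 1) := by
  funext i; simp only [Pi.add_apply, Ev_apply, stdE]; split <;> simp

lemma Ev_sub_std0 {d : ℕ} (m : ℤ) : Ev (d := d) m - stdE 0 = Ev (m - 1) := by
  funext i; simp only [Pi.sub_apply, Ev_apply, stdE]; split <;> simp

lemma Bv_apply {d : ℕ} (m : ℤ) (j i : Fin (d + 2)) (hj : j ≠ 0) :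
    Bv m j i = if i = 0 then m else if i = j then 1 else 0 := by
  simp only [Bv, Pi.add_apply, Ev_apply, stdE]
  rcases eq_or_ne i 0 with rfl | hi
  · simp [if_neg (fun h : (0:Fin (d+2)) = j => hj h.symm)]
  · simp [hi]

lemma tot_Bv {d : ℕ} (m : ℤ) (j : Fin (d + 2)) (hj : j ≠ 0) :
    tot (Bv m j) = m + 1 := by
  simp only [tot]
  rw [Finset.sum_congr rfl fun i (_ : i ∈ univ) => Bv_apply m j i hj]
  rw [show (fun i => if i = 0 then m else if i = j then 1 else 0) = fun i : Fin (d+2) =>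
    ((if i = 0 then m else 0) + (if i = j then 1 else 0)) from funext fun i => by
      rcases eq_or_ne i 0 with rfl | hi
      · simp [if_neg (fun h : (0:Fin (d+2)) = j => hj h.symm)]
      · simp [hi]]
  rw [Finset.sum_add_distrib]; simp

lemma Bv_natvec {d : ℕ} (m : ℤ) (j : Fin (d + 2)) (hj : j ≠ 0) (hm : 0 ≤ m) :
    IsNatVec (Bv m j) := by
  intro i; rw [Bv_apply m j i hj]; split
  · exact hm
  · split <;> simp

/-- A finite "Laurent tail" that is `O(σ^{-(K+1)})` for every `K` has all
coefficients zero. -/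
lemma coeffs_zero (c : ℕ → ℝ)
    (h : ∀ K : ℕ, (fun σ : ℝ => ∑ k ∈ range (K + 1), c k * σ ^ (-(k : ℤ)))
      =O[atTop] fun σ : ℝ => σ ^ (-(K + 1 : ℤ))) : ∀ k, c k = 0 := by
  intro k
  induction k using Nat.strong_induction_on with
  | _ k ih =>
    have h1 : (fun σ : ℝ => c k * σ ^ (-(k : ℤ))) =O[atTop]
        fun σ : ℝ => σ ^ (-(k + 1 : ℤ)) := by
      refine (h k).congr_left fun σ => ?_
      rw [Finset.sum_eq_single_of_mem k (self_mem_range_succ k)]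
      intro b hb hbk
      have hb' := Finset.mem_range.mp hb
      have : c b = 0 := ih b (by omega)
      simp [this]
    have h2 : (fun _ : ℝ => c k) =O[atTop] fun σ : ℝ => σ ^ (-1 : ℤ) := by
      have h3 := h1.mul (isBigO_refl (fun σ : ℝ => σ ^ (k : ℤ)) atTop)
      refine h3.congr' ?_ ?_
      · filter_upwards [eventually_gt_atTop (0 : ℝ)] with σ hσ
        have : σ ^ (-(k : ℤ)) * σ ^ (k : ℤ) = 1 := by
          rw [← zpow_add₀ hσ.ne']; simp
        rw [mul_assoc, this, mul_one]
      · filter_upwards [eventually_gt_atTop (0 : ℝ)] with σ hσ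
        rw [← zpow_add₀ hσ.ne']; ring_nf
    have h4 : Tendsto (fun _ : ℝ => c k) atTop (nhds 0) :=
      h2.trans_tendsto (tendsto_zpow_atTop_zero (by norm_num))
    exact tendsto_nhds_unique tendsto_const_nhds h4

/-- zpow comparison: `σ^a = O(σ^b)` for `a ≤ b`. -/
lemma zpow_isBigO_zpow {a b : ℤ} (hab : a ≤ b) :
    (fun σ : ℝ => σ ^ a) =O[atTop] fun σ : ℝ => σ ^ b := by
  refine IsBigO.of_bound 1 ?_
  filter_upwards [eventually_ge_atTop (1 : ℝ)] with σ hσ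
  have h0 : (0 : ℝ) < σ := lt_of_lt_of_le one_pos hσ
  simp only [Real.norm_eq_abs]
  rw [abs_of_pos (zpow_pos h0 a), abs_of_pos (zpow_pos h0 b), one_mul]
  exact zpow_le_zpow_right₀ hσ hab

section exp
variable {d : ℕ} {θ : ℝ} {P : Fin (d + 2) → Fin (d + 2) → ℝ}
  {q : ℝ → (Fin (d + 2) → ℤ) → ℝ} {qt : ℕ → (Fin (d + 2) → ℤ) → ℝ}

variable (hexp : ∀ n : Fin (d + 2) → ℤ, IsNatVec n → ∀ K : ℕ,
    (fun σ : ℝ => σ ^ (tot n - n 0) * q σ n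
        - ∑ k ∈ range (K + 1), qt k n * σ ^ (-(k : ℤ)))
      =O[atTop] fun σ : ℝ => σ ^ (-(K + 1 : ℤ)))

include hexp

lemma expA (m : ℤ) (hm : 0 ≤ m) (K : ℕ) :
    (fun σ : ℝ => q σ (Ev m) - ∑ k ∈ range (K + 1), qt k (Ev m) * σ ^ (-(k : ℤ)))
      =O[atTop] fun σ : ℝ => σ ^ (-(K + 1 : ℤ)) := by
  have h := hexp (Ev m) (Ev_natvec m hm) K
  simpa [tot_Ev, Ev_apply] using h

lemma expB (m : ℤ) (hm : 0 ≤ m) (j : Fin (d + 2)) (hj : j ≠ 0) (K : ℕ) :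
    (fun σ : ℝ => σ * q σ (Bv m j) - ∑ k ∈ range (K + 1), qt k (Bv m j) * σ ^ (-(k : ℤ)))
      =O[atTop] fun σ : ℝ => σ ^ (-(K + 1 : ℤ)) := by
  have h := hexp (Bv m j) (Bv_natvec m j hj hm) K
  have h2 : tot (Bv m j) - Bv m j 0 = 1 := by
    rw [tot_Bv m j hj, Bv_apply m j 0 hj]; simp
  simpa [h2] using h

lemma expB' (m : ℤ) (hm : 0 ≤ m) (j : Fin (d + 2)) (hj : j ≠ 0) (K : ℕ) :
    (fun σ : ℝ => q σ (Bv m j) - ∑ k ∈ range K, qt k (Bv m j) * σ ^ (-(k + 1) : ℤ))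
      =O[atTop] fun σ : ℝ => σ ^ (-(K + 1 : ℤ)) := by
  have h1 : (fun σ : ℝ => q σ (Bv m j) - ∑ k ∈ range (K + 1), qt k (Bv m j) * σ ^ (-(k + 1) : ℤ))
      =O[atTop] fun σ : ℝ => σ ^ (-(K + 2 : ℤ)) := by
    have h := (isBigO_refl (fun σ : ℝ => σ⁻¹) atTop).mul (expB hexp m hm j hj K)
    refine h.congr' ?_ ?_
    · filter_upwards [eventually_gt_atTop (0 : ℝ)] with σ hσ
      rw [mul_sub, ← mul_assoc, inv_mul_cancel₀ hσ.ne', one_mul, Finset.mul_sum]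
      congr 1
      refine Finset.sum_congr rfl fun k _ => ?_
      rw [mul_left_comm]
      congr 1
      rw [← zpow_neg_one σ, ← zpow_add₀ hσ.ne']
      congr 1
      push_cast
      ring
    · filter_upwards [eventually_gt_atTop (0 : ℝ)] with σ hσ
      rw [← zpow_neg_one σ, ← zpow_add₀ hσ.ne']
      congr 1
      push_cast
      ring
  have h2 : (fun σ : ℝ => qt K (Bv m j) * σ ^ (-(K + 1) : ℤ)) =O[atTop]
      fun σ : ℝ => σ ^ (-(K + 1 : ℤ)) :=
    (isBigO_refl (fun σ : ℝ => σ ^ (-(K + 1) : ℤ)) atTop).const_mul_left (qt K (Bv m j))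
  have h3 := (h1.trans (zpow_isBigO_zpow (by linarith))).add h2
  refine h3.congr_left fun σ => ?_
  rw [Finset.sum_range_succ]
  ring

/-- Coefficient-level consistency relation. -/
lemma C1 (hcons : ∀ σ : ℝ, 0 < σ → ∀ n : Fin (d + 2) → ℤ, IsNatVec n →
      ∑ i, q σ (n + stdE i) = q σ n)
    (m : ℤ) (hm : 0 ≤ m) (k : ℕ) :
    qt k (Ev (m + 1))
      + (if 1 ≤ k then ∑ i ∈ univ.erase 0, qt (k - 1) (Bv m i) else 0)
      - qt k (Ev m) = 0 := by
  refine coeffs_zero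
    (fun k => qt k (Ev (m + 1))
      + (if 1 ≤ k then ∑ i ∈ univ.erase 0, qt (k - 1) (Bv m i) else 0)
      - qt k (Ev m)) (fun K => ?_) k
  have hX : (fun σ : ℝ => (∑ k ∈ range (K + 1), qt k (Ev (m + 1)) * σ ^ (-(k : ℤ)))
      - q σ (Ev (m + 1))) =O[atTop] fun σ : ℝ => σ ^ (-(K + 1 : ℤ)) :=
    (expA hexp (m + 1) (by linarith) K).neg_left.congr_left (fun σ => by ring)
  have hY : (fun σ : ℝ => ∑ i ∈ univ.erase 0,
        ((∑ k ∈ range K, qt k (Bv m i) * σ ^ (-(k + 1) : ℤ)) - q σ (Bv m i)))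
      =O[atTop] fun σ : ℝ => σ ^ (-(K + 1 : ℤ)) := by
    refine IsBigO.fun_sum fun i hi => ?_
    exact (expB' hexp m hm i (Finset.ne_of_mem_erase hi) K).neg_left.congr_left
      (fun σ => by ring)
  have hZ : (fun σ : ℝ => (∑ k ∈ range (K + 1), qt k (Ev m) * σ ^ (-(k : ℤ)))
      - q σ (Ev m)) =O[atTop] fun σ : ℝ => σ ^ (-(K + 1 : ℤ)) :=
    (expA hexp m hm K).neg_left.congr_left (fun σ => by ring)
  refine ((hX.add hY).sub hZ).congr' ?_ (EventuallyEq.refl _ _)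
  filter_upwards [eventually_gt_atTop (0 : ℝ)] with σ hσ
  have hc := hcons σ hσ (Ev m) (Ev_natvec m hm)
  rw [← Finset.add_sum_erase _ _ (Finset.mem_univ 0), Ev_add_std0] at hc
  have hmid : ∑ k ∈ range (K + 1),
      (if 1 ≤ k then ∑ i ∈ univ.erase 0, qt (k - 1) (Bv m i) else 0) * σ ^ (-(k : ℤ))
      = ∑ i ∈ univ.erase 0, ∑ k ∈ range K, qt k (Bv m i) * σ ^ (-(k + 1) : ℤ) := by
    rw [Finset.sum_range_succ']
    have h1 : ∀ k : ℕ,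
        (if 1 ≤ k + 1 then ∑ i ∈ univ.erase 0, qt (k + 1 - 1) (Bv m i) else 0)
            * σ ^ (-(↑(k + 1)) : ℤ)
        = ∑ i ∈ univ.erase 0, qt k (Bv m i) * σ ^ (-(k + 1) : ℤ) := fun k => by
      rw [if_pos (by omega), Nat.add_sub_cancel, Finset.sum_mul]
      norm_cast
    rw [Finset.sum_congr rfl fun k _ => h1 k]
    simp only [Nat.lt_irrefl, if_neg (by omega : ¬ (1 ≤ 0)), zero_mul, add_zero]
    rw [Finset.sum_comm]
  simp only [add_mul, Finset.sum_add_distrib, Finset.sum_sub_distrib, sub_mul]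
  rw [hmid]
  have hBq : ∑ i ∈ univ.erase 0, q σ (Ev m + stdE i) = ∑ i ∈ univ.erase 0, q σ (Bv m i) :=
    rfl
  rw [hBq] at hc
  linear_combination -hc

omit hexp in
/-- The sampling recursion specialised to `n = m e₁` and divided by `m`. -/
lemma recE
    (hrec : ∀ σ : ℝ, 0 < σ → ∀ n : Fin (d + 2) → ℤ, IsNatVec n → n ≠ 0 →
      ((tot n : ℝ) * ((tot n : ℝ) - 1 + θ) + ((tot n : ℝ) - (n 0 : ℝ)) * σ) * q σ n =
        (∑ i, (n i : ℝ) * ((n i : ℝ) - 1) * q σ (n - stdE i))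
        + (∑ i, ∑ j, (n i : ℝ) * θ * P j i * q σ (n - stdE i + stdE j))
        + σ * (tot n : ℝ) * ∑ i ∈ univ.erase 0, q σ (n + stdE i))
    (m : ℤ) (hm : 1 ≤ m) (σ : ℝ) (hσ : 0 < σ) :
    ((m : ℝ) - 1 + θ - θ * P 0 0) * q σ (Ev m)
      = ((m : ℝ) - 1) * q σ (Ev (m - 1))
        + θ * ∑ j ∈ univ.erase 0, P j 0 * q σ (Bv (m - 1) j)
        + σ * ∑ i ∈ univ.erase 0, q σ (Bv m i) := by
  have hne : Ev (d := d) m ≠ 0 := by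
    intro h
    have := congrFun h 0
    rw [Ev_apply] at this
    simp at this
    omega
  have h := hrec σ hσ (Ev m) (Ev_natvec m (by omega)) hne
  rw [tot_Ev] at h
  rw [Ev_apply] at h
  simp only [if_pos rfl, eq_self_iff_true, if_true] at h
  have hS1 : (∑ i, ((Ev (d := d) m) i : ℝ) * (((Ev m) i : ℝ) - 1) * q σ (Ev m - stdE i))
      = (m : ℝ) * ((m : ℝ) - 1) * q σ (Ev (m - 1)) := by
    rw [Finset.sum_eq_single_of_mem 0 (Finset.mem_univ 0)]
    · rw [Ev_apply, if_pos rfl, Ev_sub_std0]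
    · intro i _ hi
      rw [Ev_apply, if_neg hi]
      simp
  have hS2 : (∑ i, ∑ j, ((Ev (d := d) m) i : ℝ) * θ * P j i * q σ (Ev m - stdE i + stdE j))
      = (m : ℝ) * θ * P 0 0 * q σ (Ev m)
        + (m : ℝ) * θ * ∑ j ∈ univ.erase 0, P j 0 * q σ (Bv (m - 1) j) := by
    rw [Finset.sum_eq_single_of_mem 0 (Finset.mem_univ 0)]
    · rw [Ev_sub_std0]
      rw [← Finset.add_sum_erase _ _ (Finset.mem_univ 0)]
      rw [Ev_apply, if_pos rfl]
      have : Ev (d := d) (m - 1) + stdE 0 = Ev m := by rw [Ev_add_std0]; ring_nf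
      rw [this]
      rw [Finset.mul_sum]
      congr 1
      refine Finset.sum_congr rfl fun j _ => ?_
      show (m : ℝ) * θ * P j 0 * q σ (Bv (m-1) j) = _
      ring
    · intro i _ hi
      rw [Ev_apply, if_neg hi]
      simp
  rw [hS1, hS2] at h
  have hm0 : (m : ℝ) ≠ 0 := by
    have : (1 : ℝ) ≤ (m : ℝ) := by exact_mod_cast hm
    linarith
  have hgoal : (m : ℝ) * (((m : ℝ) - 1 + θ - θ * P 0 0) * q σ (Ev m))
      = (m : ℝ) * (((m : ℝ) - 1) * q σ (Ev (m - 1))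
        + θ * ∑ j ∈ univ.erase 0, P j 0 * q σ (Bv (m - 1) j)
        + σ * ∑ i ∈ univ.erase 0, q σ (Bv m i)) := by
    have hEB : ∀ i, Ev (d := d) m + stdE i = Bv m i := fun i => rfl
    simp only [hEB] at h
    linear_combination h
  exact mul_left_cancel₀ hm0 hgoal

/-- Coefficient-level recursion relation at `m e₁`. -/
lemma R1
    (hrec : ∀ σ : ℝ, 0 < σ → ∀ n : Fin (d + 2) → ℤ, IsNatVec n → n ≠ 0 →
      ((tot n : ℝ) * ((tot n : ℝ) - 1 + θ) + ((tot n : ℝ) - (n 0 : ℝ)) * σ) * q σ n =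
        (∑ i, (n i : ℝ) * ((n i : ℝ) - 1) * q σ (n - stdE i))
        + (∑ i, ∑ j, (n i : ℝ) * θ * P j i * q σ (n - stdE i + stdE j))
        + σ * (tot n : ℝ) * ∑ i ∈ univ.erase 0, q σ (n + stdE i))
    (m : ℤ) (hm : 1 ≤ m) (k : ℕ) :
    ((m : ℝ) - 1 + θ - θ * P 0 0) * qt k (Ev m) - ((m : ℝ) - 1) * qt k (Ev (m - 1))
      - (if 1 ≤ k then θ * ∑ j ∈ univ.erase 0, P j 0 * qt (k - 1) (Bv (m - 1) j) else 0)
      - ∑ i ∈ univ.erase 0, qt k (Bv m i) = 0 := by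
  refine coeffs_zero
    (fun k => ((m : ℝ) - 1 + θ - θ * P 0 0) * qt k (Ev m) - ((m : ℝ) - 1) * qt k (Ev (m - 1))
      - (if 1 ≤ k then θ * ∑ j ∈ univ.erase 0, P j 0 * qt (k - 1) (Bv (m - 1) j) else 0)
      - ∑ i ∈ univ.erase 0, qt k (Bv m i)) (fun K => ?_) k
  have hX : (fun σ : ℝ => ((m : ℝ) - 1 + θ - θ * P 0 0) *
      ((∑ k ∈ range (K + 1), qt k (Ev m) * σ ^ (-(k : ℤ))) - q σ (Ev m)))
      =O[atTop] fun σ : ℝ => σ ^ (-(K + 1 : ℤ)) :=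
    (((expA hexp m (by omega) K).neg_left.congr_left (fun σ => by
      ring)).const_mul_left _)
  have hY : (fun σ : ℝ => ((m : ℝ) - 1) *
      ((∑ k ∈ range (K + 1), qt k (Ev (m - 1)) * σ ^ (-(k : ℤ))) - q σ (Ev (m - 1))))
      =O[atTop] fun σ : ℝ => σ ^ (-(K + 1 : ℤ)) :=
    (((expA hexp (m - 1) (by omega) K).neg_left.congr_left (fun σ => by
      ring)).const_mul_left _)
  have hZ : (fun σ : ℝ => θ * ∑ j ∈ univ.erase 0, P j 0 *
      ((∑ k ∈ range K, qt k (Bv (m - 1) j) * σ ^ (-(k + 1) : ℤ)) - q σ (Bv (m - 1) j)))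
      =O[atTop] fun σ : ℝ => σ ^ (-(K + 1 : ℤ)) := by
    refine IsBigO.const_mul_left ?_ _
    refine IsBigO.fun_sum fun j hj => ?_
    exact ((expB' hexp (m - 1) (by omega) j (Finset.ne_of_mem_erase hj) K).neg_left.congr_left
      (fun σ => by ring)).const_mul_left _
  have hW : (fun σ : ℝ => ∑ i ∈ univ.erase 0,
      ((∑ k ∈ range (K + 1), qt k (Bv m i) * σ ^ (-(k : ℤ))) - σ * q σ (Bv m i)))
      =O[atTop] fun σ : ℝ => σ ^ (-(K + 1 : ℤ)) := by
    refine IsBigO.fun_sum fun i hi => ?_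
    exact (expB hexp m (by omega) i (Finset.ne_of_mem_erase hi) K).neg_left.congr_left
      (fun σ => by ring)
  refine (((hX.sub hY).sub hZ).sub hW).congr' ?_ (EventuallyEq.refl _ _)
  filter_upwards [eventually_gt_atTop (0 : ℝ)] with σ hσ
  have hr := recE (q := q) hrec m hm σ hσ
  have hmid : ∑ k ∈ range (K + 1),
      (if 1 ≤ k then θ * ∑ j ∈ univ.erase 0, P j 0 * qt (k - 1) (Bv (m - 1) j) else 0)
        * σ ^ (-(k : ℤ))
      = θ * ∑ j ∈ univ.erase 0, P j 0 *
          (∑ k ∈ range K, qt k (Bv (m - 1) j) * σ ^ (-(k + 1) : ℤ)) := by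
    rw [Finset.sum_range_succ']
    have h1 : ∀ k : ℕ,
        (if 1 ≤ k + 1 then θ * ∑ j ∈ univ.erase 0, P j 0 * qt (k + 1 - 1) (Bv (m - 1) j) else 0)
            * σ ^ (-(↑(k + 1)) : ℤ)
        = ∑ j ∈ univ.erase 0, θ * (P j 0 * (qt k (Bv (m - 1) j) * σ ^ (-(k + 1) : ℤ))) :=
      fun k => by
        rw [if_pos (by omega), Nat.add_sub_cancel]
        rw [Finset.mul_sum, Finset.sum_mul]
        refine Finset.sum_congr rfl fun j _ => ?_
        push_cast
        ring
    rw [Finset.sum_congr rfl fun k _ => h1 k]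
    rw [if_neg (by omega : ¬ (1 ≤ 0)), zero_mul, add_zero, Finset.sum_comm]
    simp only [Finset.mul_sum]
  have hlast : ∑ k ∈ range (K + 1), (∑ i ∈ univ.erase 0, qt k (Bv m i)) * σ ^ (-(k : ℤ))
      = ∑ i ∈ univ.erase 0, ∑ k ∈ range (K + 1), qt k (Bv m i) * σ ^ (-(k : ℤ)) := by
    rw [Finset.sum_comm]
    exact Finset.sum_congr rfl fun k _ => Finset.sum_mul _ _ _
  simp only [sub_mul, Finset.sum_sub_distrib]
  rw [hmid, hlast]
  have pull : ∀ (c : ℝ) (f : ℕ → ℝ), ∑ k ∈ range (K + 1), c * f k * σ ^ (-(k : ℤ))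
      = c * ∑ k ∈ range (K + 1), f k * σ ^ (-(k : ℤ)) := fun c f => by
    rw [Finset.mul_sum]; exact Finset.sum_congr rfl fun i _ => by ring
  rw [pull ((m : ℝ) - 1 + θ) (fun k => qt k (Ev m)),
    pull (θ * P 0 0) (fun k => qt k (Ev m)),
    pull (m : ℝ) (fun k => qt k (Ev (m - 1))),
    pull 1 (fun k => qt k (Ev (m - 1)))]
  have e4 : ∑ j ∈ univ.erase 0, P j 0 *
        ((∑ k ∈ range K, qt k (Bv (m - 1) j) * σ ^ (-(k + 1) : ℤ)) - q σ (Bv (m - 1) j))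
      = (∑ j ∈ univ.erase 0, P j 0 *
          (∑ k ∈ range K, qt k (Bv (m - 1) j) * σ ^ (-(k + 1) : ℤ)))
        - ∑ j ∈ univ.erase 0, P j 0 * q σ (Bv (m - 1) j) := by
    rw [← Finset.sum_sub_distrib]
    exact Finset.sum_congr rfl fun j _ => by ring
  have e5 : ∑ x ∈ univ.erase 0, σ * q σ (Bv m x) = σ * ∑ x ∈ univ.erase 0, q σ (Bv m x) :=
    (Finset.mul_sum _ _ _).symm
  rw [e4, e5]
  linear_combination -hr

end exp

/-- **Theorem 4.3(III)** (recursion, fit allele only): for `n_1 > 1`,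
`q̃_k(n_1 e_1) = q̃_k((n_1-1)e_1) - 1_{k≥1} θ(1-P_{11}) q̃_{k-1}((n_1-1)e_1)
+ 1_{k≥2} ∑_{j=2}^d (n_1-2+θP_{j1}) q̃_{k-2}((n_1-2)e_1+e_j)`. -/
theorem recursion_fit {d : ℕ} (θ : ℝ) (hθ : 0 < θ)
    (P : Fin (d + 2) → Fin (d + 2) → ℝ)
    (hPnonneg : ∀ i j, 0 ≤ P i j) (hProw : ∀ i, ∑ j, P i j = 1)
    (q : ℝ → (Fin (d + 2) → ℤ) → ℝ) (qt : ℕ → (Fin (d + 2) → ℤ) → ℝ)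
    (hq : IsSamplingFamily θ P q) (hqt : IsExpansionCoeffs q qt)
    (k : ℕ) (n₁ : ℤ) (hn₁ : 1 < n₁) :
    qt k (n₁ • stdE 0)
      = qt k ((n₁ - 1) • stdE 0)
        - (if 1 ≤ k then θ * (1 - P 0 0) * qt (k - 1) ((n₁ - 1) • stdE 0) else 0)
        + (if 2 ≤ k then
            ∑ j ∈ univ.erase 0,
              ((n₁ : ℝ) - 2 + θ * P j 0) * qt (k - 2) ((n₁ - 2) • stdE 0 + stdE j)
          else 0) := by
  obtain ⟨-, -, hcons, hrec⟩ := hq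
  obtain ⟨-, -, -, hexp⟩ := hqt
  -- consistency at (n₁ - 1) e₁, coefficient k
  have hC1a := C1 hexp hcons (n₁ - 1) (by omega) k
  rw [show n₁ - 1 + 1 = n₁ from by ring] at hC1a
  -- consistency at (n₁ - 2) e₁, coefficient k - 1
  have hC1b := C1 hexp hcons (n₁ - 2) (by omega) (k - 1)
  rw [show n₁ - 2 + 1 = n₁ - 1 from by ring] at hC1b
  -- recursion at (n₁ - 1) e₁, coefficient k - 1
  have hR1a := R1 hexp hrec (n₁ - 1) (by omega) (k - 1)
  rw [show n₁ - 1 - 1 = n₁ - 2 from by ring] at hR1a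
  push_cast at hR1a
  have hsplit : ∑ j ∈ univ.erase 0, ((n₁ : ℝ) - 2 + θ * P j 0) * qt (k - 2) (Bv (n₁ - 2) j)
      = ((n₁ : ℝ) - 2) * (∑ j ∈ univ.erase 0, qt (k - 2) (Bv (n₁ - 2) j))
        + θ * ∑ j ∈ univ.erase 0, P j 0 * qt (k - 2) (Bv (n₁ - 2) j) := by
    rw [Finset.mul_sum, Finset.mul_sum, ← Finset.sum_add_distrib]
    exact Finset.sum_congr rfl fun j _ => by ring
  have hEB : ∀ (m : ℤ) (j : Fin (d + 2)), Bv m j = m • stdE 0 + stdE j := fun m j => rfl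
  have hEE : ∀ m : ℤ, Ev (d := d) m = m • stdE 0 := fun m => rfl
  rw [hEE, hEE] at hC1a hC1b
  rw [hEE, hEE] at hR1a
  simp only [hEB] at hC1a hC1b hR1a hsplit
  rcases Nat.eq_zero_or_pos k with rfl | hk
  · rw [if_neg (by omega), if_neg (by omega)]
    rw [if_neg (by omega : ¬ (1 ≤ 0))] at hC1a
    linarith
  · have hk' : 1 ≤ k := hk
    rw [if_pos hk'] at hC1a ⊢
    have hk1 : k - 1 - 1 = k - 2 := by omega
    rw [hk1] at hC1b hR1a
    by_cases hk2 : 2 ≤ k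
    · rw [if_pos hk2]
      rw [if_pos (show 1 ≤ k - 1 by omega)] at hC1b hR1a
      rw [hsplit]
      linear_combination hC1a + hR1a - ((n₁ : ℝ) - 2) * hC1b
    · rw [if_neg hk2]
      rw [if_neg (show ¬ 1 ≤ k - 1 by omega)] at hC1b hR1a
      linear_combination hC1a + hR1a - ((n₁ : ℝ) - 2) * hC1b
end
end

section
/- Let q^{(σ)} be a family of sampling probabilities and let q̃_k (k ∈ ℕ) be a family of asymptotic-expansion coefficients for q^{(σ)}. Then for every k ∈ ℕ and every n ∈ ℕ^d with ‖n‖ > 1: (‖n‖ − n_1) q̃_k(n) = ∑_{i=2}^d n_i(n_i − 1 + θ P_{1i}) q̃_k(n − e_i) + 1_{k≥1} [ (n_1(n_1 − 1 + θ P_{11}) − ‖n‖(‖n‖ − 1 + θ)) q̃_{k−1}(n) + ∑_{i,j=2}^d n_i θ (P_{ji} − P_{1i}) q̃_{k−1}(n − e_i + e_j) + ‖n‖ ∑_{i=2}^d q̃_{k−1}(n + e_i) ] + 1_{k≥2} ∑_{j=2}^d n_1 (n_1 − 1 + θ P_{j1}) q̃_{k−2}(n − e_1 + e_j). -/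
open Finset Filter Asymptotics

noncomputable section

lemma coeff_eq_zero (a : ℕ → ℝ)
    (h : ∀ K : ℕ, (fun σ : ℝ => ∑ j ∈ range (K + 1), a j * σ ^ (-(j : ℤ)))
      =O[atTop] fun σ : ℝ => σ ^ (-(K + 1 : ℤ))) :
    ∀ k, a k = 0 := by
  intro k
  induction k using Nat.strong_induction_on with
  | _ k ih =>
    have h1 : (fun σ : ℝ => a k * σ ^ (-(k : ℤ))) =O[atTop]
        fun σ : ℝ => σ ^ (-(k + 1 : ℤ)) := by
      refine (h k).congr_left fun σ => ?_
      rw [Finset.sum_eq_single_of_mem k (by simp)]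
      intro j hj hjk
      have : j < k := by
        rcases lt_or_eq_of_le (Nat.lt_succ_iff.mp (Finset.mem_range.mp hj)) with h' | h'
        · exact h'
        · exact absurd h' hjk
      rw [ih j this, zero_mul]
    have h2 : (fun _ : ℝ => a k) =O[atTop] fun σ : ℝ => σ ^ (-1 : ℤ) := by
      have h3 := h1.mul (isBigO_refl (fun σ : ℝ => σ ^ (k : ℤ)) atTop)
      refine h3.congr' ?_ ?_
      · filter_upwards [eventually_gt_atTop (0 : ℝ)] with σ hσ
        rw [mul_assoc, ← zpow_add₀ (ne_of_gt hσ)]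
        simp
      · filter_upwards [eventually_gt_atTop (0 : ℝ)] with σ hσ
        rw [← zpow_add₀ (ne_of_gt hσ)]
        ring_nf
    have h4 : Tendsto (fun _ : ℝ => a k) atTop (nhds 0) :=
      h2.trans_tendsto (by simpa using tendsto_inv_atTop_zero)
    exact tendsto_nhds_unique tendsto_const_nhds h4

lemma tot_add_stdE {d : ℕ} [NeZero d] (n : Fin d → ℤ) (i : Fin d) :
    tot (n + stdE i) = tot n + 1 := by
  simp [tot, stdE, Finset.sum_add_distrib]

lemma tot_sub_stdE {d : ℕ} [NeZero d] (n : Fin d → ℤ) (i : Fin d) :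
    tot (n - stdE i) = tot n - 1 := by
  simp [tot, stdE, Finset.sum_sub_distrib]

lemma natvec_add {d : ℕ} {n : Fin d → ℤ} (hn : IsNatVec n) (i : Fin d) :
    IsNatVec (n + stdE i) := by
  intro j; have := hn j; simp only [Pi.add_apply, stdE]
  split <;> omega

lemma natvec_sub_add {d : ℕ} {n : Fin d → ℤ} (hn : IsNatVec n) {i : Fin d}
    (hi : 1 ≤ n i) (j : Fin d) : IsNatVec (n - stdE i + stdE j) := by
  intro l; have h1 := hn l; simp only [Pi.add_apply, Pi.sub_apply, stdE]
  split_ifs with h h2 h3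
  · omega
  · subst h; omega
  · omega
  · omega

lemma natvec_sub {d : ℕ} {n : Fin d → ℤ} (hn : IsNatVec n) {i : Fin d}
    (hi : 1 ≤ n i) : IsNatVec (n - stdE i) := by
  intro l; have h1 := hn l; simp only [Pi.sub_apply, stdE]
  split_ifs with h
  · subst h; omega
  · omega

variable {d : ℕ} [NeZero d] {q : ℝ → (Fin d → ℤ) → ℝ} {qt : ℕ → (Fin d → ℤ) → ℝ}

lemma shiftO (hqt : IsExpansionCoeffs q qt) (n : Fin d → ℤ) (hn : IsNatVec n) (s K : ℕ) :
    (fun σ : ℝ => σ ^ (tot n - n 0 - s) * q σ n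
        - ∑ k ∈ range (K + 1), (if s ≤ k then qt (k - s) n else 0) * σ ^ (-(k : ℤ)))
      =O[atTop] fun σ : ℝ => σ ^ (-(K + 1 : ℤ)) := by
  rcases le_or_gt s K with hs | hs
  · have h1 := hqt.2.2.2 n hn (K - s)
    have h2 := h1.mul (isBigO_refl (fun σ : ℝ => σ ^ (-(s : ℤ))) atTop)
    refine h2.congr' ?_ ?_
    · filter_upwards [eventually_gt_atTop (0 : ℝ)] with σ hσ
      have hσ0 : σ ≠ 0 := ne_of_gt hσ
      have hR : ∑ k ∈ range (K + 1), (if s ≤ k then qt (k - s) n else 0) * σ ^ (-(k : ℤ))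
          = ∑ k ∈ Finset.Ico s (K + 1), qt (k - s) n * σ ^ (-(k : ℤ)) := by
        rw [Finset.range_eq_Ico,
          ← Finset.sum_Ico_consecutive _ (Nat.zero_le s) (by omega : s ≤ K + 1)]
        have h0 : ∑ k ∈ Finset.Ico 0 s,
            (if s ≤ k then qt (k - s) n else 0) * σ ^ (-(k : ℤ)) = 0 :=
          Finset.sum_eq_zero fun k hk => by
            rw [if_neg (by have := (Finset.mem_Ico.mp hk).2; omega), zero_mul]
        rw [h0, zero_add]
        exact Finset.sum_congr rfl fun k hk => by rw [if_pos (Finset.mem_Ico.mp hk).1]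
      rw [sub_mul, Finset.sum_mul, hR]
      congr 1
      · rw [mul_right_comm, ← zpow_add₀ hσ0,
          show tot n - n 0 + -(s : ℤ) = tot n - n 0 - (s : ℤ) from by ring]
      · rw [Finset.sum_Ico_eq_sum_range, show K + 1 - s = K - s + 1 from by omega]
        refine Finset.sum_congr rfl fun j hj => ?_
        rw [Nat.add_sub_cancel_left, mul_assoc, ← zpow_add₀ hσ0]
        congr 2
        push_cast
        ring
    · filter_upwards [eventually_gt_atTop (0 : ℝ)] with σ hσ
      rw [← zpow_add₀ (ne_of_gt hσ)]
      congr 1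
      have hcast : ((K - s : ℕ) : ℤ) = (K : ℤ) - s := by omega
      rw [hcast]
      ring
  · have hsum : ∀ σ : ℝ,
        ∑ k ∈ range (K + 1), (if s ≤ k then qt (k - s) n else 0) * σ ^ (-(k : ℤ)) = 0 := by
      intro σ
      refine Finset.sum_eq_zero fun k hk => ?_
      rw [if_neg (by simp only [Finset.mem_range] at hk; omega), zero_mul]
    simp only [hsum, sub_zero]
    have hb : (fun σ : ℝ => σ ^ (tot n - n 0) * q σ n) =O[atTop] fun _ : ℝ => (1 : ℝ) := by
      have h1 := hqt.2.2.2 n hn 0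
      have h1' : (fun σ : ℝ => σ ^ (tot n - n 0) * q σ n - qt 0 n) =O[atTop]
          fun σ : ℝ => σ ^ (-(0 : ℤ) - 1) := by
        refine h1.congr (fun σ => ?_) (fun σ => ?_)
        · simp
        · norm_num
      have h2 : (fun σ : ℝ => σ ^ (tot n - n 0) * q σ n - qt 0 n) =O[atTop]
          fun _ : ℝ => (1 : ℝ) :=
        (h1'.trans (zpow_isBigO_zpow (show -(0 : ℤ) - 1 ≤ 0 by omega))).congr_right
          (fun σ : ℝ => by simp)
      have h3 : (fun _ : ℝ => qt 0 n) =O[atTop] fun _ : ℝ => (1 : ℝ) :=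
        isBigO_const_const _ one_ne_zero _
      refine (h2.add h3).congr_left fun σ => by ring
    have h5 : (fun σ : ℝ => σ ^ (tot n - n 0 - s) * q σ n) =O[atTop]
        fun σ : ℝ => σ ^ (-(s : ℤ)) := by
      refine ((hb.mul (isBigO_refl (fun σ : ℝ => σ ^ (-(s : ℤ))) atTop)).congr'
        ?_ ?_)
      · filter_upwards [eventually_gt_atTop (0 : ℝ)] with σ hσ
        rw [mul_right_comm, ← zpow_add₀ (ne_of_gt hσ),
          show tot n - n 0 + -(s : ℤ) = tot n - n 0 - (s : ℤ) from by ring]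
      · filter_upwards with σ
        rw [one_mul]
    exact h5.trans (zpow_isBigO_zpow (by omega))

lemma termO (hqt : IsExpansionCoeffs q qt) (c : ℝ) (n : Fin d → ℤ) (s K : ℕ)
    (h : c = 0 ∨ IsNatVec n) :
    (fun σ : ℝ => c * (σ ^ (tot n - n 0 - s) * q σ n)
        - ∑ k ∈ range (K + 1), c * (if s ≤ k then qt (k - s) n else 0) * σ ^ (-(k : ℤ)))
      =O[atTop] fun σ : ℝ => σ ^ (-(K + 1 : ℤ)) := by
  rcases h with h | h
  · simp only [h, zero_mul, Finset.sum_const_zero, sub_zero]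
    exact isBigO_zero _ _
  · refine ((shiftO hqt n h s K).const_mul_left c).congr_left fun σ => ?_
    rw [mul_sub, Finset.mul_sum]
    congr 1
    exact Finset.sum_congr rfl fun k _ => by ring

lemma apply0_add_ne {d : ℕ} [NeZero d] (n : Fin d → ℤ) {i : Fin d} (hi : i ≠ 0) :
    (n + stdE i) 0 = n 0 := by
  have : (0 : Fin d) ≠ i := fun h => hi h.symm
  simp [stdE, this]

lemma apply0_add_eq {d : ℕ} [NeZero d] (n : Fin d → ℤ) :
    (n + stdE (0 : Fin d)) 0 = n 0 + 1 := by simp [stdE]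

lemma apply0_sub_ne {d : ℕ} [NeZero d] (n : Fin d → ℤ) {i : Fin d} (hi : i ≠ 0) :
    (n - stdE i) 0 = n 0 := by
  have : (0 : Fin d) ≠ i := fun h => hi h.symm
  simp [stdE, this]

lemma apply0_sub_eq {d : ℕ} [NeZero d] (n : Fin d → ℤ) :
    (n - stdE (0 : Fin d)) 0 = n 0 - 1 := by simp [stdE]

variable {d : ℕ} [NeZero d] {q : ℝ → (Fin d → ℤ) → ℝ} {qt : ℕ → (Fin d → ℤ) → ℝ}

lemma consistency_coeff {θ : ℝ} {P : Fin d → Fin d → ℝ}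
    (hq : IsSamplingFamily θ P q) (hqt : IsExpansionCoeffs q qt)
    (n : Fin d → ℤ) (hn : IsNatVec n) (k : ℕ) :
    qt k (n + stdE 0) + (if 1 ≤ k then ∑ i ∈ univ.erase 0, qt (k - 1) (n + stdE i) else 0)
      = qt k n := by
  have key := coeff_eq_zero (fun j =>
      (1 : ℝ) * (if (0:ℕ) ≤ j then qt (j - 0) (n + stdE 0) else 0)
        + (∑ i ∈ univ.erase 0, (1 : ℝ) * (if 1 ≤ j then qt (j - 1) (n + stdE i) else 0))
        - (1 : ℝ) * (if (0:ℕ) ≤ j then qt (j - 0) n else 0)) ?_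
  · have hk := key k
    simp only [one_mul, Nat.zero_le, if_true, Nat.sub_zero] at hk
    by_cases h1 : 1 ≤ k
    · simp only [h1, if_true] at hk ⊢
      linarith
    · simp only [h1, if_false, Finset.sum_const_zero] at hk ⊢
      linarith
  · intro K
    have tA := termO hqt 1 (n + stdE 0) 0 K (Or.inr (natvec_add hn 0))
    have tB : (fun σ : ℝ => ∑ i ∈ univ.erase 0,
        ((1:ℝ) * (σ ^ (tot (n + stdE i) - (n + stdE i) 0 - ((1:ℕ):ℤ)) * q σ (n + stdE i))
          - ∑ j ∈ range (K + 1),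
              (1:ℝ) * (if 1 ≤ j then qt (j - 1) (n + stdE i) else 0) * σ ^ (-(j : ℤ))))
        =O[atTop] fun σ : ℝ => σ ^ (-(K + 1 : ℤ)) :=
      IsBigO.fun_sum fun i _ => termO hqt 1 (n + stdE i) 1 K (Or.inr (natvec_add hn i))
    have tC := termO hqt 1 n 0 K (Or.inr hn)
    have total := ((tA.add tB).sub tC).neg_left
    refine total.congr' ?_ (EventuallyEq.refl _ _)
    filter_upwards [eventually_gt_atTop (0 : ℝ)] with σ hσ
    beta_reduce
    have hA : tot (n + stdE (0 : Fin d)) - (n + stdE (0 : Fin d)) 0 - ((0:ℕ):ℤ)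
        = tot n - n 0 := by
      rw [tot_add_stdE, apply0_add_eq]; push_cast; ring
    have hC : tot n - n 0 - ((0:ℕ):ℤ) = tot n - n 0 := by push_cast; ring
    have hBfun : ∑ i ∈ univ.erase 0,
        ((1:ℝ) * (σ ^ (tot (n + stdE i) - (n + stdE i) 0 - ((1:ℕ):ℤ)) * q σ (n + stdE i))
          - ∑ j ∈ range (K + 1),
              (1:ℝ) * (if 1 ≤ j then qt (j - 1) (n + stdE i) else 0) * σ ^ (-(j : ℤ)))
        = σ ^ (tot n - n 0) * (∑ i ∈ univ.erase 0, q σ (n + stdE i))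
          - ∑ j ∈ range (K + 1), ∑ i ∈ univ.erase 0,
              (1:ℝ) * (if 1 ≤ j then qt (j - 1) (n + stdE i) else 0) * σ ^ (-(j : ℤ)) := by
      rw [Finset.sum_sub_distrib, Finset.mul_sum, Finset.sum_comm]
      congr 1
      refine Finset.sum_congr rfl fun i hi => ?_
      have hi0 : i ≠ 0 := (Finset.mem_erase.mp hi).1
      have hEi : tot (n + stdE i) - (n + stdE i) 0 - ((1:ℕ):ℤ) = tot n - n 0 := by
        rw [tot_add_stdE, apply0_add_ne n hi0]; push_cast; ring
      rw [hEi, one_mul]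
    rw [hBfun, hA, hC]
    have hcons : q σ (n + stdE 0) + ∑ i ∈ univ.erase 0, q σ (n + stdE i) = q σ n := by
      rw [← hq.2.2.1 σ hσ n hn]
      exact Finset.add_sum_erase (univ : Finset (Fin d)) (fun i => q σ (n + stdE i))
        (Finset.mem_univ 0)
    have hRHS : ∑ j ∈ range (K + 1),
        ((1 : ℝ) * (if (0:ℕ) ≤ j then qt (j - 0) (n + stdE 0) else 0)
          + (∑ i ∈ univ.erase 0, (1 : ℝ) * (if 1 ≤ j then qt (j - 1) (n + stdE i) else 0))
          - (1 : ℝ) * (if (0:ℕ) ≤ j then qt (j - 0) n else 0)) * σ ^ (-(j : ℤ))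
        = (∑ j ∈ range (K + 1),
            (1 : ℝ) * (if (0:ℕ) ≤ j then qt (j - 0) (n + stdE 0) else 0) * σ ^ (-(j : ℤ)))
          + (∑ j ∈ range (K + 1), ∑ i ∈ univ.erase 0,
              (1 : ℝ) * (if 1 ≤ j then qt (j - 1) (n + stdE i) else 0) * σ ^ (-(j : ℤ)))
          - ∑ j ∈ range (K + 1),
            (1 : ℝ) * (if (0:ℕ) ≤ j then qt (j - 0) n else 0) * σ ^ (-(j : ℤ)) := by
      rw [← Finset.sum_add_distrib, ← Finset.sum_sub_distrib]
      refine Finset.sum_congr rfl fun j _ => ?_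
      rw [sub_mul, add_mul, Finset.sum_mul]
    rw [hRHS]
    linear_combination (-(σ ^ (tot n - n 0))) * hcons

def sh1 {d : ℕ} [NeZero d] (i : Fin d) : ℕ := if i = 0 then 1 else 0
def sh2 {d : ℕ} [NeZero d] (i j : Fin d) : ℕ :=
  (if i = 0 then 1 else 0) + 1 - (if j = 0 then 1 else 0)

lemma recursion_coeff {d : ℕ} [NeZero d] {q : ℝ → (Fin d → ℤ) → ℝ}
    {qt : ℕ → (Fin d → ℤ) → ℝ} {θ : ℝ} {P : Fin d → Fin d → ℝ}
    (hq : IsSamplingFamily θ P q) (hqt : IsExpansionCoeffs q qt)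
    (n : Fin d → ℤ) (hn : IsNatVec n) (hne : n ≠ 0) (k : ℕ) :
    ((tot n : ℝ) - (n 0 : ℝ)) * qt k n
      + ((tot n : ℝ) * ((tot n : ℝ) - 1 + θ)) * (if 1 ≤ k then qt (k - 1) n else 0)
    = (∑ i, (n i : ℝ) * ((n i : ℝ) - 1) *
          (if sh1 i ≤ k then qt (k - sh1 i) (n - stdE i) else 0))
      + (∑ i, ∑ j, (n i : ℝ) * θ * P j i *
          (if sh2 i j ≤ k then qt (k - sh2 i j) (n - stdE i + stdE j) else 0))
      + (tot n : ℝ) * (∑ i ∈ univ.erase 0,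
          (if 1 ≤ k then qt (k - 1) (n + stdE i) else 0)) := by
  have key := coeff_eq_zero (fun kk =>
      ((tot n : ℝ) - (n 0 : ℝ)) * (if (0:ℕ) ≤ kk then qt (kk - 0) n else 0)
        + ((tot n : ℝ) * ((tot n : ℝ) - 1 + θ)) * (if 1 ≤ kk then qt (kk - 1) n else 0)
        - (∑ i, (n i : ℝ) * ((n i : ℝ) - 1) *
            (if sh1 i ≤ kk then qt (kk - sh1 i) (n - stdE i) else 0))
        - (∑ i, ∑ j, (n i : ℝ) * θ * P j i *
            (if sh2 i j ≤ kk then qt (kk - sh2 i j) (n - stdE i + stdE j) else 0))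
        - (∑ i ∈ univ.erase 0, (tot n : ℝ) *
            (if 1 ≤ kk then qt (kk - 1) (n + stdE i) else 0))) ?_
  · have hk := key k
    simp only [Nat.zero_le, if_true, Nat.sub_zero] at hk
    rw [Finset.mul_sum]
    linarith
  · intro K
    have tL0 := termO hqt ((tot n : ℝ) - (n 0 : ℝ)) n 0 K (Or.inr hn)
    have tL1 := termO hqt ((tot n : ℝ) * ((tot n : ℝ) - 1 + θ)) n 1 K (Or.inr hn)
    have tR1 : (fun σ : ℝ => ∑ i : Fin d,
        ((n i : ℝ) * ((n i : ℝ) - 1) *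
            (σ ^ (tot (n - stdE i) - (n - stdE i) 0 - (sh1 i : ℤ)) * q σ (n - stdE i))
          - ∑ kk ∈ range (K + 1), (n i : ℝ) * ((n i : ℝ) - 1) *
              (if sh1 i ≤ kk then qt (kk - sh1 i) (n - stdE i) else 0) * σ ^ (-(kk : ℤ))))
        =O[atTop] fun σ : ℝ => σ ^ (-(K + 1 : ℤ)) :=
      IsBigO.fun_sum fun i _ => termO hqt _ (n - stdE i) (sh1 i) K (by
        rcases eq_or_lt_of_le (hn i) with h | h
        · left
          rw [show (n i : ℝ) = 0 from by exact_mod_cast h.symm]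
          ring
        · exact Or.inr (natvec_sub hn h))
    have tR2 : (fun σ : ℝ => ∑ i : Fin d, ∑ j : Fin d,
        ((n i : ℝ) * θ * P j i *
            (σ ^ (tot (n - stdE i + stdE j) - (n - stdE i + stdE j) 0 - (sh2 i j : ℤ))
              * q σ (n - stdE i + stdE j))
          - ∑ kk ∈ range (K + 1), (n i : ℝ) * θ * P j i *
              (if sh2 i j ≤ kk then qt (kk - sh2 i j) (n - stdE i + stdE j) else 0)
              * σ ^ (-(kk : ℤ))))
        =O[atTop] fun σ : ℝ => σ ^ (-(K + 1 : ℤ)) := by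
      refine IsBigO.fun_sum fun i _ => ?_
      have hsum2 : (fun σ : ℝ => ∑ j : Fin d,
          ((n i : ℝ) * θ * P j i *
              (σ ^ (tot (n - stdE i + stdE j) - (n - stdE i + stdE j) 0 - (sh2 i j : ℤ))
                * q σ (n - stdE i + stdE j))
            - ∑ kk ∈ range (K + 1), (n i : ℝ) * θ * P j i *
                (if sh2 i j ≤ kk then qt (kk - sh2 i j) (n - stdE i + stdE j) else 0)
                * σ ^ (-(kk : ℤ))))
          =O[atTop] fun σ : ℝ => σ ^ (-(K + 1 : ℤ)) :=
        IsBigO.fun_sum fun j _ => termO hqt _ (n - stdE i + stdE j) (sh2 i j) K (by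
          rcases eq_or_lt_of_le (hn i) with h | h
          · left
            rw [show (n i : ℝ) = 0 from by exact_mod_cast h.symm]
            ring
          · exact Or.inr (natvec_sub_add hn h j))
      exact hsum2
    have tR3 : (fun σ : ℝ => ∑ i ∈ univ.erase 0,
        ((tot n : ℝ) *
            (σ ^ (tot (n + stdE i) - (n + stdE i) 0 - ((1:ℕ) : ℤ)) * q σ (n + stdE i))
          - ∑ kk ∈ range (K + 1), (tot n : ℝ) *
              (if 1 ≤ kk then qt (kk - 1) (n + stdE i) else 0) * σ ^ (-(kk : ℤ))))
        =O[atTop] fun σ : ℝ => σ ^ (-(K + 1 : ℤ)) :=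
      IsBigO.fun_sum fun i _ => termO hqt _ (n + stdE i) 1 K (Or.inr (natvec_add hn i))
    have total := ((((tL0.add tL1).sub tR1).sub tR2).sub tR3).neg_left
    refine total.congr' ?_ (EventuallyEq.refl _ _)
    filter_upwards [eventually_gt_atTop (0 : ℝ)] with σ hσ
    beta_reduce
    have hσ0 : σ ≠ 0 := ne_of_gt hσ
    have hE0 : tot n - n 0 - ((0:ℕ) : ℤ) = tot n - n 0 := by push_cast; ring
    have hE1 : tot n - n 0 - ((1:ℕ) : ℤ) = tot n - n 0 - 1 := by push_cast; ring
    have hsig : σ ^ (tot n - n 0) = σ ^ (tot n - n 0 - 1) * σ := by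
      rw [← zpow_add_one₀ hσ0, sub_add_cancel]
    have hR1 : ∀ i : Fin d, tot (n - stdE i) - (n - stdE i) 0 - (sh1 i : ℤ)
        = tot n - n 0 - 1 := by
      intro i
      by_cases hi : i = 0
      · subst hi
        rw [tot_sub_stdE, apply0_sub_eq, show sh1 (0 : Fin d) = 1 from if_pos rfl]
        push_cast; ring
      · rw [tot_sub_stdE, apply0_sub_ne n hi, show sh1 i = 0 from if_neg hi]
        push_cast; ring
    have hR2 : ∀ i j : Fin d,
        tot (n - stdE i + stdE j) - (n - stdE i + stdE j) 0 - (sh2 i j : ℤ)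
        = tot n - n 0 - 1 := by
      intro i j
      have htot : tot (n - stdE i + stdE j) = tot n := by
        rw [tot_add_stdE, tot_sub_stdE]; ring
      by_cases hi : i = 0 <;> by_cases hj : j = 0
      · subst hi; subst hj
        rw [htot, apply0_add_eq, apply0_sub_eq,
          show sh2 (0 : Fin d) (0 : Fin d) = 1 from by simp [sh2]]
        push_cast; ring
      · subst hi
        rw [htot, apply0_add_ne _ hj, apply0_sub_eq,
          show sh2 (0 : Fin d) j = 2 from by simp [sh2, hj]]
        push_cast; ring
      · subst hj
        rw [htot, apply0_add_eq, apply0_sub_ne n hi,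
          show sh2 i (0 : Fin d) = 0 from by simp [sh2, hi]]
        push_cast; ring
      · rw [htot, apply0_add_ne _ hj, apply0_sub_ne n hi,
          show sh2 i j = 1 from by simp [sh2, hi, hj]]
        push_cast; ring
    have hR3 : ∀ i : Fin d, i ≠ 0 → tot (n + stdE i) - (n + stdE i) 0 - ((1:ℕ) : ℤ)
        = tot n - n 0 := by
      intro i hi
      rw [tot_add_stdE, apply0_add_ne n hi]; push_cast; ring
    -- rewrite the function parts of the three sums
    have hS1 : ∑ i : Fin d,
        ((n i : ℝ) * ((n i : ℝ) - 1) *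
            (σ ^ (tot (n - stdE i) - (n - stdE i) 0 - (sh1 i : ℤ)) * q σ (n - stdE i))
          - ∑ kk ∈ range (K + 1), (n i : ℝ) * ((n i : ℝ) - 1) *
              (if sh1 i ≤ kk then qt (kk - sh1 i) (n - stdE i) else 0) * σ ^ (-(kk : ℤ)))
        = σ ^ (tot n - n 0 - 1) *
            (∑ i, (n i : ℝ) * ((n i : ℝ) - 1) * q σ (n - stdE i))
          - ∑ kk ∈ range (K + 1), ∑ i : Fin d, (n i : ℝ) * ((n i : ℝ) - 1) *
              (if sh1 i ≤ kk then qt (kk - sh1 i) (n - stdE i) else 0) * σ ^ (-(kk : ℤ)) := by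
      rw [Finset.sum_sub_distrib, Finset.sum_comm, Finset.mul_sum]
      congr 1
      refine Finset.sum_congr rfl fun i _ => ?_
      rw [hR1 i]; ring
    have hS2 : ∑ i : Fin d, ∑ j : Fin d,
        ((n i : ℝ) * θ * P j i *
            (σ ^ (tot (n - stdE i + stdE j) - (n - stdE i + stdE j) 0 - (sh2 i j : ℤ))
              * q σ (n - stdE i + stdE j))
          - ∑ kk ∈ range (K + 1), (n i : ℝ) * θ * P j i *
              (if sh2 i j ≤ kk then qt (kk - sh2 i j) (n - stdE i + stdE j) else 0)
              * σ ^ (-(kk : ℤ)))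
        = σ ^ (tot n - n 0 - 1) *
            (∑ i, ∑ j, (n i : ℝ) * θ * P j i * q σ (n - stdE i + stdE j))
          - ∑ kk ∈ range (K + 1), ∑ i : Fin d, ∑ j : Fin d, (n i : ℝ) * θ * P j i *
              (if sh2 i j ≤ kk then qt (kk - sh2 i j) (n - stdE i + stdE j) else 0)
              * σ ^ (-(kk : ℤ)) := by
      have e1 : ∀ i : Fin d, ∑ j : Fin d,
          ((n i : ℝ) * θ * P j i *
              (σ ^ (tot (n - stdE i + stdE j) - (n - stdE i + stdE j) 0 - (sh2 i j : ℤ))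
                * q σ (n - stdE i + stdE j))
            - ∑ kk ∈ range (K + 1), (n i : ℝ) * θ * P j i *
                (if sh2 i j ≤ kk then qt (kk - sh2 i j) (n - stdE i + stdE j) else 0)
                * σ ^ (-(kk : ℤ)))
          = (∑ j : Fin d, σ ^ (tot n - n 0 - 1) *
                ((n i : ℝ) * θ * P j i * q σ (n - stdE i + stdE j)))
            - ∑ kk ∈ range (K + 1), ∑ j : Fin d, (n i : ℝ) * θ * P j i *
                (if sh2 i j ≤ kk then qt (kk - sh2 i j) (n - stdE i + stdE j) else 0)
                * σ ^ (-(kk : ℤ)) := by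
        intro i
        rw [Finset.sum_sub_distrib, Finset.sum_comm]
        congr 1
        refine Finset.sum_congr rfl fun j _ => ?_
        rw [hR2 i j]; ring
      rw [Finset.sum_congr rfl fun i _ => e1 i, Finset.sum_sub_distrib]
      congr 1
      · rw [Finset.mul_sum]
        refine Finset.sum_congr rfl fun i _ => ?_
        rw [Finset.mul_sum]
      · exact Finset.sum_comm
    have hS3 : ∑ i ∈ univ.erase 0,
        ((tot n : ℝ) *
            (σ ^ (tot (n + stdE i) - (n + stdE i) 0 - ((1:ℕ) : ℤ)) * q σ (n + stdE i))
          - ∑ kk ∈ range (K + 1), (tot n : ℝ) *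
              (if 1 ≤ kk then qt (kk - 1) (n + stdE i) else 0) * σ ^ (-(kk : ℤ)))
        = σ ^ (tot n - n 0 - 1) *
            (σ * ((tot n : ℝ) * ∑ i ∈ univ.erase 0, q σ (n + stdE i)))
          - ∑ kk ∈ range (K + 1), ∑ i ∈ univ.erase 0, (tot n : ℝ) *
              (if 1 ≤ kk then qt (kk - 1) (n + stdE i) else 0) * σ ^ (-(kk : ℤ)) := by
      rw [Finset.sum_sub_distrib, Finset.sum_comm]
      congr 1
      rw [Finset.mul_sum, Finset.mul_sum, Finset.mul_sum]
      refine Finset.sum_congr rfl fun i hi => ?_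
      rw [hR3 i (Finset.mem_erase.mp hi).1, hsig]; ring
    rw [hS1, hS2, hS3, hE0, hE1, hsig]
    have hRHS : ∑ kk ∈ range (K + 1),
        (((tot n : ℝ) - (n 0 : ℝ)) * (if (0:ℕ) ≤ kk then qt (kk - 0) n else 0)
          + ((tot n : ℝ) * ((tot n : ℝ) - 1 + θ)) * (if 1 ≤ kk then qt (kk - 1) n else 0)
          - (∑ i, (n i : ℝ) * ((n i : ℝ) - 1) *
              (if sh1 i ≤ kk then qt (kk - sh1 i) (n - stdE i) else 0))
          - (∑ i, ∑ j, (n i : ℝ) * θ * P j i *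
              (if sh2 i j ≤ kk then qt (kk - sh2 i j) (n - stdE i + stdE j) else 0))
          - (∑ i ∈ univ.erase 0, (tot n : ℝ) *
              (if 1 ≤ kk then qt (kk - 1) (n + stdE i) else 0))) * σ ^ (-(kk : ℤ))
        = (∑ kk ∈ range (K + 1),
              ((tot n : ℝ) - (n 0 : ℝ)) * (if (0:ℕ) ≤ kk then qt (kk - 0) n else 0)
                * σ ^ (-(kk : ℤ)))
          + (∑ kk ∈ range (K + 1),
              ((tot n : ℝ) * ((tot n : ℝ) - 1 + θ)) * (if 1 ≤ kk then qt (kk - 1) n else 0)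
                * σ ^ (-(kk : ℤ)))
          - (∑ kk ∈ range (K + 1), ∑ i : Fin d, (n i : ℝ) * ((n i : ℝ) - 1) *
              (if sh1 i ≤ kk then qt (kk - sh1 i) (n - stdE i) else 0) * σ ^ (-(kk : ℤ)))
          - (∑ kk ∈ range (K + 1), ∑ i : Fin d, ∑ j : Fin d, (n i : ℝ) * θ * P j i *
              (if sh2 i j ≤ kk then qt (kk - sh2 i j) (n - stdE i + stdE j) else 0)
              * σ ^ (-(kk : ℤ)))
          - ∑ kk ∈ range (K + 1), ∑ i ∈ univ.erase 0, (tot n : ℝ) *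
              (if 1 ≤ kk then qt (kk - 1) (n + stdE i) else 0) * σ ^ (-(kk : ℤ)) := by
      rw [← Finset.sum_add_distrib, ← Finset.sum_sub_distrib, ← Finset.sum_sub_distrib,
        ← Finset.sum_sub_distrib]
      refine Finset.sum_congr rfl fun kk _ => ?_
      simp only [sub_mul, add_mul, Finset.sum_mul]
    rw [hRHS]
    have hrec := hq.2.2.2 σ hσ n hn hne
    linear_combination (-(σ ^ (tot n - n 0 - 1))) * hrec
/-- **Theorem 4.3(IV)** (recursion, general): for every `n ∈ ℕ^d` with `‖n‖ > 1`. -/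
theorem recursion_general {d : ℕ} (θ : ℝ) (hθ : 0 < θ)
    (P : Fin (d + 2) → Fin (d + 2) → ℝ)
    (hPnonneg : ∀ i j, 0 ≤ P i j) (hProw : ∀ i, ∑ j, P i j = 1)
    (q : ℝ → (Fin (d + 2) → ℤ) → ℝ) (qt : ℕ → (Fin (d + 2) → ℤ) → ℝ)
    (hq : IsSamplingFamily θ P q) (hqt : IsExpansionCoeffs q qt)
    (k : ℕ) (n : Fin (d + 2) → ℤ) (hn : IsNatVec n) (hsize : 1 < tot n) :
    ((tot n : ℝ) - (n 0 : ℝ)) * qt k n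
      = (∑ i ∈ univ.erase 0,
          (n i : ℝ) * ((n i : ℝ) - 1 + θ * P 0 i) * qt k (n - stdE i))
        + (if 1 ≤ k then
            ((n 0 : ℝ) * ((n 0 : ℝ) - 1 + θ * P 0 0)
                - (tot n : ℝ) * ((tot n : ℝ) - 1 + θ)) * qt (k - 1) n
            + (∑ i ∈ univ.erase 0, ∑ j ∈ univ.erase 0,
                (n i : ℝ) * θ * (P j i - P 0 i) * qt (k - 1) (n - stdE i + stdE j))
            + (tot n : ℝ) * ∑ i ∈ univ.erase 0, qt (k - 1) (n + stdE i)
          else 0)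
        + (if 2 ≤ k then
            ∑ j ∈ univ.erase 0,
              (n 0 : ℝ) * ((n 0 : ℝ) - 1 + θ * P j 0) * qt (k - 2) (n - stdE 0 + stdE j)
          else 0) := by
  have hne : n ≠ 0 := by
    intro h
    rw [h] at hsize
    simp [tot] at hsize
  have hd := recursion_coeff hq hqt n hn hne k
  -- split the single sum at i = 0
  have split1 : (∑ i, (n i : ℝ) * ((n i : ℝ) - 1) *
        (if sh1 i ≤ k then qt (k - sh1 i) (n - stdE i) else 0))
      = (n 0 : ℝ) * ((n 0 : ℝ) - 1) * (if 1 ≤ k then qt (k - 1) (n - stdE 0) else 0)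
        + ∑ i ∈ univ.erase 0, (n i : ℝ) * ((n i : ℝ) - 1) * qt k (n - stdE i) := by
    rw [← Finset.add_sum_erase univ
        (fun i => (n i : ℝ) * ((n i : ℝ) - 1) *
          (if sh1 i ≤ k then qt (k - sh1 i) (n - stdE i) else 0))
        (Finset.mem_univ 0),
      show sh1 (0 : Fin (d+2)) = 1 from if_pos rfl]
    congr 1
    refine Finset.sum_congr rfl fun i hi => ?_
    rw [show sh1 i = 0 from if_neg (Finset.mem_erase.mp hi).1]
    simp
  -- split the double sum at i = 0 and j = 0
  have split2 : (∑ i, ∑ j, (n i : ℝ) * θ * P j i *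
        (if sh2 i j ≤ k then qt (k - sh2 i j) (n - stdE i + stdE j) else 0))
      = (n 0 : ℝ) * θ * P 0 0 * (if 1 ≤ k then qt (k - 1) n else 0)
        + (∑ j ∈ univ.erase 0, (n 0 : ℝ) * θ * P j 0 *
            (if 2 ≤ k then qt (k - 2) (n - stdE 0 + stdE j) else 0))
        + ((∑ i ∈ univ.erase 0, (n i : ℝ) * θ * P 0 i * qt k (n - stdE i + stdE 0))
        + ∑ i ∈ univ.erase 0, ∑ j ∈ univ.erase 0, (n i : ℝ) * θ * P j i *
            (if 1 ≤ k then qt (k - 1) (n - stdE i + stdE j) else 0)) := by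
    rw [← Finset.add_sum_erase univ
        (fun i => ∑ j, (n i : ℝ) * θ * P j i *
          (if sh2 i j ≤ k then qt (k - sh2 i j) (n - stdE i + stdE j) else 0))
        (Finset.mem_univ 0)]
    congr 1
    · -- the i = 0 row
      rw [← Finset.add_sum_erase univ
          (fun j => (n 0 : ℝ) * θ * P j 0 *
            (if sh2 0 j ≤ k then qt (k - sh2 0 j) (n - stdE 0 + stdE j) else 0))
          (Finset.mem_univ 0),
        show sh2 (0 : Fin (d+2)) (0 : Fin (d+2)) = 1 from by simp [sh2],
        sub_add_cancel]
      congr 1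
      refine Finset.sum_congr rfl fun j hj => ?_
      rw [show sh2 (0 : Fin (d+2)) j = 2 from by
        simp [sh2, (Finset.mem_erase.mp hj).1]]
    · -- the i ≠ 0 rows
      rw [← Finset.sum_add_distrib]
      refine Finset.sum_congr rfl fun i hi => ?_
      have hi0 : i ≠ 0 := (Finset.mem_erase.mp hi).1
      rw [← Finset.add_sum_erase univ
          (fun j => (n i : ℝ) * θ * P j i *
            (if sh2 i j ≤ k then qt (k - sh2 i j) (n - stdE i + stdE j) else 0))
          (Finset.mem_univ 0),
        show sh2 i (0 : Fin (d+2)) = 0 from by simp [sh2, hi0]]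
      simp only [Nat.zero_le, if_true, Nat.sub_zero]
      congr 1
      refine Finset.sum_congr rfl fun j hj => ?_
      rw [show sh2 i j = 1 from by simp [sh2, hi0, (Finset.mem_erase.mp hj).1]]
  -- consistency substitution for the (i ≠ 0, j = 0) block
  have hcon1 : (∑ i ∈ univ.erase 0, (n i : ℝ) * θ * P 0 i * qt k (n - stdE i + stdE 0))
      = (∑ i ∈ univ.erase 0, (n i : ℝ) * θ * P 0 i * qt k (n - stdE i))
        - ∑ i ∈ univ.erase 0, (n i : ℝ) * θ * P 0 i *
            (if 1 ≤ k then ∑ j ∈ univ.erase 0, qt (k - 1) (n - stdE i + stdE j) else 0) := by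
    rw [← Finset.sum_sub_distrib]
    refine Finset.sum_congr rfl fun i _ => ?_
    rcases eq_or_lt_of_le (hn i) with h | h
    · rw [show (n i : ℝ) = 0 from by exact_mod_cast h.symm]
      ring
    · have hc := consistency_coeff hq hqt (n - stdE i) (natvec_sub hn h) k
      have h2 : qt k (n - stdE i + stdE 0)
          = qt k (n - stdE i)
            - (if 1 ≤ k then ∑ j ∈ univ.erase 0, qt (k - 1) (n - stdE i + stdE j)
               else 0) := by linarith
      rw [h2]
      ring
  -- consistency substitution for the i = 0 single-sum term
  have hcon2 : (n 0 : ℝ) * ((n 0 : ℝ) - 1) * (if 1 ≤ k then qt (k - 1) (n - stdE 0) else 0)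
      = (n 0 : ℝ) * ((n 0 : ℝ) - 1) * (if 1 ≤ k then qt (k - 1) n else 0)
        + (n 0 : ℝ) * ((n 0 : ℝ) - 1) *
            (if 2 ≤ k then ∑ j ∈ univ.erase 0, qt (k - 2) (n - stdE 0 + stdE j) else 0) := by
    rcases Nat.lt_or_ge k 1 with h | h
    · have h1 : ¬ 1 ≤ k := by omega
      have h2 : ¬ 2 ≤ k := by omega
      simp [h1, h2]
    · rcases eq_or_lt_of_le (hn 0) with h0 | h0
      · rw [show (n 0 : ℝ) = 0 from by exact_mod_cast h0.symm]
        ring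
      · have hc := consistency_coeff hq hqt (n - stdE 0) (natvec_sub hn h0) (k - 1)
        rw [sub_add_cancel] at hc
        rcases eq_or_lt_of_le h with h1 | h1
        · have hk1 : k = 1 := h1.symm
          subst hk1
          have h2 : ¬ (2 : ℕ) ≤ 1 := by omega
          simp only [show ¬ (1:ℕ) ≤ 1 - 1 from by omega, if_false, add_zero] at hc
          simp only [if_pos (le_refl 1), h2, if_false, mul_zero, add_zero]
          rw [← hc]
        · have hk2 : 2 ≤ k := by omega
          have h2 : 1 ≤ k - 1 := by omega
          rw [show k - 1 - 1 = k - 2 from by omega] at hc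
          simp only [if_pos h, if_pos hk2, if_pos h2] at hc ⊢
          rw [← hc]
          ring
  rw [split1, split2, hcon1, hcon2] at hd
  -- expand the composite coefficient sums in the goal
  have hE1 : (∑ i ∈ univ.erase 0, (n i : ℝ) * ((n i : ℝ) - 1 + θ * P 0 i) * qt k (n - stdE i))
      = (∑ i ∈ univ.erase 0, (n i : ℝ) * ((n i : ℝ) - 1) * qt k (n - stdE i))
        + ∑ i ∈ univ.erase 0, (n i : ℝ) * θ * P 0 i * qt k (n - stdE i) := by
    rw [← Finset.sum_add_distrib]
    exact Finset.sum_congr rfl fun i _ => by ring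
  rw [hE1]
  by_cases hk1 : 1 ≤ k
  · have hB : (∑ i ∈ univ.erase 0, ∑ j ∈ univ.erase 0,
          (n i : ℝ) * θ * (P j i - P 0 i) * qt (k - 1) (n - stdE i + stdE j))
        = (∑ i ∈ univ.erase 0, ∑ j ∈ univ.erase 0,
            (n i : ℝ) * θ * P j i * qt (k - 1) (n - stdE i + stdE j))
          - ∑ i ∈ univ.erase 0, (n i : ℝ) * θ * P 0 i *
              (∑ j ∈ univ.erase 0, qt (k - 1) (n - stdE i + stdE j)) := by
      rw [← Finset.sum_sub_distrib]
      refine Finset.sum_congr rfl fun i _ => ?_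
      rw [Finset.mul_sum, ← Finset.sum_sub_distrib]
      exact Finset.sum_congr rfl fun j _ => by ring
    by_cases hk2 : 2 ≤ k
    · have hC2 : (∑ j ∈ univ.erase 0,
            (n 0 : ℝ) * ((n 0 : ℝ) - 1 + θ * P j 0) * qt (k - 2) (n - stdE 0 + stdE j))
          = (n 0 : ℝ) * ((n 0 : ℝ) - 1) *
              (∑ j ∈ univ.erase 0, qt (k - 2) (n - stdE 0 + stdE j))
            + ∑ j ∈ univ.erase 0, (n 0 : ℝ) * θ * P j 0 * qt (k - 2) (n - stdE 0 + stdE j) := by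
        rw [Finset.mul_sum, ← Finset.sum_add_distrib]
        exact Finset.sum_congr rfl fun j _ => by ring
      simp only [if_pos hk1, if_pos hk2] at hd ⊢
      rw [hB, hC2]
      linear_combination hd
    · simp only [if_pos hk1, if_neg hk2, mul_zero, add_zero, zero_mul,
        Finset.sum_const_zero] at hd ⊢
      rw [hB]
      linear_combination hd
  · simp only [if_neg hk1, if_neg (show ¬ 2 ≤ k from by omega), mul_zero, zero_mul,
      add_zero, Finset.sum_const_zero, sub_zero] at hd ⊢
    linear_combination hd
end
end

section
/- Assume parent-independent mutation: P_{ij} = Q_j for all i, j, where Q_1,…,Q_d > 0 and ∑_{j=1}^d Q_j = 1. Let q^{(σ)} be a family of sampling probabilities and let q̃_k (k ∈ ℕ) be a family of asymptotic-expansion coefficients for q^{(σ)}. Then for every k ∈ ℕ and every integer n_1 > 1: q̃_k(n_1 e_1) = q̃_k((n_1−1) e_1) − 1_{k≥1} (n_1 − 2 + θ) q̃_{k−1}((n_1−1) e_1) + 1_{k≥1} (n_1 − 2 + θ Q_1) q̃_{k−1}((n_1−2) e_1). -/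
open Finset Filter Asymptotics

noncomputable section

private lemma vanish : ∀ (N : ℕ) (b : ℕ → ℝ),
    ((fun σ : ℝ => ∑ j ∈ range N, b j * σ ^ (-(j : ℤ))) =O[atTop]
      fun σ : ℝ => σ ^ (-(N : ℤ))) →
    ∀ j < N, b j = 0 := by
  intro N
  induction N with
  | zero => intro b _ j hj; omega
  | succ N ih =>
    intro b hb j hj
    have hb0 : b 0 = 0 := by
      have hten : Filter.Tendsto (fun σ : ℝ => ∑ j ∈ range (N + 1), b j * σ ^ (-(j : ℤ)))
          atTop (nhds (∑ j ∈ range (N + 1), if j = 0 then b 0 else 0)) := by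
        apply tendsto_finset_sum
        intro i _
        rcases Nat.eq_zero_or_pos i with h0 | hpos
        · subst h0; simp
        · have h := (tendsto_zpow_atTop_zero (by omega : (-(i : ℤ)) < 0)).const_mul (b i)
          rw [mul_zero] at h
          simpa [if_neg (Nat.pos_iff_ne_zero.mp hpos)] using h
      have hzero : Filter.Tendsto (fun σ : ℝ => ∑ j ∈ range (N + 1), b j * σ ^ (-(j : ℤ)))
          atTop (nhds 0) :=
        hb.trans_tendsto (tendsto_zpow_atTop_zero (by push_cast; omega))
      have h := tendsto_nhds_unique hten hzero
      simpa using h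
    cases j with
    | zero => exact hb0
    | succ j' =>
      have hshift : (fun σ : ℝ => ∑ i ∈ range N, b (i + 1) * σ ^ (-(i : ℤ)))
          =O[atTop] fun σ : ℝ => σ ^ (-(N : ℤ)) := by
        have hmul := (isBigO_refl (fun σ : ℝ => σ) atTop).mul hb
        refine hmul.congr' ?_ ?_
        · filter_upwards [eventually_ne_atTop (0 : ℝ)] with σ hσ
          rw [Finset.sum_range_succ' (fun i => b i * σ ^ (-(i : ℤ))) N, hb0, mul_add,
            Finset.mul_sum]
          simp only [zero_mul, mul_zero, add_zero]
          refine Finset.sum_congr rfl fun i _ => ?_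
          have hcast : (-((i + 1 : ℕ) : ℤ)) = -(i : ℤ) - 1 := by push_cast; ring
          have h2 : σ ^ (-(i : ℤ)) = σ * σ ^ (-(i : ℤ) - 1) := by
            rw [mul_comm, ← zpow_add_one₀ hσ]; norm_num
          rw [hcast, h2]; ring
        · filter_upwards [eventually_ne_atTop (0 : ℝ)] with σ hσ
          have hcast : (-((N + 1 : ℕ) : ℤ)) = -(N : ℤ) - 1 := by push_cast; ring
          have h2 : σ ^ (-(N : ℤ)) = σ * σ ^ (-(N : ℤ) - 1) := by
            rw [mul_comm, ← zpow_add_one₀ hσ]; norm_num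
          rw [hcast, h2]
      exact ih (fun i => b (i + 1)) hshift j' (by omega)

private lemma coeff_match (f g : ℝ → ℝ) (A B : ℕ → ℝ)
    (hf : ∀ K : ℕ, (fun σ : ℝ => f σ - ∑ j ∈ range (K + 1), A j * σ ^ (-(j : ℤ)))
      =O[atTop] fun σ : ℝ => σ ^ (-(K + 1 : ℤ)))
    (hg : ∀ K : ℕ, (fun σ : ℝ => g σ - ∑ j ∈ range (K + 1), B j * σ ^ (-(j : ℤ)))
      =O[atTop] fun σ : ℝ => σ ^ (-(K + 1 : ℤ)))
    (hid : ∀ᶠ σ : ℝ in atTop, σ * f σ = g σ) :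
    A 0 = 0 ∧ ∀ j : ℕ, A (j + 1) = B j := by
  classical
  set b : ℕ → ℝ := fun j => if j = 0 then A 0 else A j - B (j - 1) with hbdef
  have key : ∀ K : ℕ, (fun σ : ℝ => ∑ i ∈ range (K + 2), b i * σ ^ (-(i : ℤ)))
      =O[atTop] fun σ : ℝ => σ ^ (-((K + 2 : ℕ) : ℤ)) := by
    intro K
    have h1 : (fun σ : ℝ => -(f σ - ∑ j ∈ range (K + 1 + 1), A j * σ ^ (-(j : ℤ))))
        =O[atTop] fun σ : ℝ => σ ^ (-((K + 2 : ℕ) : ℤ)) := by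
      have h := (hf (K + 1)).neg_left
      refine h.congr' EventuallyEq.rfl ?_
      filter_upwards with σ
      norm_cast
    have h2 : (fun σ : ℝ => σ ^ (-(1 : ℤ)) * (g σ - ∑ j ∈ range (K + 1), B j * σ ^ (-(j : ℤ))))
        =O[atTop] fun σ : ℝ => σ ^ (-((K + 2 : ℕ) : ℤ)) := by
      have h := (isBigO_refl (fun σ : ℝ => σ ^ (-(1 : ℤ))) atTop).mul (hg K)
      refine h.congr' EventuallyEq.rfl ?_
      filter_upwards [eventually_ne_atTop (0 : ℝ)] with σ hσ
      rw [← zpow_add₀ hσ]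
      congr 1
      push_cast; ring
    have h12 := h1.add h2
    refine h12.congr' ?_ EventuallyEq.rfl
    filter_upwards [eventually_gt_atTop (0 : ℝ), hid] with σ hσ hσid
    have hσ0 : σ ≠ 0 := ne_of_gt hσ
    have hfσ : σ ^ (-(1 : ℤ)) * g σ = f σ := by
      rw [← hσid, zpow_neg, zpow_one]
      field_simp
    rw [Finset.sum_range_succ' (fun i => b i * σ ^ (-(i : ℤ))) (K + 1),
      Finset.sum_range_succ' (fun j => A j * σ ^ (-(j : ℤ))) (K + 1),
      mul_sub, hfσ, Finset.mul_sum]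
    have hterm : ∀ i ∈ range (K + 1),
        b (i + 1) * σ ^ (-((i + 1 : ℕ) : ℤ))
          = A (i + 1) * σ ^ (-((i + 1 : ℕ) : ℤ)) - σ ^ (-(1 : ℤ)) * (B i * σ ^ (-(i : ℤ))) := by
      intro i _
      have hz : σ ^ (-(1 : ℤ)) * σ ^ (-(i : ℤ)) = σ ^ (-((i + 1 : ℕ) : ℤ)) := by
        rw [← zpow_add₀ hσ0]; congr 1; push_cast; ring
      have hbv : b (i + 1) = A (i + 1) - B i := by simp [hbdef]
      rw [hbv, ← hz]; ring
    rw [Finset.sum_congr rfl hterm, Finset.sum_sub_distrib]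
    have hb0 : b 0 = A 0 := by simp [hbdef]
    rw [hb0]
    ring
  have hall : ∀ j : ℕ, b j = 0 := fun j => vanish (j + 2) b (key j) j (by omega)
  constructor
  · have h := hall 0; simpa [hbdef] using h
  · intro j
    have h := hall (j + 1)
    simp [hbdef] at h
    linarith

/-- **Corollary 4.4(III)** (PIM; recursion, fit allele only): under parent-independent
mutation `P_{ij} = Q_j`, for `n_1 > 1`,
`q̃_k(n_1 e_1) = q̃_k((n_1-1)e_1) - 1_{k≥1}(n_1-2+θ) q̃_{k-1}((n_1-1)e_1)
+ 1_{k≥1}(n_1-2+θQ_1) q̃_{k-1}((n_1-2)e_1)`. -/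
theorem recursion_fit_PIM {d : ℕ} (θ : ℝ) (hθ : 0 < θ)
    (P : Fin (d + 2) → Fin (d + 2) → ℝ)
    (hPnonneg : ∀ i j, 0 ≤ P i j) (hProw : ∀ i, ∑ j, P i j = 1)
    (Q : Fin (d + 2) → ℝ) (hQpos : ∀ j, 0 < Q j) (hQsum : ∑ j, Q j = 1)
    (hPIM : ∀ i j, P i j = Q j)
    (q : ℝ → (Fin (d + 2) → ℤ) → ℝ) (qt : ℕ → (Fin (d + 2) → ℤ) → ℝ)
    (hq : IsSamplingFamily θ P q) (hqt : IsExpansionCoeffs q qt)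
    (k : ℕ) (n₁ : ℤ) (hn₁ : 1 < n₁) :
    qt k (n₁ • stdE 0)
      = qt k ((n₁ - 1) • stdE 0)
        - (if 1 ≤ k then ((n₁ : ℝ) - 2 + θ) * qt (k - 1) ((n₁ - 1) • stdE 0) else 0)
        + (if 1 ≤ k then ((n₁ : ℝ) - 2 + θ * Q 0) * qt (k - 1) ((n₁ - 2) • stdE 0) else 0) := by
  obtain ⟨hq1, hq0, hqc, hqr⟩ := hq
  obtain ⟨-, -, -, hqe⟩ := hqt
  set E : Fin (d + 2) → ℤ := stdE 0 with hE
  have hEapp : ∀ (c : ℤ) (i : Fin (d + 2)), (c • E) i = if i = 0 then c else 0 := by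
    intro c i
    simp [hE, stdE, Pi.smul_apply, smul_eq_mul, mul_ite]
  have htot : ∀ c : ℤ, tot (c • E) = c := by
    intro c
    simp [tot, hEapp]
  have hnat : ∀ c : ℤ, 0 ≤ c → IsNatVec (c • E) := by
    intro c hc i
    rw [hEapp]
    split <;> simp [hc]
  have haddE : ∀ c : ℤ, c • E + E = (c + 1) • E := by
    intro c; rw [add_smul, one_smul]
  have hsubE : ∀ c : ℤ, c • E - E = (c - 1) • E := by
    intro c; rw [sub_smul, one_smul]
  have hp3 : (n₁ - 1) • E - stdE 0 = (n₁ - 2) • E := by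
    rw [← hE, hsubE]; congr 1; ring
  have hp1 : (n₁ - 1) • E + stdE 0 = n₁ • E := by
    rw [← hE, haddE]; congr 1; ring
  have hnatn : IsNatVec ((n₁ - 1) • E) := hnat _ (by omega)
  have hnatn2 : IsNatVec ((n₁ - 2) • E) := hnat _ (by omega)
  -- Step 1: exact identity from the sampling recursion
  have step1 : ∀ σ : ℝ, 0 < σ →
      σ * q σ (n₁ • E) - σ * q σ ((n₁ - 1) • E)
        = ((n₁ : ℝ) - 2 + θ * Q 0) * q σ ((n₁ - 2) • E)
          - ((n₁ : ℝ) - 2 + θ) * q σ ((n₁ - 1) • E) := by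
    intro σ hσ
    have hne : (n₁ - 1) • E ≠ 0 := by
      intro h
      have h0 := congrFun h 0
      rw [hEapp] at h0
      simp at h0
      omega
    have hrec := hqr σ hσ ((n₁ - 1) • E) hnatn hne
    rw [htot] at hrec
    have h00 : ((n₁ - 1) • E) 0 = n₁ - 1 := by rw [hEapp]; simp
    rw [h00] at hrec
    have hs1 : (∑ i, ((((n₁ - 1) • E) i : ℤ) : ℝ) * (((((n₁ - 1) • E) i : ℤ) : ℝ) - 1)
          * q σ ((n₁ - 1) • E - stdE i))
        = ((n₁ : ℝ) - 1) * ((n₁ : ℝ) - 2) * q σ ((n₁ - 2) • E) := by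
      rw [Finset.sum_eq_single 0]
      · rw [hEapp, if_pos rfl, hp3]
        push_cast; ring
      · intro i _ hi
        rw [hEapp, if_neg hi]
        simp
      · intro h; exact absurd (Finset.mem_univ 0) h
    have hs2 : (∑ i, ∑ j, ((((n₁ - 1) • E) i : ℤ) : ℝ) * θ * P j i
          * q σ ((n₁ - 1) • E - stdE i + stdE j))
        = ((n₁ : ℝ) - 1) * θ * Q 0 * q σ ((n₁ - 2) • E) := by
      rw [Finset.sum_eq_single 0]
      · simp only [h00, hp3]
        have hsum : (∑ j, (((n₁ - 1 : ℤ)) : ℝ) * θ * P j 0 * q σ ((n₁ - 2) • E + stdE j))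
            = ((n₁ : ℝ) - 1) * θ * Q 0 * ∑ j, q σ ((n₁ - 2) • E + stdE j) := by
          rw [Finset.mul_sum]
          refine Finset.sum_congr rfl fun j _ => ?_
          rw [hPIM j 0]
          push_cast; ring
        rw [hsum, hqc σ hσ ((n₁ - 2) • E) hnatn2]
      · intro i _ hi
        simp only [hEapp, if_neg hi]
        simp
      · intro h; exact absurd (Finset.mem_univ 0) h
    have hs3 : (∑ i ∈ univ.erase 0, q σ ((n₁ - 1) • E + stdE i))
        = q σ ((n₁ - 1) • E) - q σ (n₁ • E) := by
      have hadd := Finset.add_sum_erase univ (fun i => q σ ((n₁ - 1) • E + stdE i))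
        (Finset.mem_univ 0)
      have hc := hqc σ hσ ((n₁ - 1) • E) hnatn
      beta_reduce at hadd
      rw [hc, hp1] at hadd
      linarith
    rw [hs1, hs2, hs3] at hrec
    push_cast at hrec
    have hcancel : ((n₁ : ℝ) - 1) ≠ 0 := by
      have h1 : (1 : ℝ) < (n₁ : ℝ) := by exact_mod_cast hn₁
      intro h; linarith
    apply mul_left_cancel₀ hcancel
    linear_combination hrec
  -- expansions for points on the fit-allele axis
  have hexp : ∀ c : ℤ, 0 ≤ c → ∀ K : ℕ,
      (fun σ : ℝ => q σ (c • E) - ∑ j ∈ range (K + 1), qt j (c • E) * σ ^ (-(j : ℤ)))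
        =O[atTop] fun σ : ℝ => σ ^ (-(K + 1 : ℤ)) := by
    intro c hc K
    have h := hqe (c • E) (hnat c hc) K
    have h0 : tot (c • E) - (c • E) 0 = 0 := by
      rw [htot, hEapp]; simp
    simp only [h0, zpow_zero, one_mul] at h
    exact h
  have hmatch := coeff_match
    (fun σ => q σ (n₁ • E) - q σ ((n₁ - 1) • E))
    (fun σ => ((n₁ : ℝ) - 2 + θ * Q 0) * q σ ((n₁ - 2) • E)
      - ((n₁ : ℝ) - 2 + θ) * q σ ((n₁ - 1) • E))
    (fun j => qt j (n₁ • E) - qt j ((n₁ - 1) • E))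
    (fun j => ((n₁ : ℝ) - 2 + θ * Q 0) * qt j ((n₁ - 2) • E)
      - ((n₁ : ℝ) - 2 + θ) * qt j ((n₁ - 1) • E))
    (by
      intro K
      refine ((hexp n₁ (by omega) K).sub (hexp (n₁ - 1) (by omega) K)).congr_left fun σ => ?_
      have hsum : (∑ j ∈ range (K + 1), (qt j (n₁ • E) - qt j ((n₁ - 1) • E)) * σ ^ (-(j : ℤ)))
          = (∑ j ∈ range (K + 1), qt j (n₁ • E) * σ ^ (-(j : ℤ)))
            - ∑ j ∈ range (K + 1), qt j ((n₁ - 1) • E) * σ ^ (-(j : ℤ)) := by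
        rw [← Finset.sum_sub_distrib]
        exact Finset.sum_congr rfl fun j _ => by ring
      rw [hsum]; ring)
    (by
      intro K
      refine (((hexp (n₁ - 2) (by omega) K).const_mul_left ((n₁ : ℝ) - 2 + θ * Q 0)).sub
        ((hexp (n₁ - 1) (by omega) K).const_mul_left ((n₁ : ℝ) - 2 + θ))).congr_left fun σ => ?_
      have hsum : (∑ j ∈ range (K + 1),
            (((n₁ : ℝ) - 2 + θ * Q 0) * qt j ((n₁ - 2) • E)
              - ((n₁ : ℝ) - 2 + θ) * qt j ((n₁ - 1) • E)) * σ ^ (-(j : ℤ)))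
          = ((n₁ : ℝ) - 2 + θ * Q 0) * (∑ j ∈ range (K + 1), qt j ((n₁ - 2) • E) * σ ^ (-(j : ℤ)))
            - ((n₁ : ℝ) - 2 + θ) * ∑ j ∈ range (K + 1), qt j ((n₁ - 1) • E) * σ ^ (-(j : ℤ)) := by
        rw [Finset.mul_sum, Finset.mul_sum, ← Finset.sum_sub_distrib]
        exact Finset.sum_congr rfl fun j _ => by ring
      rw [hsum]; ring)
    (by
      filter_upwards [eventually_gt_atTop (0 : ℝ)] with σ hσ
      have h := step1 σ hσ
      linear_combination h)
  obtain ⟨hA0, hAS⟩ := hmatch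
  cases k with
  | zero =>
    simp only [if_neg (by omega : ¬ (1 ≤ 0))]
    have h := hA0
    simp only [sub_eq_zero] at h
    rw [h]; ring
  | succ j =>
    have h := hAS j
    beta_reduce at h
    simp only [if_pos (by omega : 1 ≤ j + 1), Nat.succ_sub_one]
    linarith [h]
end
end

section
/- Assume parent-independent mutation: P_{ij} = Q_j for all i, j, where Q_1,…,Q_d > 0 and ∑_{j=1}^d Q_j = 1. Let q^{(σ)} be a family of sampling probabilities and let q̃_k (k ∈ ℕ) be a family of asymptotic-expansion coefficients for q^{(σ)}. Then for every k ∈ ℕ and every n ∈ ℕ^d with ‖n‖ > 1: (‖n‖ − n_1) q̃_k(n) = ∑_{i=2}^d n_i(n_i − 1 + θ Q_i) q̃_k(n − e_i) + 1_{k≥1} [ −‖n‖(‖n‖ − 1 + θ) q̃_{k−1}(n) + n_1(n_1 − 1 + θ Q_1) q̃_{k−1}(n − e_1) + ‖n‖ ∑_{i=2}^d q̃_{k−1}(n + e_i) ]. -/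
open Finset Filter Asymptotics

noncomputable section

lemma sub_stdE_apply {d : ℕ} (n : Fin d → ℤ) (i j : Fin d) :
    (n - stdE i) j = n j - if j = i then 1 else 0 := by simp [stdE]

lemma add_stdE_apply {d : ℕ} (n : Fin d → ℤ) (i j : Fin d) :
    (n + stdE i) j = n j + if j = i then 1 else 0 := by simp [stdE]

lemma exp_sub_ne {d : ℕ} [NeZero d] (n : Fin d → ℤ) (i : Fin d) (hi : i ≠ 0) :
    tot (n - stdE i) - (n - stdE i) 0 = (tot n - n 0) - 1 := by
  rw [tot_sub_stdE, sub_stdE_apply, if_neg (by exact fun h => hi h.symm)]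
  ring

lemma exp_sub_zero {d : ℕ} [NeZero d] (n : Fin d → ℤ) :
    tot (n - stdE (0 : Fin d)) - (n - stdE (0 : Fin d)) (0 : Fin d) = tot n - n 0 := by
  rw [tot_sub_stdE, sub_stdE_apply, if_pos rfl]; ring

lemma exp_add_ne {d : ℕ} [NeZero d] (n : Fin d → ℤ) (i : Fin d) (hi : i ≠ 0) :
    tot (n + stdE i) - (n + stdE i) 0 = (tot n - n 0) + 1 := by
  rw [tot_add_stdE, add_stdE_apply, if_neg (by exact fun h => hi h.symm)]
  ring

lemma isNatVec_add {d : ℕ} (n : Fin d → ℤ) (hn : IsNatVec n) (i : Fin d) :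
    IsNatVec (n + stdE i) := by
  intro j; have := hn j; rw [add_stdE_apply]; split <;> omega

lemma isNatVec_sub {d : ℕ} (n : Fin d → ℤ) (hn : IsNatVec n) (i : Fin d) (h1 : 1 ≤ n i) :
    IsNatVec (n - stdE i) := by
  intro j; have := hn j; rw [sub_stdE_apply]
  by_cases h : j = i
  · subst h; simp; omega
  · simp [h]; omega

lemma sub_neg_of_zero {d : ℕ} (n : Fin d → ℤ) (i : Fin d) (h : n i = 0) :
    ∃ j, (n - stdE i) j < 0 := ⟨i, by rw [sub_stdE_apply, if_pos rfl]; omega⟩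

lemma head_coeff_zero (K : ℕ) (c : ℕ → ℝ)
    (h : (fun σ : ℝ => ∑ j ∈ range (K+1), c j * σ ^ (-(j:ℤ))) =O[atTop]
      fun σ : ℝ => σ ^ (-((K:ℤ)+1))) : c 0 = 0 := by
  have h0 : Tendsto (fun σ : ℝ => σ ^ (-((K:ℤ)+1))) atTop (nhds 0) :=
    tendsto_zpow_atTop_zero (by omega)
  have h1 : Tendsto (fun σ : ℝ => ∑ j ∈ range (K+1), c j * σ ^ (-(j:ℤ))) atTop (nhds 0) :=
    h.trans_tendsto h0
  have h2 : Tendsto (fun σ : ℝ => ∑ j ∈ range (K+1), c j * σ ^ (-(j:ℤ))) atTop (nhds (c 0)) := by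
    have : ∀ σ : ℝ, ∑ j ∈ range (K+1), c j * σ ^ (-(j:ℤ))
        = c 0 + ∑ j ∈ range K, c (j+1) * σ ^ (-((j:ℤ)+1)) := by
      intro σ
      rw [Finset.sum_range_succ' (fun j => c j * σ ^ (-(j:ℤ))) K]
      push_cast
      simp [add_comm]
    simp only [this]
    have : Tendsto (fun σ : ℝ => ∑ j ∈ range K, c (j+1) * σ ^ (-((j:ℤ)+1))) atTop (nhds 0) := by
      have := tendsto_finset_sum (range K)
        (fun j _ => (tendsto_zpow_atTop_zero (n := -((j:ℤ)+1)) (by omega)).const_mul (c (j+1)))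
      simpa using this
    simpa using tendsto_const_nhds.add this
  have := tendsto_nhds_unique h2 h1
  exact this

lemma all_coeff_zero (K : ℕ) (c : ℕ → ℝ)
    (h : (fun σ : ℝ => ∑ j ∈ range (K+1), c j * σ ^ (-(j:ℤ))) =O[atTop]
      fun σ : ℝ => σ ^ (-((K:ℤ)+1))) : ∀ j ≤ K, c j = 0 := by
  induction K generalizing c with
  | zero =>
    intro j hj
    interval_cases j
    exact head_coeff_zero 0 c h
  | succ K ih =>
    have hc0 : c 0 = 0 := head_coeff_zero (K+1) c h
    have h' : (fun σ : ℝ => ∑ j ∈ range (K+1), c (j+1) * σ ^ (-(j:ℤ))) =O[atTop]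
        fun σ : ℝ => σ ^ (-((K:ℤ)+1)) := by
      have hmul : (fun σ : ℝ => σ * ∑ j ∈ range (K+2), c j * σ ^ (-(j:ℤ))) =O[atTop]
          fun σ : ℝ => σ * σ ^ (-((K:ℤ)+2)) :=
        (isBigO_refl (fun σ : ℝ => σ) atTop).mul h
      refine hmul.congr' ?_ ?_
      · filter_upwards [eventually_ne_atTop (0:ℝ)] with σ hσ
        rw [Finset.sum_range_succ' (fun j => c j * σ ^ (-(j:ℤ))) (K+1)]
        simp only [hc0, zero_mul, add_zero, Finset.mul_sum]
        refine Finset.sum_congr rfl fun j _ => ?_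
        have : σ * σ ^ (-((j:ℤ)+1)) = σ ^ (-(j:ℤ)) := by
          rw [show (-(j:ℤ)) = (-((j:ℤ)+1)) + 1 by ring, zpow_add_one₀ hσ]
          ring
        push_cast
        rw [neg_add, ← this]
        ring
      · filter_upwards [eventually_ne_atTop (0:ℝ)] with σ hσ
        have : σ * σ ^ (-((K:ℤ)+2)) = σ ^ (-((K:ℤ)+1)) := by
          rw [show (-((K:ℤ)+1)) = (-((K:ℤ)+2)) + 1 by ring, zpow_add_one₀ hσ]
          ring
        rw [this]
    intro j hj
    rcases j with _ | j'
    · exact hc0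
    · exact ih (fun m => c (m+1)) h' j' (by omega)


def Sfun {D : ℕ} (qt : ℕ → (Fin D → ℤ) → ℝ) (L : ℕ) (m : Fin D → ℤ) (σ : ℝ) : ℝ :=
  ∑ j ∈ range L, qt j m * σ ^ (-(j:ℤ))

def rfun {D : ℕ} [NeZero D] (q : ℝ → (Fin D → ℤ) → ℝ) (m : Fin D → ℤ) (σ : ℝ) : ℝ :=
  σ ^ (tot m - m 0) * q σ m

lemma sum_mul_S {D : ℕ} (qt : ℕ → (Fin D → ℤ) → ℝ) (m : Fin D → ℤ) (a σ : ℝ) (L : ℕ) :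
    ∑ j ∈ range L, a * qt j m * σ ^ (-(j:ℤ)) = a * Sfun qt L m σ := by
  rw [Sfun, Finset.mul_sum]; exact Finset.sum_congr rfl fun j _ => by ring

lemma sum_sum_mul_S {D : ℕ} {ι : Type*} (s : Finset ι) (qt : ℕ → (Fin D → ℤ) → ℝ)
    (f : ι → (Fin D → ℤ)) (b : ι → ℝ) (σ : ℝ) (L : ℕ) :
    ∑ j ∈ range L, (∑ i ∈ s, b i * qt j (f i)) * σ ^ (-(j:ℤ))
      = ∑ i ∈ s, b i * Sfun qt L (f i) σ := by
  simp only [Finset.sum_mul]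
  rw [Finset.sum_comm]
  refine Finset.sum_congr rfl fun i _ => ?_
  rw [Sfun, Finset.mul_sum]
  exact Finset.sum_congr rfl fun j _ => by ring

lemma sum_const_sum_S {D : ℕ} {ι : Type*} (s : Finset ι) (qt : ℕ → (Fin D → ℤ) → ℝ)
    (f : ι → (Fin D → ℤ)) (a σ : ℝ) (L : ℕ) :
    ∑ j ∈ range L, (a * ∑ i ∈ s, qt j (f i)) * σ ^ (-(j:ℤ))
      = a * ∑ i ∈ s, Sfun qt L (f i) σ := by
  have : ∀ j, (a * ∑ i ∈ s, qt j (f i)) = ∑ i ∈ s, a * qt j (f i) := fun j => Finset.mul_sum _ _ _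
  simp only [this]
  rw [sum_sum_mul_S s qt f (fun _ => a) σ L, Finset.mul_sum]

lemma ite_shift_sum (E : ℕ → ℝ) (L : ℕ) (σ : ℝ) (hσ : σ ≠ 0) :
    ∑ j ∈ range (L+1), (if 1 ≤ j then E (j-1) else 0) * σ ^ (-(j:ℤ))
      = σ ^ (-(1:ℤ)) * ∑ j ∈ range L, E j * σ ^ (-(j:ℤ)) := by
  rw [Finset.sum_range_succ' (fun j => (if 1 ≤ j then E (j-1) else 0) * σ ^ (-(j:ℤ))) L]
  simp only [show ¬(1 ≤ 0) from by omega, if_false, if_pos (Nat.succ_le_succ (Nat.zero_le _)),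
    Nat.add_sub_cancel, zero_mul, add_zero]
  rw [Finset.mul_sum]
  refine Finset.sum_congr rfl fun j _ => ?_
  rw [show (-(((j:ℕ)+1:ℕ)):ℤ) = -1 + -(j:ℤ) by push_cast; ring, zpow_add₀ hσ]
  ring

lemma expansion_all {D : ℕ} [NeZero D] (q : ℝ → (Fin D → ℤ) → ℝ) (qt : ℕ → (Fin D → ℤ) → ℝ)
    (hq0 : ∀ σ : ℝ, 0 < σ → ∀ n : Fin D → ℤ, (∃ i, n i < 0) → q σ n = 0)
    (hqt0 : ∀ k : ℕ, ∀ n : Fin D → ℤ, (∃ i, n i < 0) → qt k n = 0)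
    (hexp : ∀ n : Fin D → ℤ, IsNatVec n → ∀ K : ℕ,
      (fun σ : ℝ => σ ^ (tot n - n 0) * q σ n - ∑ k ∈ range (K + 1), qt k n * σ ^ (-(k : ℤ)))
        =O[atTop] fun σ : ℝ => σ ^ (-(K + 1 : ℤ)))
    (m : Fin D → ℤ) (hm : IsNatVec m ∨ ∃ i, m i < 0) (L : ℕ) :
    (fun σ : ℝ => rfun q m σ - Sfun qt L m σ) =O[atTop] fun σ : ℝ => σ ^ (-(L:ℤ)) := by
  rcases hm with hm | hm
  · cases L with
    | zero =>
      have h1 := hexp m hm 0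
      have h2 : Tendsto (fun σ : ℝ => rfun q m σ - qt 0 m) atTop (nhds 0) := by
        have : (fun σ : ℝ => σ ^ (tot m - m 0) * q σ m
            - ∑ k ∈ range (0 + 1), qt k m * σ ^ (-(k : ℤ)))
            = fun σ : ℝ => rfun q m σ - qt 0 m := by
          funext σ; simp [rfun]
        rw [this] at h1
        exact h1.trans_tendsto (tendsto_zpow_atTop_zero (by omega))
      have h3 : Tendsto (fun σ : ℝ => rfun q m σ) atTop (nhds (qt 0 m)) := by
        have := h2.add_const (qt 0 m)
        simpa using this
      have h4 : (fun σ : ℝ => rfun q m σ) =O[atTop] (fun _ : ℝ => (1:ℝ)) :=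
        Tendsto.isBigO_one ℝ h3
      have h5 : (fun σ : ℝ => rfun q m σ - Sfun qt 0 m σ) = fun σ : ℝ => rfun q m σ := by
        funext σ; simp [Sfun]
      rw [h5]
      refine h4.congr' EventuallyEq.rfl ?_
      filter_upwards with σ
      simp
    | succ K =>
      have h1 := hexp m hm K
      simp only [Sfun, rfun, Nat.cast_add, Nat.cast_one]
      exact h1
  · have hz : ∀ k, qt k m = 0 := fun k => hqt0 k m hm
    have hS : ∀ σ : ℝ, Sfun qt L m σ = 0 := by intro σ; simp [Sfun, hz]
    have hev : (fun σ : ℝ => rfun q m σ - Sfun qt L m σ) =ᶠ[atTop] fun _ => (0:ℝ) := by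
      filter_upwards [eventually_gt_atTop (0:ℝ)] with σ hσ
      rw [hS, rfun, hq0 σ hσ m hm]
      ring
    exact (isBigO_zero _ _).congr' hev.symm EventuallyEq.rfl

/-- **Corollary 4.4(IV)** (PIM; recursion, general): under parent-independent mutation
`P_{ij} = Q_j`, for every `n ∈ ℕ^d` with `‖n‖ > 1`. -/
theorem recursion_general_PIM {d : ℕ} (θ : ℝ) (hθ : 0 < θ)
    (P : Fin (d + 2) → Fin (d + 2) → ℝ)
    (hPnonneg : ∀ i j, 0 ≤ P i j) (hProw : ∀ i, ∑ j, P i j = 1)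
    (Q : Fin (d + 2) → ℝ) (hQpos : ∀ j, 0 < Q j) (hQsum : ∑ j, Q j = 1)
    (hPIM : ∀ i j, P i j = Q j)
    (q : ℝ → (Fin (d + 2) → ℤ) → ℝ) (qt : ℕ → (Fin (d + 2) → ℤ) → ℝ)
    (hq : IsSamplingFamily θ P q) (hqt : IsExpansionCoeffs q qt)
    (k : ℕ) (n : Fin (d + 2) → ℤ) (hn : IsNatVec n) (hsize : 1 < tot n) :
    ((tot n : ℝ) - (n 0 : ℝ)) * qt k n
      = (∑ i ∈ univ.erase 0,
          (n i : ℝ) * ((n i : ℝ) - 1 + θ * Q i) * qt k (n - stdE i))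
        + (if 1 ≤ k then
            - (tot n : ℝ) * ((tot n : ℝ) - 1 + θ) * qt (k - 1) n
            + (n 0 : ℝ) * ((n 0 : ℝ) - 1 + θ * Q 0) * qt (k - 1) (n - stdE 0)
            + (tot n : ℝ) * ∑ i ∈ univ.erase 0, qt (k - 1) (n + stdE i)
          else 0) := by
  classical
  have hne : n ≠ 0 := by
    intro h
    rw [h] at hsize
    simp [tot] at hsize
  -- simplified recursion
  have hrec2 : ∀ σ : ℝ, 0 < σ →
      ((tot n : ℝ) * ((tot n : ℝ) - 1 + θ) + ((tot n : ℝ) - (n 0 : ℝ)) * σ) * q σ n =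
        (n 0 : ℝ) * ((n 0 : ℝ) - 1 + θ * Q 0) * q σ (n - stdE 0)
        + (∑ i ∈ univ.erase 0, (n i : ℝ) * ((n i : ℝ) - 1 + θ * Q i) * q σ (n - stdE i))
        + σ * (tot n : ℝ) * ∑ i ∈ univ.erase 0, q σ (n + stdE i) := by
    intro σ hσ
    have hrec := hq.2.2.2 σ hσ n hn hne
    have hmut : ∀ i : Fin (d+2),
        (∑ j, (n i:ℝ) * θ * P j i * q σ (n - stdE i + stdE j))
          = (n i:ℝ) * (θ * Q i) * q σ (n - stdE i) := by
      intro i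
      rcases eq_or_lt_of_le (hn i) with h0 | h1
      · have hz : (n i : ℝ) = 0 := by rw [← h0]; norm_num
        simp [hz]
      · have hnm : IsNatVec (n - stdE i) := isNatVec_sub n hn i h1
        have hcons := hq.2.2.1 σ hσ (n - stdE i) hnm
        calc (∑ j, (n i:ℝ) * θ * P j i * q σ (n - stdE i + stdE j))
            = (n i:ℝ) * (θ * Q i) * ∑ j, q σ (n - stdE i + stdE j) := by
              rw [Finset.mul_sum]
              refine Finset.sum_congr rfl fun j _ => ?_
              rw [hPIM j i]; ring
          _ = (n i:ℝ) * (θ * Q i) * q σ (n - stdE i) := by rw [hcons]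
    rw [Finset.sum_congr rfl (fun i _ => hmut i)] at hrec
    have hcomb : (∑ i, (n i : ℝ) * ((n i : ℝ) - 1) * q σ (n - stdE i))
        + (∑ i, (n i:ℝ) * (θ * Q i) * q σ (n - stdE i))
        = ∑ i, (n i : ℝ) * ((n i : ℝ) - 1 + θ * Q i) * q σ (n - stdE i) := by
      rw [← Finset.sum_add_distrib]
      exact Finset.sum_congr rfl fun i _ => by ring
    have hsplit : ∑ i, (n i : ℝ) * ((n i : ℝ) - 1 + θ * Q i) * q σ (n - stdE i)
        = (n 0:ℝ) * ((n 0:ℝ) - 1 + θ*Q 0) * q σ (n - stdE 0)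
          + ∑ i ∈ univ.erase 0, (n i : ℝ) * ((n i : ℝ) - 1 + θ * Q i) * q σ (n - stdE i) :=
      (Finset.add_sum_erase univ _ (mem_univ 0)).symm
    linarith [hrec, hcomb, hsplit]
  -- key vanishing identity for the rescaled quantities
  have key : ∀ σ : ℝ, 0 < σ →
      ((tot n:ℝ) - (n 0:ℝ)) * rfun q n σ
        - ∑ i ∈ univ.erase 0, (n i:ℝ) * ((n i:ℝ) - 1 + θ * Q i) * rfun q (n - stdE i) σ
        + σ ^ (-(1:ℤ)) * ((tot n:ℝ)*((tot n:ℝ)-1+θ) * rfun q n σ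
            - (n 0:ℝ)*((n 0:ℝ)-1+θ*Q 0) * rfun q (n - stdE 0) σ
            - (tot n:ℝ) * ∑ i ∈ univ.erase 0, rfun q (n + stdE i) σ) = 0 := by
    intro σ hσ
    have hσ' : σ ≠ 0 := ne_of_gt hσ
    have h2 := hrec2 σ hσ
    have e0 : σ ^ (tot n - n 0) = σ ^ (tot n - n 0 - 1) * σ := by
      rw [← zpow_add_one₀ hσ']
      congr 1
      ring
    have eA : rfun q n σ = σ ^ (tot n - n 0 - 1) * σ * q σ n := by rw [rfun, e0]
    have eB : rfun q (n - stdE 0) σ = σ ^ (tot n - n 0 - 1) * σ * q σ (n - stdE 0) := by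
      rw [rfun, exp_sub_zero, e0]
    have eC : ∑ i ∈ univ.erase 0, (n i:ℝ) * ((n i:ℝ) - 1 + θ * Q i) * rfun q (n - stdE i) σ
        = σ ^ (tot n - n 0 - 1)
          * ∑ i ∈ univ.erase 0, (n i:ℝ) * ((n i:ℝ) - 1 + θ * Q i) * q σ (n - stdE i) := by
      rw [Finset.mul_sum]
      refine Finset.sum_congr rfl fun i hi => ?_
      rw [rfun, exp_sub_ne n i (Finset.ne_of_mem_erase hi)]
      ring
    have eD : ∑ i ∈ univ.erase 0, rfun q (n + stdE i) σ
        = σ ^ (tot n - n 0 - 1) * σ * σ * ∑ i ∈ univ.erase 0, q σ (n + stdE i) := by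
      rw [Finset.mul_sum]
      refine Finset.sum_congr rfl fun i hi => ?_
      rw [rfun, exp_add_ne n i (Finset.ne_of_mem_erase hi),
          show σ ^ (tot n - n 0 + 1) = σ ^ (tot n - n 0 - 1) * σ * σ from by
            rw [← zpow_add_one₀ hσ', ← zpow_add_one₀ hσ']; congr 1 <;> ring]
    have eu : σ ^ (-(1:ℤ)) * σ = 1 := by
      rw [zpow_neg_one]
      field_simp
    rw [eA, eB, eC, eD]
    linear_combination (σ ^ (tot n - n 0 - 1)) * h2
      + (σ ^ (tot n - n 0 - 1) * ((tot n:ℝ)*((tot n:ℝ)-1+θ) * q σ n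
          - (n 0:ℝ)*((n 0:ℝ)-1+θ*Q 0) * q σ (n - stdE 0)
          - σ * (tot n:ℝ) * ∑ i ∈ univ.erase 0, q σ (n + stdE i))) * eu
  -- big-O facts
  have hO := expansion_all q qt hq.2.1 hqt.2.2.1 hqt.2.2.2
  have hOn : ∀ L : ℕ, (fun σ : ℝ => rfun q n σ - Sfun qt L n σ) =O[atTop]
      fun σ : ℝ => σ ^ (-(L:ℤ)) := fun L => hO n (Or.inl hn) L
  have hOsub : ∀ i : Fin (d+2), ∀ L : ℕ,
      (fun σ : ℝ => rfun q (n - stdE i) σ - Sfun qt L (n - stdE i) σ) =O[atTop]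
      fun σ : ℝ => σ ^ (-(L:ℤ)) := by
    intro i L
    refine hO _ ?_ L
    rcases eq_or_lt_of_le (hn i) with h0 | h1
    · exact Or.inr (sub_neg_of_zero n i h0.symm)
    · exact Or.inl (isNatVec_sub n hn i h1)
  have hOadd : ∀ i : Fin (d+2), ∀ L : ℕ,
      (fun σ : ℝ => rfun q (n + stdE i) σ - Sfun qt L (n + stdE i) σ) =O[atTop]
      fun σ : ℝ => σ ^ (-(L:ℤ)) := fun i L => hO _ (Or.inl (isNatVec_add n hn i)) L
  -- assemble the big-O bound for Φ
  have hb1 : (fun σ : ℝ => ((tot n:ℝ)-(n 0:ℝ)) * (Sfun qt (k+1) n σ - rfun q n σ))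
      =O[atTop] fun σ : ℝ => σ ^ (-((k:ℤ)+1)) := by
    have h := ((hOn (k+1)).neg_left).const_mul_left ((tot n:ℝ)-(n 0:ℝ))
    simp only [neg_sub, Nat.cast_add, Nat.cast_one] at h
    exact h
  have hb2 : (fun σ : ℝ => ∑ i ∈ univ.erase 0,
      (n i:ℝ)*((n i:ℝ)-1+θ*Q i) * (Sfun qt (k+1) (n - stdE i) σ - rfun q (n - stdE i) σ))
      =O[atTop] fun σ : ℝ => σ ^ (-((k:ℤ)+1)) := by
    refine IsBigO.fun_sum fun i _ => ?_
    have h := ((hOsub i (k+1)).neg_left).const_mul_left ((n i:ℝ)*((n i:ℝ)-1+θ*Q i))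
    simp only [neg_sub, Nat.cast_add, Nat.cast_one] at h
    exact h
  have hbin : (fun σ : ℝ => (tot n:ℝ)*((tot n:ℝ)-1+θ) * (Sfun qt k n σ - rfun q n σ)
      - (n 0:ℝ)*((n 0:ℝ)-1+θ*Q 0) * (Sfun qt k (n - stdE 0) σ - rfun q (n - stdE 0) σ)
      - (tot n:ℝ) * ∑ i ∈ univ.erase 0, (Sfun qt k (n + stdE i) σ - rfun q (n + stdE i) σ))
      =O[atTop] fun σ : ℝ => σ ^ (-(k:ℤ)) := by
    have p1 := ((hOn k).neg_left).const_mul_left ((tot n:ℝ)*((tot n:ℝ)-1+θ))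
    simp only [neg_sub] at p1
    have p2 := ((hOsub 0 k).neg_left).const_mul_left ((n 0:ℝ)*((n 0:ℝ)-1+θ*Q 0))
    simp only [neg_sub] at p2
    have p3 : (fun σ : ℝ => ∑ i ∈ univ.erase 0,
        (Sfun qt k (n + stdE i) σ - rfun q (n + stdE i) σ)) =O[atTop]
        fun σ : ℝ => σ ^ (-(k:ℤ)) := by
      refine IsBigO.fun_sum fun i _ => ?_
      have h := (hOadd i k).neg_left
      simp only [neg_sub] at h
      exact h
    exact (p1.sub p2).sub (p3.const_mul_left ((tot n:ℝ)))
  have hb3 : (fun σ : ℝ => σ ^ (-(1:ℤ)) *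
      ((tot n:ℝ)*((tot n:ℝ)-1+θ) * (Sfun qt k n σ - rfun q n σ)
      - (n 0:ℝ)*((n 0:ℝ)-1+θ*Q 0) * (Sfun qt k (n - stdE 0) σ - rfun q (n - stdE 0) σ)
      - (tot n:ℝ) * ∑ i ∈ univ.erase 0, (Sfun qt k (n + stdE i) σ - rfun q (n + stdE i) σ)))
      =O[atTop] fun σ : ℝ => σ ^ (-((k:ℤ)+1)) := by
    have h := (isBigO_refl (fun σ : ℝ => σ ^ (-(1:ℤ))) atTop).mul hbin
    refine h.congr' EventuallyEq.rfl ?_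
    filter_upwards [eventually_ne_atTop (0:ℝ)] with σ hσ
    rw [show (-((k:ℤ)+1)) = (-(1:ℤ)) + (-(k:ℤ)) by ring, zpow_add₀ hσ]
  have hPhi := (hb1.sub hb2).add hb3
  -- pointwise identity between the coefficient sum and the S-expression
  have hpt : ∀ σ : ℝ, σ ≠ 0 →
      ∑ j ∈ range (k+1), (((tot n:ℝ)-(n 0:ℝ)) * qt j n
          - ∑ i ∈ univ.erase 0, (n i:ℝ)*((n i:ℝ)-1+θ*Q i) * qt j (n - stdE i)
          + (if 1 ≤ j then (tot n:ℝ)*((tot n:ℝ)-1+θ) * qt (j-1) n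
              - (n 0:ℝ)*((n 0:ℝ)-1+θ*Q 0) * qt (j-1) (n - stdE 0)
              - (tot n:ℝ) * ∑ i ∈ univ.erase 0, qt (j-1) (n + stdE i) else 0)) * σ ^ (-(j:ℤ))
        = ((tot n:ℝ)-(n 0:ℝ)) * Sfun qt (k+1) n σ
          - ∑ i ∈ univ.erase 0, (n i:ℝ)*((n i:ℝ)-1+θ*Q i) * Sfun qt (k+1) (n - stdE i) σ
          + σ ^ (-(1:ℤ)) * ((tot n:ℝ)*((tot n:ℝ)-1+θ) * Sfun qt k n σ
              - (n 0:ℝ)*((n 0:ℝ)-1+θ*Q 0) * Sfun qt k (n - stdE 0) σ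
              - (tot n:ℝ) * ∑ i ∈ univ.erase 0, Sfun qt k (n + stdE i) σ) := by
    intro σ hσ'
    simp only [add_mul, sub_mul, Finset.sum_add_distrib, Finset.sum_sub_distrib]
    rw [sum_mul_S,
        sum_sum_mul_S (univ.erase 0) qt (fun i => n - stdE i)
          (fun i => (n i:ℝ)*((n i:ℝ)-1+θ*Q i)) σ (k+1),
        ite_shift_sum (fun m => (tot n:ℝ)*((tot n:ℝ)-1+θ) * qt m n
          - (n 0:ℝ)*((n 0:ℝ)-1+θ*Q 0) * qt m (n - stdE 0)
          - (tot n:ℝ) * ∑ i ∈ univ.erase 0, qt m (n + stdE i)) k σ hσ']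
    simp only [sub_mul, Finset.sum_sub_distrib, sum_mul_S, sum_const_sum_S]
  -- eventual equality between Φ and the coefficient sum
  have heq : (fun σ : ℝ => ((tot n:ℝ)-(n 0:ℝ)) * (Sfun qt (k+1) n σ - rfun q n σ)
      - ∑ i ∈ univ.erase 0, (n i:ℝ)*((n i:ℝ)-1+θ*Q i)
          * (Sfun qt (k+1) (n - stdE i) σ - rfun q (n - stdE i) σ)
      + σ ^ (-(1:ℤ)) * ((tot n:ℝ)*((tot n:ℝ)-1+θ) * (Sfun qt k n σ - rfun q n σ)
          - (n 0:ℝ)*((n 0:ℝ)-1+θ*Q 0) * (Sfun qt k (n - stdE 0) σ - rfun q (n - stdE 0) σ)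
          - (tot n:ℝ) * ∑ i ∈ univ.erase 0, (Sfun qt k (n + stdE i) σ - rfun q (n + stdE i) σ)))
      =ᶠ[atTop] fun σ : ℝ =>
        ∑ j ∈ range (k+1), (((tot n:ℝ)-(n 0:ℝ)) * qt j n
          - ∑ i ∈ univ.erase 0, (n i:ℝ)*((n i:ℝ)-1+θ*Q i) * qt j (n - stdE i)
          + (if 1 ≤ j then (tot n:ℝ)*((tot n:ℝ)-1+θ) * qt (j-1) n
              - (n 0:ℝ)*((n 0:ℝ)-1+θ*Q 0) * qt (j-1) (n - stdE 0)
              - (tot n:ℝ) * ∑ i ∈ univ.erase 0, qt (j-1) (n + stdE i) else 0)) * σ ^ (-(j:ℤ)) := by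
    filter_upwards [eventually_gt_atTop (0:ℝ)] with σ hσ
    have hσ' : σ ≠ 0 := ne_of_gt hσ
    have hk := key σ hσ
    have hp := hpt σ hσ'
    simp only [mul_sub, Finset.sum_sub_distrib] at hk hp ⊢
    linarith [hk, hp]
  have hBigO := hPhi.congr' heq EventuallyEq.rfl
  have hck := all_coeff_zero k (fun j => ((tot n:ℝ)-(n 0:ℝ)) * qt j n
      - ∑ i ∈ univ.erase 0, (n i:ℝ)*((n i:ℝ)-1+θ*Q i) * qt j (n - stdE i)
      + (if 1 ≤ j then (tot n:ℝ)*((tot n:ℝ)-1+θ) * qt (j-1) n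
          - (n 0:ℝ)*((n 0:ℝ)-1+θ*Q 0) * qt (j-1) (n - stdE 0)
          - (tot n:ℝ) * ∑ i ∈ univ.erase 0, qt (j-1) (n + stdE i) else 0)) hBigO k le_rfl
  by_cases hk1 : 1 ≤ k
  · simp only [if_pos hk1] at hck ⊢
    linarith [hck]
  · simp only [if_neg hk1] at hck ⊢
    linarith [hck]
end
end

section
/- Fix an integer d ≥ 2, θ > 0, and P_{12},…,P_{1d} > 0 (the first row of a d×d row-stochastic mutation matrix P). Define γ_0 : ℤ^d → ℝ by γ_0(n) = ∏_{i=2}^d Γ(θP_{1i} + n_i)/Γ(θP_{1i}) for n ∈ ℕ^d and γ_0(n) = 0 whenever n has a negative component. Then: (i) γ_0(e_1) = 1; (ii) γ_0(e_i) = θP_{1i} for i = 2,…,d; (iii) γ_0(n_1 e_1) = 1 for every n_1 ∈ ℕ; and (iv) for every n ∈ ℕ^d, (‖n‖ − n_1) γ_0(n) = ∑_{i=2}^d n_i (n_i − 1 + θP_{1i}) γ_0(n − e_i). That is, γ_0 satisfies the order-zero boundary conditions and recursions characterising the leading coefficient of the asymptotic expansion of the sampling probability. -/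
open Finset

noncomputable section

/-- **The Gamma-approximation leading coefficient satisfies the order-zero relations**:
with `γ₀(n) = ∏_{i=2}^d Γ(θP_{1i}+n_i)/Γ(θP_{1i})` on `ℕ^d` and `γ₀(n) = 0` when `n`
has a negative component, one has (i) `γ₀(e_1) = 1`; (ii) `γ₀(e_i) = θP_{1i}` for
`i = 2,…,d`; (iii) `γ₀(n_1 e_1) = 1` for all `n_1 ∈ ℕ`; and (iv) for every `n ∈ ℕ^d`,
`(‖n‖-n_1) γ₀(n) = ∑_{i=2}^d n_i(n_i-1+θP_{1i}) γ₀(n-e_i)`.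
(Allele `1` is represented by the index `0 : Fin (d+2)`.) -/
theorem gamma0_satisfies_order_zero_recursions {d : ℕ} (θ : ℝ) (hθ : 0 < θ)
    (P1 : Fin (d + 2) → ℝ) (hP1 : ∀ i : Fin (d + 2), i ≠ 0 → 0 < P1 i)
    (γ₀ : (Fin (d + 2) → ℤ) → ℝ)
    (hγnat : ∀ n : Fin (d + 2) → ℤ, IsNatVec n →
      γ₀ n = ∏ i ∈ univ.erase 0,
        Real.Gamma (θ * P1 i + (n i : ℝ)) / Real.Gamma (θ * P1 i))
    (hγneg : ∀ n : Fin (d + 2) → ℤ, (∃ i, n i < 0) → γ₀ n = 0) :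
    γ₀ (stdE 0) = 1 ∧
    (∀ i : Fin (d + 2), i ≠ 0 → γ₀ (stdE i) = θ * P1 i) ∧
    (∀ n₁ : ℕ, γ₀ ((n₁ : ℤ) • stdE 0) = 1) ∧
    (∀ n : Fin (d + 2) → ℤ, IsNatVec n →
      ((tot n : ℝ) - (n 0 : ℝ)) * γ₀ n
        = ∑ i ∈ univ.erase 0,
            (n i : ℝ) * ((n i : ℝ) - 1 + θ * P1 i) * γ₀ (n - stdE i)) := by
  have hΓpos : ∀ i : Fin (d + 2), i ≠ 0 → 0 < Real.Gamma (θ * P1 i) := fun i hi =>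
    Real.Gamma_pos_of_pos (mul_pos hθ (hP1 i hi))
  -- (iii), used also for (i)
  have h3 : ∀ n₁ : ℕ, γ₀ ((n₁ : ℤ) • stdE 0) = 1 := by
    intro n₁
    have hnat : IsNatVec ((n₁ : ℤ) • stdE (0 : Fin (d+2))) := by
      intro i
      simp only [Pi.smul_apply, stdE, smul_eq_mul]
      split <;> simp
    rw [hγnat _ hnat]
    apply Finset.prod_eq_one
    intro i hi
    have : i ≠ 0 := (Finset.mem_erase.1 hi).1
    simp [stdE, this, div_self (hΓpos i this).ne']
  have h1 : γ₀ (stdE 0) = 1 := by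
    have := h3 1; simpa using this
  refine ⟨h1, ?_, h3, ?_⟩
  · -- (ii)
    intro i hi
    have hnat : IsNatVec (stdE i) := by
      intro j; simp only [stdE]; split <;> simp
    rw [hγnat _ hnat]
    rw [Finset.prod_eq_single i]
    · have h1' : stdE i i = (1 : ℤ) := by simp [stdE]
      rw [h1']
      push_cast
      rw [Real.Gamma_add_one (mul_pos hθ (hP1 i hi)).ne',
        mul_div_assoc, div_self (hΓpos i hi).ne', mul_one]
    · intro j hj hji
      have hj0 : j ≠ 0 := (Finset.mem_erase.1 hj).1
      have h0' : stdE i j = (0 : ℤ) := by simp [stdE, hji]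
      rw [h0']
      simp [div_self (hΓpos j hj0).ne']
    · intro h
      exact absurd (Finset.mem_erase.2 ⟨hi, Finset.mem_univ i⟩) h
  · -- (iv)
    intro n hn
    have key : ∀ i ∈ univ.erase (0 : Fin (d + 2)),
        (n i : ℝ) * ((n i : ℝ) - 1 + θ * P1 i) * γ₀ (n - stdE i)
          = (n i : ℝ) * γ₀ n := by
      intro i hi
      have hi0 : i ≠ 0 := (Finset.mem_erase.1 hi).1
      rcases eq_or_lt_of_le (hn i) with h0 | hpos
      · rw [← h0]; simp
      · -- n i ≥ 1
        have hnat' : IsNatVec (n - stdE i) := by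
          intro j
          simp only [Pi.sub_apply, stdE]
          split
          · rename_i h; subst h; omega
          · simpa using hn j
        rw [hγnat _ hnat', hγnat _ hn]
        rw [← Finset.mul_prod_erase _ _ hi, ← Finset.mul_prod_erase _ _ hi]
        have hprod : ∏ j ∈ (univ.erase (0 : Fin (d+2))).erase i,
            Real.Gamma (θ * P1 j + ((n - stdE i) j : ℝ)) / Real.Gamma (θ * P1 j)
            = ∏ j ∈ (univ.erase (0 : Fin (d+2))).erase i,
            Real.Gamma (θ * P1 j + ((n j) : ℝ)) / Real.Gamma (θ * P1 j) := by
          apply Finset.prod_congr rfl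
          intro j hj
          have : j ≠ i := (Finset.mem_erase.1 hj).1
          simp [stdE, this]
        rw [hprod]
        have hx : θ * P1 i + ((n i : ℝ) - 1) ≠ 0 := by
          have : (0:ℝ) < θ * P1 i + ((n i : ℝ) - 1) := by
            have h1 : (1:ℝ) ≤ (n i : ℝ) := by exact_mod_cast hpos
            nlinarith [mul_pos hθ (hP1 i hi0)]
          exact this.ne'
        have hΓ : Real.Gamma (θ * P1 i + (n i : ℝ))
            = (θ * P1 i + ((n i : ℝ) - 1)) * Real.Gamma (θ * P1 i + ((n i : ℝ) - 1)) := by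
          have := Real.Gamma_add_one hx
          rw [← this]; ring_nf
        have hsub : ((n - stdE i) i : ℝ) = (n i : ℝ) - 1 := by
          simp [stdE]
        rw [hsub, hΓ]
        ring
    rw [Finset.sum_congr rfl key, ← Finset.sum_mul]
    have : (tot n : ℝ) - (n 0 : ℝ) = ∑ i ∈ univ.erase (0 : Fin (d+2)), (n i : ℝ) := by
      have := Finset.add_sum_erase univ (fun i => (n i : ℝ)) (Finset.mem_univ (0 : Fin (d+2)))
      simp only [tot]
      push_cast
      linarith [this]
    rw [this]
end
end
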